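/- arXiv:1808.03574 — 14 statements merged into one kernel-verified Lean document; each statement's English description precedes it below -/
import Mathlib

section
/- Let (J,R,Q) be a DH triple of size n such that every eigenvalue of (J−R)Q has negative real part, and let B ∈ ℂ^{n×m}, C ∈ ℂ^{p×n}. For ω ∈ ℝ set G_R(ω) := C·Q·(iω·I_n − (J−R)Q)⁻¹·B (the matrix iω·I_n − (J−R)Q is invertible by the stability assumption). Define S_R := { ‖Δ‖₂ : Δ ∈ ℂ^{m×p} such that (J − (R + BΔC))Q has an eigenvalue with zero real part } and S_J := { ‖Δ‖₂ : Δ ∈ ℂ^{m×p} such that ((J + BΔC) − R)Q has an eigenvalue with zero real part }. Then the following are equivalent: (a) S_R is nonempty; (b) G_R(ω) ≠ 0 for some ω ∈ ℝ; (c) S_J is nonempty. Moreover, when these hold, sup_{ω∈ℝ} ‖G_R(ω)‖₂ is finite and positive, and inf S_R = inf S_J = ( sup_{ω∈ℝ} ‖G_R(ω)‖₂ )⁻¹. -/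
open Matrix
open scoped ComplexOrder
open scoped Matrix.Norms.L2Operator
set_option maxHeartbeats 1000000
set_option linter.unusedVariables false

/-- Spectral norm (largest singular value, ℓ²→ℓ² operator norm) of a complex matrix. -/
noncomputable def sNorm {p q : ℕ} (M : Matrix (Fin p) (Fin q) ℂ) : ℝ :=
  ‖LinearMap.toContinuousLinearMap (Matrix.toEuclideanLin M)‖

lemma sNorm_eq {p q : ℕ} (M : Matrix (Fin p) (Fin q) ℂ) : sNorm M = ‖M‖ := rfl

noncomputable def ee {k : ℕ} (v : Fin k → ℂ) : EuclideanSpace ℂ (Fin k) :=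
  (EuclideanSpace.equiv (Fin k) ℂ).symm v

lemma ee_zero {k : ℕ} : ee (0 : Fin k → ℂ) = 0 := rfl
lemma ee_eq_zero {k : ℕ} {v : Fin k → ℂ} : ee v = 0 ↔ v = 0 := by
  simp [ee]

lemma l2_mulVec_le {a b : ℕ} (M : Matrix (Fin a) (Fin b) ℂ) (x : Fin b → ℂ) :
    ‖ee (M *ᵥ x)‖ ≤ ‖M‖ * ‖ee x‖ :=
  M.l2_opNorm_mulVec (ee x)

lemma l2_le_bound {a b : ℕ} (M : Matrix (Fin a) (Fin b) ℂ) {c : ℝ} (hc : 0 ≤ c)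
    (h : ∀ x : EuclideanSpace ℂ (Fin b), ‖ee (M *ᵥ x)‖ ≤ c * ‖x‖) :
    ‖M‖ ≤ c := by
  rw [Matrix.l2_opNorm_def]
  exact ContinuousLinearMap.opNorm_le_bound _ hc h

lemma l2_norm_pos {a b : ℕ} {M : Matrix (Fin a) (Fin b) ℂ} (h : M ≠ 0) : 0 < ‖M‖ :=
  norm_pos_iff.mpr h

-- norm attainment
lemma l2_attained {a b : ℕ} (M : Matrix (Fin a) (Fin b) ℂ) (hM : M ≠ 0) :
    ∃ u : EuclideanSpace ℂ (Fin b), ‖u‖ = 1 ∧ ‖ee (M *ᵥ u)‖ = ‖M‖ := by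
  have hb : Nonempty (Fin b) := by
    by_contra hb
    apply hM
    ext i j
    exact absurd ⟨j⟩ hb
  have hnt : Nontrivial (EuclideanSpace ℂ (Fin b)) := by
    obtain ⟨j⟩ := hb
    exact ⟨0, EuclideanSpace.single j 1, by simp [eq_comm]⟩
  have hsph : (Metric.sphere (0 : EuclideanSpace ℂ (Fin b)) 1).Nonempty :=
    NormedSpace.sphere_nonempty.mpr zero_le_one
  have hcont : Continuous fun u : EuclideanSpace ℂ (Fin b) => ‖ee (M *ᵥ u)‖ := by
    have hfun : (fun u : EuclideanSpace ℂ (Fin b) => ee (M *ᵥ u))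
        = ⇑(LinearMap.toContinuousLinearMap (Matrix.toEuclideanLin M)) := rfl
    exact (continuous_norm.comp (hfun ▸ (LinearMap.toContinuousLinearMap
      (Matrix.toEuclideanLin M)).continuous))
  obtain ⟨u, hu, hmax⟩ := (isCompact_sphere (0 : EuclideanSpace ℂ (Fin b)) 1).exists_isMaxOn
    hsph hcont.continuousOn
  rw [mem_sphere_zero_iff_norm] at hu
  refine ⟨u, hu, le_antisymm ?_ ?_⟩
  · calc ‖ee (M *ᵥ u)‖ ≤ ‖M‖ * ‖u‖ := l2_mulVec_le M u
    _ = ‖M‖ := by rw [hu, mul_one]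
  · refine l2_le_bound M (by positivity) fun x => ?_
    rcases eq_or_ne x 0 with rfl | hx
    · simp [ee]
    · have hxn : ‖x‖ ≠ 0 := norm_ne_zero_iff.mpr hx
      have hmem : ((‖x‖ : ℂ)⁻¹ • x) ∈ Metric.sphere (0 : EuclideanSpace ℂ (Fin b)) 1 := by
        rw [mem_sphere_zero_iff_norm, norm_smul]
        simp [hxn]
      have h1 : ‖ee (M *ᵥ ((‖x‖ : ℂ)⁻¹ • x))‖ ≤ ‖ee (M *ᵥ u)‖ := hmax hmem
      have heq : ee (M *ᵥ ((‖x‖ : ℂ)⁻¹ • x)) = (‖x‖ : ℂ)⁻¹ • ee (M *ᵥ x) := by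
        show (EuclideanSpace.equiv (Fin a) ℂ).symm _ = _
        rw [Matrix.mulVec_smul]
        rfl
      rw [heq, norm_smul] at h1
      have h2 := mul_le_mul_of_nonneg_right h1 (norm_nonneg x)
      calc ‖ee (M *ᵥ x)‖ = ‖(‖x‖:ℂ)⁻¹‖ * ‖ee (M *ᵥ x)‖ * ‖x‖ := by
            simp only [norm_inv, Complex.norm_real, Real.norm_eq_abs,
              abs_of_nonneg (norm_nonneg x)]
            rw [mul_comm _ (‖ee (M *ᵥ x)‖), mul_assoc, inv_mul_cancel₀ hxn, mul_one]
      _ ≤ ‖ee (M *ᵥ u)‖ * ‖x‖ := h2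

lemma vecMulVec_mulVec_eq {a b : ℕ} (u : Fin a → ℂ) (w z : Fin b → ℂ) :
    (vecMulVec u w) *ᵥ z = (w ⬝ᵥ z) • u := by
  ext i
  simp [vecMulVec_apply, mulVec, dotProduct, Finset.mul_sum, mul_comm, mul_assoc, mul_left_comm]

lemma ee_neg {k : ℕ} (v : Fin k → ℂ) : ee (-v) = -ee v := rfl

lemma ee_smul {k : ℕ} (c : ℂ) (v : Fin k → ℂ) : ee (c • v) = c • ee v := rfl

lemma rank_one_norm {a b : ℕ} (u : EuclideanSpace ℂ (Fin a)) (w : EuclideanSpace ℂ (Fin b))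
    (hw : w ≠ 0) :
    ‖vecMulVec u (star (w : Fin b → ℂ))‖ = ‖u‖ * ‖w‖ := by
  have hwn : 0 < ‖w‖ := norm_pos_iff.mpr hw
  have key : ∀ z : EuclideanSpace ℂ (Fin b),
      ee ((vecMulVec u (star (w : Fin b → ℂ))) *ᵥ z) = (inner ℂ w z : ℂ) • u := by
    intro z
    rw [show ((vecMulVec u (star (w : Fin b → ℂ))) *ᵥ z)
        = ((star (w : Fin b → ℂ)) ⬝ᵥ z) • (u : Fin a → ℂ) from vecMulVec_mulVec_eq _ _ _]
    rw [EuclideanSpace.inner_eq_star_dotProduct, dotProduct_comm]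
    rfl
  apply le_antisymm
  · refine l2_le_bound _ (by positivity) fun z => ?_
    rw [key z, norm_smul]
    calc ‖(inner ℂ w z : ℂ)‖ * ‖u‖ ≤ ‖w‖ * ‖z‖ * ‖u‖ :=
      mul_le_mul_of_nonneg_right (norm_inner_le_norm w z) (norm_nonneg u)
    _ = ‖u‖ * ‖w‖ * ‖z‖ := by ring
  · have h1 : ‖ee ((vecMulVec u (star (w : Fin b → ℂ))) *ᵥ w)‖
        ≤ ‖vecMulVec u (star (w : Fin b → ℂ))‖ * ‖w‖ := l2_mulVec_le _ _
    rw [key w] at h1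
    rw [inner_self_eq_norm_sq_to_K (𝕜 := ℂ)] at h1
    rw [norm_smul] at h1
    simp only [norm_pow, RCLike.norm_ofReal, abs_norm] at h1
    nlinarith [norm_nonneg u, norm_nonneg (vecMulVec u (star (w : Fin b → ℂ)))]

section Core
variable {n m p : ℕ} (A : Matrix (Fin n) (Fin n) ℂ) (B : Matrix (Fin n) (Fin m) ℂ)
  (C1 : Matrix (Fin p) (Fin n) ℂ)

lemma fwd (ω : ℝ)
    (hN : IsUnit ((Complex.I * (ω:ℂ)) • (1 : Matrix (Fin n) (Fin n) ℂ) - A).det)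
    (Δ : Matrix (Fin m) (Fin p) ℂ)
    (hdet : ((A - B * Δ * C1) - (Complex.I * (ω:ℂ)) • (1 : Matrix (Fin n) (Fin n) ℂ)).det = 0) :
    C1 * ((Complex.I * (ω:ℂ)) • 1 - A)⁻¹ * B ≠ 0 ∧
    1 ≤ ‖C1 * ((Complex.I * (ω:ℂ)) • 1 - A)⁻¹ * B‖ * ‖Δ‖ := by
  set c : ℂ := Complex.I * (ω:ℂ) with hc
  set N : Matrix (Fin n) (Fin n) ℂ := c • 1 - A with hNdef
  set G : Matrix (Fin p) (Fin m) ℂ := C1 * N⁻¹ * B with hG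
  obtain ⟨v, hv0, hv⟩ := Matrix.exists_mulVec_eq_zero_iff.mpr hdet
  have hv' : A *ᵥ v - (B * Δ * C1) *ᵥ v - c • v = 0 := by
    have := hv
    rwa [Matrix.sub_mulVec, Matrix.sub_mulVec, Matrix.smul_mulVec,
      Matrix.one_mulVec] at this
  have hNv : N *ᵥ v = -((B * Δ * C1) *ᵥ v) := by
    rw [hNdef, Matrix.sub_mulVec, Matrix.smul_mulVec, Matrix.one_mulVec]
    have h2 : A *ᵥ v - (B * Δ * C1) *ᵥ v = c • v := sub_eq_zero.mp hv'
    rw [← h2]; abel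
  have hvN : v = N⁻¹ *ᵥ (N *ᵥ v) := by
    rw [Matrix.mulVec_mulVec, Matrix.nonsing_inv_mul _ hN, Matrix.one_mulVec]
  set y : Fin p → ℂ := C1 *ᵥ v with hy
  have hBy : (B * Δ * C1) *ᵥ v = (B * Δ) *ᵥ y := by
    rw [hy, Matrix.mulVec_mulVec]
  have hyne : y ≠ 0 := by
    intro h0
    apply hv0
    rw [hvN, hNv, hBy, h0, Matrix.mulVec_zero, neg_zero, Matrix.mulVec_zero]
  have hyy : y = -((G * Δ) *ᵥ y) := by
    conv_lhs => rw [hy, hvN, hNv, hBy]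
    rw [Matrix.mulVec_neg, Matrix.mulVec_neg, Matrix.mulVec_mulVec, Matrix.mulVec_mulVec,
      hG, Matrix.mul_assoc (C1 * N⁻¹) B Δ]
  have hGne : G ≠ 0 := by
    intro h0
    apply hyne
    rw [hyy, h0, Matrix.zero_mul, Matrix.zero_mulVec, neg_zero]
  refine ⟨hGne, ?_⟩
  have hypos : 0 < ‖ee y‖ := norm_pos_iff.mpr (fun h => hyne (ee_eq_zero.mp h))
  have hnorm_eq : ‖ee y‖ = ‖ee ((G * Δ) *ᵥ y)‖ := by
    conv_lhs => rw [hyy]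
    rw [ee_neg, norm_neg]
  have hle : ‖ee y‖ ≤ ‖G‖ * ‖Δ‖ * ‖ee y‖ := by
    calc ‖ee y‖ = ‖ee ((G * Δ) *ᵥ y)‖ := hnorm_eq
    _ ≤ ‖G * Δ‖ * ‖ee y‖ := l2_mulVec_le _ _
    _ ≤ ‖G‖ * ‖Δ‖ * ‖ee y‖ :=
        mul_le_mul_of_nonneg_right (Matrix.l2_opNorm_mul G Δ) (norm_nonneg _)
  nlinarith

lemma bwd (ω : ℝ)
    (hN : IsUnit ((Complex.I * (ω:ℂ)) • (1 : Matrix (Fin n) (Fin n) ℂ) - A).det)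
    (hGne : C1 * ((Complex.I * (ω:ℂ)) • 1 - A)⁻¹ * B ≠ 0) :
    ∃ Δ : Matrix (Fin m) (Fin p) ℂ,
      ‖Δ‖ = ‖C1 * ((Complex.I * (ω:ℂ)) • 1 - A)⁻¹ * B‖⁻¹ ∧
      ((A - B * Δ * C1) - (Complex.I * (ω:ℂ)) • (1 : Matrix (Fin n) (Fin n) ℂ)).det = 0 := by
  set c : ℂ := Complex.I * (ω:ℂ) with hc
  set N : Matrix (Fin n) (Fin n) ℂ := c • 1 - A with hNdef
  set G : Matrix (Fin p) (Fin m) ℂ := C1 * N⁻¹ * B with hG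
  have hGpos : 0 < ‖G‖ := l2_norm_pos hGne
  obtain ⟨u, hu1, humax⟩ := l2_attained G hGne
  set w0 : Fin p → ℂ := G *ᵥ u with hw0def
  have hwnorm : ‖ee w0‖ = ‖G‖ := humax
  have hw0ne : w0 ≠ 0 := by
    intro h
    rw [h] at hwnorm
    rw [ee_zero, norm_zero] at hwnorm
    exact absurd hwnorm.symm (ne_of_gt hGpos)
  set Δ : Matrix (Fin m) (Fin p) ℂ :=
    (-((‖G‖:ℂ)^2)⁻¹) • vecMulVec (u : Fin m → ℂ) (star w0) with hΔdef
  have hΔnorm : ‖Δ‖ = ‖G‖⁻¹ := by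
    have h1 : ‖vecMulVec (u : Fin m → ℂ) (star w0)‖ = ‖u‖ * ‖ee w0‖ := by
      have := rank_one_norm u (ee w0) (fun h => hw0ne (ee_eq_zero.mp h))
      exact this
    rw [hΔdef, norm_smul, h1, hwnorm, hu1, one_mul]
    have : ‖(-((‖G‖:ℂ)^2)⁻¹)‖ = (‖G‖^2)⁻¹ := by
      rw [norm_neg, norm_inv, norm_pow, Complex.norm_real, Real.norm_eq_abs, abs_norm]
    rw [this]
    field_simp
  have hinner : (star w0) ⬝ᵥ w0 = ((‖G‖:ℂ))^2 := by
    have h1 : (inner ℂ (ee w0) (ee w0) : ℂ) = (star w0) ⬝ᵥ w0 := by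
      rw [EuclideanSpace.inner_eq_star_dotProduct, dotProduct_comm]; rfl
    have h2 : (inner ℂ (ee w0) (ee w0) : ℂ) = ((‖ee w0‖:ℂ))^2 :=
      inner_self_eq_norm_sq_to_K (ee w0)
    rw [← h1, h2, hwnorm]
  have hΔw : Δ *ᵥ w0 = -(u : Fin m → ℂ) := by
    rw [hΔdef, Matrix.smul_mulVec, vecMulVec_mulVec_eq, hinner]
    rw [smul_smul]
    have hGc : ((‖G‖:ℂ))^2 ≠ 0 := by
      simp only [ne_eq, pow_eq_zero_iff, Complex.ofReal_eq_zero, OfNat.ofNat_ne_zero,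
        not_false_eq_true, and_true]
      exact ne_of_gt hGpos
    rw [neg_mul, inv_mul_cancel₀ hGc, neg_one_smul]
  set v : Fin n → ℂ := N⁻¹ *ᵥ (B *ᵥ u) with hvdef
  have hCv : C1 *ᵥ v = w0 := by
    rw [hvdef, Matrix.mulVec_mulVec, Matrix.mulVec_mulVec, hw0def, hG, Matrix.mul_assoc,
      ← Matrix.mul_assoc]
  have hv0 : v ≠ 0 := by
    intro h
    apply hw0ne
    rw [← hCv, h, Matrix.mulVec_zero]
  have hNv : N *ᵥ v = B *ᵥ u := by
    rw [hvdef, Matrix.mulVec_mulVec, Matrix.mul_nonsing_inv _ hN, Matrix.one_mulVec]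
  have hkey : ((A - B * Δ * C1) - c • 1) *ᵥ v = 0 := by
    rw [Matrix.sub_mulVec, Matrix.sub_mulVec, Matrix.smul_mulVec, Matrix.one_mulVec]
    have hBDC : (B * Δ * C1) *ᵥ v = -(B *ᵥ u) := by
      rw [← Matrix.mulVec_mulVec, hCv, ← Matrix.mulVec_mulVec, hΔw, Matrix.mulVec_neg]
    have hAc : A *ᵥ v - c • v = -(B *ᵥ u) := by
      have : c • v - A *ᵥ v = B *ᵥ u := by
        rw [← hNv, hNdef, Matrix.sub_mulVec, Matrix.smul_mulVec, Matrix.one_mulVec]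
      rw [← this]; abel
    rw [hBDC]
    rw [show A *ᵥ v - -(B *ᵥ u) - c • v = (A *ᵥ v - c • v) + (B *ᵥ u) from by abel, hAc]
    abel
  exact ⟨Δ, hΔnorm, Matrix.exists_mulVec_eq_zero_iff.mp ⟨v, hv0, hkey⟩⟩


lemma ee_sub {k : ℕ} (v w : Fin k → ℂ) : ee (v - w) = ee v - ee w := rfl

lemma resolvent_tail (ω : ℝ)
    (hN : IsUnit ((Complex.I * (ω:ℂ)) • (1 : Matrix (Fin n) (Fin n) ℂ) - A).det)
    (hω : ‖A‖ + 1 ≤ |ω|) :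
    ‖((Complex.I * (ω:ℂ)) • (1 : Matrix (Fin n) (Fin n) ℂ) - A)⁻¹‖ ≤ 1 := by
  set c : ℂ := Complex.I * (ω:ℂ) with hc
  set N : Matrix (Fin n) (Fin n) ℂ := c • 1 - A with hNdef
  have hcnorm : ‖c‖ = |ω| := by
    rw [hc, norm_mul, Complex.norm_I, one_mul, Complex.norm_real, Real.norm_eq_abs]
  refine l2_le_bound _ zero_le_one fun z => ?_
  rw [one_mul]
  set x : Fin n → ℂ := N⁻¹ *ᵥ z with hx
  have hz : N *ᵥ x = z := by
    rw [hx, Matrix.mulVec_mulVec, Matrix.mul_nonsing_inv _ hN, Matrix.one_mulVec]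
  have hNx : ee (N *ᵥ x) = c • ee x - ee (A *ᵥ x) := by
    rw [hNdef, Matrix.sub_mulVec, Matrix.smul_mulVec, Matrix.one_mulVec, ee_sub, ee_smul]
  have hlb : (|ω| - ‖A‖) * ‖ee x‖ ≤ ‖ee (N *ᵥ x)‖ := by
    rw [hNx]
    calc (|ω| - ‖A‖) * ‖ee x‖ = ‖c‖ * ‖ee x‖ - ‖A‖ * ‖ee x‖ := by rw [hcnorm]; ring
    _ ≤ ‖c • ee x‖ - ‖ee (A *ᵥ x)‖ := by
        rw [norm_smul]
        exact sub_le_sub_left (l2_mulVec_le A x) _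
    _ ≤ ‖c • ee x - ee (A *ᵥ x)‖ := norm_sub_norm_le _ _
  have hz2 : ee (N *ᵥ x) = z := by rw [hz]; rfl
  rw [hz2] at hlb
  have h1 : ‖ee x‖ ≤ ‖z‖ := by nlinarith [norm_nonneg (ee x), norm_nonneg z]
  exact h1

lemma tail_bound (ω : ℝ)
    (hN : IsUnit ((Complex.I * (ω:ℂ)) • (1 : Matrix (Fin n) (Fin n) ℂ) - A).det)
    (hω : ‖A‖ + 1 ≤ |ω|) :
    ‖C1 * ((Complex.I * (ω:ℂ)) • (1 : Matrix (Fin n) (Fin n) ℂ) - A)⁻¹ * B‖ ≤ ‖C1‖ * ‖B‖ := by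
  set N : Matrix (Fin n) (Fin n) ℂ := (Complex.I * (ω:ℂ)) • 1 - A with hNdef
  have h1 : ‖C1 * N⁻¹ * B‖ ≤ ‖C1 * N⁻¹‖ * ‖B‖ := Matrix.l2_opNorm_mul _ _
  have h2 : ‖C1 * N⁻¹‖ ≤ ‖C1‖ * ‖N⁻¹‖ := Matrix.l2_opNorm_mul _ _
  have h3 : ‖N⁻¹‖ ≤ 1 := resolvent_tail A ω hN hω
  calc ‖C1 * N⁻¹ * B‖ ≤ ‖C1 * N⁻¹‖ * ‖B‖ := h1
  _ ≤ ‖C1‖ * ‖N⁻¹‖ * ‖B‖ := mul_le_mul_of_nonneg_right h2 (norm_nonneg B)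
  _ ≤ ‖C1‖ * 1 * ‖B‖ := by
      have := mul_le_mul_of_nonneg_left h3 (norm_nonneg C1)
      exact mul_le_mul_of_nonneg_right this (norm_nonneg B)
  _ = ‖C1‖ * ‖B‖ := by ring

lemma normGR_continuous
    (hA : ∀ ω : ℝ, IsUnit ((Complex.I * (ω:ℂ)) • (1 : Matrix (Fin n) (Fin n) ℂ) - A).det) :
    Continuous fun ω : ℝ =>
      ‖C1 * ((Complex.I * (ω:ℂ)) • (1 : Matrix (Fin n) (Fin n) ℂ) - A)⁻¹ * B‖ := by
  have h0 : Continuous fun ω : ℝ =>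
      ((Complex.I * (ω:ℂ)) • (1 : Matrix (Fin n) (Fin n) ℂ) - A) := by
    exact ((continuous_const.mul Complex.continuous_ofReal).smul continuous_const).sub
      continuous_const
  have hdet : Continuous fun ω : ℝ =>
      ((Complex.I * (ω:ℂ)) • (1 : Matrix (Fin n) (Fin n) ℂ) - A).det := h0.matrix_det
  have hdetinv : Continuous fun ω : ℝ =>
      (((Complex.I * (ω:ℂ)) • (1 : Matrix (Fin n) (Fin n) ℂ) - A).det)⁻¹ :=
    hdet.inv₀ fun ω => (hA ω).ne_zero
  have hadj : Continuous fun ω : ℝ =>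
      ((Complex.I * (ω:ℂ)) • (1 : Matrix (Fin n) (Fin n) ℂ) - A).adjugate := h0.matrix_adjugate
  have hinv : Continuous fun ω : ℝ =>
      ((Complex.I * (ω:ℂ)) • (1 : Matrix (Fin n) (Fin n) ℂ) - A)⁻¹ := by
    have heq : (fun ω : ℝ => ((Complex.I * (ω:ℂ)) • (1 : Matrix (Fin n) (Fin n) ℂ) - A)⁻¹)
        = fun ω : ℝ => (((Complex.I * (ω:ℂ)) • (1 : Matrix (Fin n) (Fin n) ℂ) - A).det)⁻¹
          • ((Complex.I * (ω:ℂ)) • (1 : Matrix (Fin n) (Fin n) ℂ) - A).adjugate := by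
      funext ω
      rw [Matrix.inv_def, Ring.inverse_eq_inv']
    rw [heq]
    exact hdetinv.smul hadj
  have hGR : Continuous fun ω : ℝ =>
      C1 * ((Complex.I * (ω:ℂ)) • (1 : Matrix (Fin n) (Fin n) ℂ) - A)⁻¹ * B :=
    (continuous_const.matrix_mul hinv).matrix_mul continuous_const
  exact hGR.norm

lemma normGR_bdd
    (hA : ∀ ω : ℝ, IsUnit ((Complex.I * (ω:ℂ)) • (1 : Matrix (Fin n) (Fin n) ℂ) - A).det) :
    BddAbove (Set.range fun ω : ℝ =>
      ‖C1 * ((Complex.I * (ω:ℂ)) • (1 : Matrix (Fin n) (Fin n) ℂ) - A)⁻¹ * B‖) := by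
  set f := fun ω : ℝ =>
    ‖C1 * ((Complex.I * (ω:ℂ)) • (1 : Matrix (Fin n) (Fin n) ℂ) - A)⁻¹ * B‖ with hf
  set ρ : ℝ := ‖A‖ + 1 with hρ
  have hcont := normGR_continuous A B C1 hA
  obtain ⟨K1, hK1⟩ := (isCompact_Icc.image hcont).bddAbove
  refine ⟨max K1 (‖C1‖ * ‖B‖), ?_⟩
  rintro x ⟨ω, rfl⟩
  by_cases hω : |ω| ≤ ρ
  · have : f ω ∈ f '' Set.Icc (-ρ) ρ :=
      ⟨ω, ⟨neg_le_of_abs_le hω, le_of_abs_le hω⟩, rfl⟩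
    exact le_trans (hK1 this) (le_max_left _ _)
  · push_neg at hω
    exact le_trans (tail_bound A B C1 ω (hA ω) (le_of_lt hω)) (le_max_right _ _)

end Core

/-- For an asymptotically stable DH system `(J − R)Q`, the unstructured restricted stability
radii with respect to perturbations of `R` and of `J` coincide and are given by the reciprocal
of `sup_ω ‖G_R(ω)‖₂`, where `G_R(ω) = C Q (iω I − (J−R)Q)⁻¹ B`; the corresponding perturbation
sets are nonempty iff `G_R` is not identically zero. -/
theorem unstructured_stability_radius_R_and_J
    {n m p : ℕ}
    (J R Q : Matrix (Fin n) (Fin n) ℂ)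
    (hJ : Jᴴ = -J) (hR : R.PosSemidef) (hQ : Q.PosDef)
    (hstab : ∀ μ : ℂ, ((J - R) * Q - μ • 1).det = 0 → μ.re < 0)
    (B : Matrix (Fin n) (Fin m) ℂ) (C : Matrix (Fin p) (Fin n) ℂ)
    (GR : ℝ → Matrix (Fin p) (Fin m) ℂ)
    (hGR : ∀ ω : ℝ, GR ω =
      C * Q * ((Complex.I * (ω : ℂ)) • (1 : Matrix (Fin n) (Fin n) ℂ) - (J - R) * Q)⁻¹ * B)
    (SR SJ : Set ℝ)
    (hSR : SR = {x | ∃ Δ : Matrix (Fin m) (Fin p) ℂ, sNorm Δ = x ∧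
      ∃ μ : ℂ, μ.re = 0 ∧ ((J - (R + B * Δ * C)) * Q - μ • 1).det = 0})
    (hSJ : SJ = {x | ∃ Δ : Matrix (Fin m) (Fin p) ℂ, sNorm Δ = x ∧
      ∃ μ : ℂ, μ.re = 0 ∧ (((J + B * Δ * C) - R) * Q - μ • 1).det = 0}) :
    (SR.Nonempty ↔ ∃ ω : ℝ, GR ω ≠ 0) ∧
    (SJ.Nonempty ↔ ∃ ω : ℝ, GR ω ≠ 0) ∧
    (SR.Nonempty →
      BddAbove (Set.range fun ω : ℝ => sNorm (GR ω)) ∧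
      0 < (⨆ ω : ℝ, sNorm (GR ω)) ∧
      sInf SR = (⨆ ω : ℝ, sNorm (GR ω))⁻¹ ∧
      sInf SJ = (⨆ ω : ℝ, sNorm (GR ω))⁻¹) := by
  have hSJR : SJ = SR := by
    rw [hSR, hSJ]
    ext x
    constructor
    · rintro ⟨Δ, hΔ, μ, hμ, hdet⟩
      refine ⟨-Δ, by rw [sNorm_eq, norm_neg, ← sNorm_eq]; exact hΔ, μ, hμ, ?_⟩
      have : J - (R + B * -Δ * C) = J + B * Δ * C - R := by
        rw [Matrix.mul_neg, Matrix.neg_mul]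
        abel
      rw [this]
      exact hdet
    · rintro ⟨Δ, hΔ, μ, hμ, hdet⟩
      refine ⟨-Δ, by rw [sNorm_eq, norm_neg, ← sNorm_eq]; exact hΔ, μ, hμ, ?_⟩
      have : J + B * -Δ * C - R = J - (R + B * Δ * C) := by
        rw [Matrix.mul_neg, Matrix.neg_mul]
        abel
      rw [this]
      exact hdet
  -- setup
  have hinv : ∀ ω : ℝ, IsUnit ((Complex.I * (ω:ℂ)) •
      (1 : Matrix (Fin n) (Fin n) ℂ) - (J - R) * Q).det := by
    intro ω
    rw [isUnit_iff_ne_zero]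
    intro h
    have hre : (Complex.I * (ω:ℂ)).re = 0 := by simp
    have hdet0 : ((J - R) * Q - (Complex.I * (ω:ℂ)) • 1).det = 0 := by
      have hneg : (J - R) * Q - (Complex.I * (ω:ℂ)) • (1 : Matrix (Fin n) (Fin n) ℂ)
          = -((Complex.I * (ω:ℂ)) • 1 - (J - R) * Q) := by rw [neg_sub]
      rw [hneg, Matrix.det_neg, h, mul_zero]
    have := hstab _ hdet0
    rw [hre] at this
    exact absurd this (lt_irrefl 0)
  have hconv : ∀ (Δ : Matrix (Fin m) (Fin p) ℂ) (μ : ℂ),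
      (J - (R + B * Δ * C)) * Q - μ • 1
        = ((J - R) * Q - B * Δ * (C * Q)) - μ • (1 : Matrix (Fin n) (Fin n) ℂ) := by
    intro Δ μ
    have h1 : J - (R + B * Δ * C) = (J - R) - B * Δ * C := by abel
    rw [h1, Matrix.sub_mul, Matrix.mul_assoc (B * Δ) C Q]
  have hμform : ∀ μ : ℂ, μ.re = 0 → μ = Complex.I * (μ.im : ℂ) := by
    intro μ hμ
    apply Complex.ext <;> simp [hμ]
  -- membership characterizations
  have hmemchar : ∀ x : ℝ, x ∈ SR ↔ ∃ Δ : Matrix (Fin m) (Fin p) ℂ, ‖Δ‖ = x ∧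
      ∃ ω : ℝ, (((J - R) * Q - B * Δ * (C * Q)) -
        (Complex.I * (ω:ℂ)) • (1 : Matrix (Fin n) (Fin n) ℂ)).det = 0 := by
    intro x
    rw [hSR]
    constructor
    · rintro ⟨Δ, hΔ, μ, hμ, hdet⟩
      refine ⟨Δ, by rw [← sNorm_eq]; exact hΔ, μ.im, ?_⟩
      rw [← hconv]
      rw [← hμform μ hμ]
      exact hdet
    · rintro ⟨Δ, hΔ, ω, hdet⟩
      refine ⟨Δ, by rw [sNorm_eq]; exact hΔ, Complex.I * (ω:ℂ), by simp, ?_⟩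
      rw [hconv]
      exact hdet
  have hGR' : ∀ ω : ℝ, GR ω = (C * Q) *
      ((Complex.I * (ω:ℂ)) • (1 : Matrix (Fin n) (Fin n) ℂ) - (J - R) * Q)⁻¹ * B := hGR
  -- the iff
  have hiff : SR.Nonempty ↔ ∃ ω : ℝ, GR ω ≠ 0 := by
    constructor
    · rintro ⟨x, hx⟩
      obtain ⟨Δ, hΔ, ω, hdet⟩ := (hmemchar x).mp hx
      obtain ⟨hGne, _⟩ := fwd ((J - R) * Q) B (C * Q) ω (hinv ω) Δ hdet
      exact ⟨ω, by rw [hGR']; exact hGne⟩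
    · rintro ⟨ω, hω⟩
      rw [hGR'] at hω
      obtain ⟨Δ, hΔn, hdet⟩ := bwd ((J - R) * Q) B (C * Q) ω (hinv ω) hω
      exact ⟨‖Δ‖, (hmemchar ‖Δ‖).mpr ⟨Δ, rfl, ω, hdet⟩⟩
  refine ⟨hiff, by rw [hSJR]; exact hiff, ?_⟩
  intro hne
  -- the sup function
  have hfeq : (fun ω : ℝ => sNorm (GR ω)) = fun ω : ℝ =>
      ‖(C * Q) * ((Complex.I * (ω:ℂ)) • (1 : Matrix (Fin n) (Fin n) ℂ) - (J - R) * Q)⁻¹ * B‖ := by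
    funext ω
    rw [hGR' ω, sNorm_eq]
  have hbdd : BddAbove (Set.range fun ω : ℝ => sNorm (GR ω)) := by
    rw [hfeq]
    exact normGR_bdd ((J - R) * Q) B (C * Q) hinv
  set s : ℝ := ⨆ ω : ℝ, sNorm (GR ω) with hs
  obtain ⟨ω₀, hω₀⟩ := hiff.mp hne
  have hfω₀ : 0 < sNorm (GR ω₀) := by
    rw [sNorm_eq]
    exact l2_norm_pos hω₀
  have hspos : 0 < s := lt_of_lt_of_le hfω₀ (le_ciSup hbdd ω₀)
  -- lower bound for SR
  have hlow : ∀ x ∈ SR, s⁻¹ ≤ x := by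
    intro x hx
    obtain ⟨Δ, hΔ, ω, hdet⟩ := (hmemchar x).mp hx
    obtain ⟨hGne, hge⟩ := fwd ((J - R) * Q) B (C * Q) ω (hinv ω) Δ hdet
    have hfs : sNorm (GR ω) ≤ s := le_ciSup hbdd ω
    have hfω : ‖(C * Q) * ((Complex.I * (ω:ℂ)) • (1 : Matrix (Fin n) (Fin n) ℂ)
        - (J - R) * Q)⁻¹ * B‖ ≤ s := by
      rw [← sNorm_eq, ← hGR']
      exact hfs
    have h1 : 1 ≤ s * x := by
      rw [← hΔ]
      nlinarith [norm_nonneg Δ]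
    rw [inv_eq_one_div, div_le_iff₀ hspos] at *
    nlinarith
  have hbddbelow : BddBelow SR := ⟨s⁻¹, hlow⟩
  have ht : s⁻¹ ≤ sInf SR := le_csInf hne hlow
  have htpos : 0 < sInf SR := lt_of_lt_of_le (inv_pos.mpr hspos) ht
  -- upper bound: ∀ ω, f ω ≤ (sInf SR)⁻¹
  have hub : ∀ ω : ℝ, sNorm (GR ω) ≤ (sInf SR)⁻¹ := by
    intro ω
    by_cases hGz : GR ω = 0
    · rw [hGz, sNorm_eq, norm_zero]
      exact le_of_lt (inv_pos.mpr htpos)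
    · have hω : (C * Q) * ((Complex.I * (ω:ℂ)) • (1 : Matrix (Fin n) (Fin n) ℂ)
          - (J - R) * Q)⁻¹ * B ≠ 0 := by rw [← hGR']; exact hGz
      obtain ⟨Δ, hΔn, hdet⟩ := bwd ((J - R) * Q) B (C * Q) ω (hinv ω) hω
      have hmem : ‖Δ‖ ∈ SR := (hmemchar ‖Δ‖).mpr ⟨Δ, rfl, ω, hdet⟩
      have h1 : sInf SR ≤ ‖Δ‖ := csInf_le hbddbelow hmem
      rw [hΔn] at h1
      have hfpos : 0 < sNorm (GR ω) := by rw [sNorm_eq]; exact l2_norm_pos hGz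
      have h2 : sInf SR ≤ (sNorm (GR ω))⁻¹ := by
        rw [sNorm_eq, hGR' ω]
        exact h1
      calc sNorm (GR ω) = ((sNorm (GR ω))⁻¹)⁻¹ := by rw [inv_inv]
      _ ≤ (sInf SR)⁻¹ := by
          apply inv_anti₀ htpos h2
  have hsle : s ≤ (sInf SR)⁻¹ := ciSup_le hub
  have hfinal : sInf SR = s⁻¹ := by
    refine le_antisymm ?_ ht
    calc sInf SR = ((sInf SR)⁻¹)⁻¹ := by rw [inv_inv]
    _ ≤ s⁻¹ := inv_anti₀ hspos hsle
  exact ⟨hbdd, hspos, hfinal, by rw [hSJR]; exact hfinal⟩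
end

section
/- Let (J,R,Q) be a DH triple of size n such that every eigenvalue of (J−R)Q has negative real part, and let B ∈ ℂ^{n×m}, C ∈ ℂ^{p×n}. For ω ∈ ℝ set G_Q(ω) := C·(iω·I_n − (J−R)Q)⁻¹·(J−R)·B (the matrix iω·I_n − (J−R)Q is invertible by the stability assumption). Define S_Q := { ‖Δ‖₂ : Δ ∈ ℂ^{m×p} such that (J−R)(Q + BΔC) has an eigenvalue with zero real part }. Then S_Q is nonempty if and only if G_Q(ω) ≠ 0 for some ω ∈ ℝ; and in that case sup_{ω∈ℝ} ‖G_Q(ω)‖₂ is finite and positive and inf S_Q = ( sup_{ω∈ℝ} ‖G_Q(ω)‖₂ )⁻¹. -/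
open Matrix
open scoped ComplexOrder

namespace SRaux

noncomputable def mCLM {p q : ℕ} (M : Matrix (Fin p) (Fin q) ℂ) :
    EuclideanSpace ℂ (Fin q) →L[ℂ] EuclideanSpace ℂ (Fin p) :=
  LinearMap.toContinuousLinearMap (Matrix.toEuclideanLin M)

lemma sNorm_eq {p q : ℕ} (M : Matrix (Fin p) (Fin q) ℂ) : sNorm M = ‖mCLM M‖ := rfl

lemma mCLM_apply {p q : ℕ} (M : Matrix (Fin p) (Fin q) ℂ) (v : EuclideanSpace ℂ (Fin q)) :
    mCLM M v = (WithLp.equiv 2 (Fin p → ℂ)).symm (M *ᵥ (WithLp.equiv 2 (Fin q → ℂ)) v) := rfl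

lemma sNorm_nonneg {p q : ℕ} (M : Matrix (Fin p) (Fin q) ℂ) : 0 ≤ sNorm M := norm_nonneg _

lemma sNorm_pos {p q : ℕ} {M : Matrix (Fin p) (Fin q) ℂ} (h : M ≠ 0) : 0 < sNorm M := by
  rw [sNorm_eq]
  rw [norm_pos_iff]
  intro hc
  apply h
  have : Matrix.toEuclideanLin M = 0 := by
    apply LinearMap.ext
    intro v
    have h2 : mCLM M v = 0 := by rw [hc]; rfl
    simpa [mCLM] using h2
  exact (LinearEquiv.map_eq_zero_iff Matrix.toEuclideanLin).mp this

lemma mCLM_mul {n p q : ℕ} (M : Matrix (Fin p) (Fin n) ℂ) (N : Matrix (Fin n) (Fin q) ℂ) :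
    mCLM (M * N) = (mCLM M).comp (mCLM N) := by
  ext v
  simp [mCLM_apply, mulVec_mulVec]

lemma sNorm_mul_le {n p q : ℕ} (M : Matrix (Fin p) (Fin n) ℂ) (N : Matrix (Fin n) (Fin q) ℂ) :
    sNorm (M * N) ≤ sNorm M * sNorm N := by
  rw [sNorm_eq, sNorm_eq, sNorm_eq, mCLM_mul]
  exact ContinuousLinearMap.opNorm_comp_le _ _

lemma vecMulVec_mulVec {q p : ℕ} (a : Fin p → ℂ) (b : Fin q → ℂ) (x : Fin q → ℂ) :
    (vecMulVec a b) *ᵥ x = (b ⬝ᵥ x) • a := by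
  ext i
  simp only [vecMulVec, mulVec, dotProduct, Pi.smul_apply, smul_eq_mul, of_apply,
    Finset.sum_mul, Finset.mul_sum]
  exact Finset.sum_congr rfl fun j _ => by ring

-- lower bound lemma

lemma one_le_of_det_zero {m p : ℕ} (Δ : Matrix (Fin m) (Fin p) ℂ) (G : Matrix (Fin p) (Fin m) ℂ)
    (h : (1 - Δ * G).det = 0) : 1 ≤ sNorm Δ * sNorm G := by
  obtain ⟨v, hv, hker⟩ := (Matrix.exists_mulVec_eq_zero_iff).mpr h
  have hv' : Δ *ᵥ (G *ᵥ v) = v := by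
    have := hker
    rw [sub_mulVec, one_mulVec, sub_eq_zero] at this
    rw [mulVec_mulVec]
    exact this.symm
  set ev : EuclideanSpace ℂ (Fin m) := (WithLp.equiv 2 (Fin m → ℂ)).symm v with hev
  have hevne : ‖ev‖ ≠ 0 := by
    simp only [norm_ne_zero_iff, hev]
    exact fun hc => hv (by simpa using congrArg (WithLp.equiv 2 (Fin m → ℂ)) hc)
  have key : ‖ev‖ ≤ sNorm Δ * sNorm G * ‖ev‖ := by
    calc ‖ev‖ = ‖mCLM Δ (mCLM G ev)‖ := by
          rw [mCLM_apply, mCLM_apply]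
          simp [hev, hv']
      _ ≤ sNorm Δ * ‖mCLM G ev‖ := (mCLM Δ).le_opNorm _
      _ ≤ sNorm Δ * (sNorm G * ‖ev‖) := by
          have := (mCLM G).le_opNorm ev
          have h0 : (0:ℝ) ≤ sNorm Δ := norm_nonneg _
          exact mul_le_mul_of_nonneg_left this h0
      _ = sNorm Δ * sNorm G * ‖ev‖ := by ring
  have hpos : 0 < ‖ev‖ := lt_of_le_of_ne (norm_nonneg _) (Ne.symm hevne)
  nlinarith

open scoped InnerProductSpace in
lemma exists_norm_attained {q p : ℕ} [Nonempty (Fin q)]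
    (T : EuclideanSpace ℂ (Fin q) →L[ℂ] EuclideanSpace ℂ (Fin p)) :
    ∃ v : EuclideanSpace ℂ (Fin q), ‖v‖ = 1 ∧ ‖T v‖ = ‖T‖ := by
  have hs : (Metric.sphere (0 : EuclideanSpace ℂ (Fin q)) 1).Nonempty :=
    NormedSpace.sphere_nonempty.mpr zero_le_one
  have hcps : IsCompact (Metric.sphere (0 : EuclideanSpace ℂ (Fin q)) 1) := isCompact_sphere _ _
  obtain ⟨v, hv, hmax'⟩ := hcps.exists_isMaxOn hs ((T.continuous.norm).continuousOn)
  have hmax : ∀ w ∈ Metric.sphere (0 : EuclideanSpace ℂ (Fin q)) 1, ‖T w‖ ≤ ‖T v‖ := hmax'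
  rw [mem_sphere_zero_iff_norm] at hv
  refine ⟨v, hv, le_antisymm ?_ ?_⟩
  · simpa [hv] using T.le_opNorm v
  · apply T.opNorm_le_bound (norm_nonneg _)
    intro w
    rcases eq_or_ne w 0 with rfl | hw
    · simp
    · have hwn : ‖w‖ ≠ 0 := norm_ne_zero_iff.mpr hw
      have := hmax (‖w‖⁻¹ • w)
        (by simp [norm_smul, abs_of_nonneg, inv_mul_cancel₀ hwn, mem_sphere_zero_iff_norm])
      rw [T.map_smul_of_tower, norm_smul] at this
      simp only [norm_inv, norm_norm] at this
      calc ‖T w‖ = ‖w‖ * (‖w‖⁻¹ * ‖T w‖) := by field_simp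
      _ ≤ ‖w‖ * ‖T v‖ := by nlinarith [norm_nonneg w]
      _ = ‖T v‖ * ‖w‖ := mul_comm _ _

open scoped InnerProductSpace in
lemma exists_Delta {m p : ℕ} (G : Matrix (Fin p) (Fin m) ℂ) (hG : G ≠ 0) :
    ∃ Δ : Matrix (Fin m) (Fin p) ℂ, sNorm Δ = (sNorm G)⁻¹ ∧ (1 - Δ * G).det = 0 := by
  have hs : 0 < sNorm G := sNorm_pos hG
  set s : ℝ := sNorm G with hsdef
  have hsne : (s : ℂ) ≠ 0 := by
    simp only [ne_eq, Complex.ofReal_eq_zero]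
    exact ne_of_gt hs
  haveI : Nonempty (Fin m) := by
    by_contra hc
    exact hG (by ext i j; exact absurd ⟨j⟩ hc)
  obtain ⟨v, hv1, hvG⟩ := exists_norm_attained (mCLM G)
  set u : EuclideanSpace ℂ (Fin p) := (s⁻¹ : ℂ) • mCLM G v with hu
  have hGv : mCLM G v = (s : ℂ) • u := by
    rw [hu, smul_smul, mul_inv_cancel₀ hsne, one_smul]
  have hu1 : ‖u‖ = 1 := by
    rw [hu, norm_smul, hvG]
    simp only [norm_inv, Complex.norm_real, Real.norm_eq_abs, abs_of_pos hs]
    exact inv_mul_cancel₀ (ne_of_gt hs)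
  set ev : Fin m → ℂ := WithLp.equiv 2 (Fin m → ℂ) v with hev
  set eu : Fin p → ℂ := WithLp.equiv 2 (Fin p → ℂ) u with heu
  set Δ : Matrix (Fin m) (Fin p) ℂ := (s⁻¹ : ℂ) • vecMulVec ev (star eu) with hΔ
  have hΔv : ∀ x : Fin p → ℂ, Δ *ᵥ x = (s⁻¹ : ℂ) • ((star eu ⬝ᵥ x) • ev) := by
    intro x
    rw [hΔ, smul_mulVec, vecMulVec_mulVec]
  have huu : star eu ⬝ᵥ eu = 1 := by
    have : ⟪u, u⟫_ℂ = star eu ⬝ᵥ eu := by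
      rw [EuclideanSpace.inner_eq_star_dotProduct, dotProduct_comm]; rfl
    rw [← this, inner_self_eq_norm_sq_to_K, hu1]
    norm_num
  have hGev : G *ᵥ ev = (s : ℂ) • eu := by
    have : WithLp.equiv 2 (Fin p → ℂ) (mCLM G v) = G *ᵥ ev := by rw [mCLM_apply]; simp [hev]
    rw [← this, hGv]; rfl
  have hdet : (1 - Δ * G).det = 0 := by
    apply Matrix.exists_mulVec_eq_zero_iff.mp
    refine ⟨ev, ?_, ?_⟩
    · intro hc
      apply_fun (WithLp.equiv 2 (Fin m → ℂ)).symm at hc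
      rw [hev] at hc
      simp only [Equiv.symm_apply_apply, map_zero] at hc
      rw [hc] at hv1
      simp at hv1
    · rw [sub_mulVec, one_mulVec, ← mulVec_mulVec, hGev, mulVec_smul, hΔv, huu, sub_eq_zero,
        smul_smul, smul_smul, mul_one, mul_inv_cancel₀ hsne, one_smul]
  refine ⟨Δ, ?_, hdet⟩
  have hΔw : ∀ w : EuclideanSpace ℂ (Fin p), mCLM Δ w = (s⁻¹ : ℂ) • ((⟪u, w⟫_ℂ) • v) := by
    intro w
    rw [mCLM_apply, hΔv, EuclideanSpace.inner_eq_star_dotProduct]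
    rw [dotProduct_comm]
    rfl
  have hnorm : ∀ w : EuclideanSpace ℂ (Fin p), ‖mCLM Δ w‖ = s⁻¹ * ‖⟪u, w⟫_ℂ‖ := by
    intro w
    rw [hΔw, norm_smul, norm_smul, hv1, mul_one]
    simp [abs_of_pos hs]
  rw [sNorm_eq]
  apply le_antisymm
  · apply ContinuousLinearMap.opNorm_le_bound _ (by positivity)
    intro w
    rw [hnorm]
    have := norm_inner_le_norm (𝕜 := ℂ) u w
    rw [hu1, one_mul] at this
    have h0 : (0:ℝ) ≤ s⁻¹ := le_of_lt (by positivity)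
    calc s⁻¹ * ‖⟪u, w⟫_ℂ‖ ≤ s⁻¹ * ‖w‖ := mul_le_mul_of_nonneg_left this h0
    _ = s⁻¹ * ‖w‖ := rfl
  · have h1 : ‖mCLM Δ u‖ = s⁻¹ := by
      rw [hnorm, inner_self_eq_norm_sq_to_K, hu1]
      norm_num
    have := (mCLM Δ).le_opNorm u
    rw [h1, hu1, mul_one] at this
    exact this

lemma continuous_sNorm {p q : ℕ} : Continuous fun M : Matrix (Fin p) (Fin q) ℂ => sNorm M := by
  have h : Continuous fun M : Matrix (Fin p) (Fin q) ℂ => mCLM M :=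
    LinearMap.continuous_of_finiteDimensional
      ((LinearMap.toContinuousLinearMap :
          (EuclideanSpace ℂ (Fin q) →ₗ[ℂ] EuclideanSpace ℂ (Fin p)) ≃ₗ[ℂ]
            (EuclideanSpace ℂ (Fin q) →L[ℂ] EuclideanSpace ℂ (Fin p))).toLinearMap.comp
        (Matrix.toEuclideanLin :
          Matrix (Fin p) (Fin q) ℂ ≃ₗ[ℂ] _).toLinearMap)
  exact h.norm

lemma det_perturb {n m p : ℕ} (F : Matrix (Fin n) (Fin n) ℂ) (hF : F.det ≠ 0)
    (D : Matrix (Fin n) (Fin m) ℂ) (C : Matrix (Fin p) (Fin n) ℂ) (Δ : Matrix (Fin m) (Fin p) ℂ) :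
    (F - D * Δ * C).det = 0 ↔ (1 - Δ * (C * F⁻¹ * D)).det = 0 := by
  have hinv : F * F⁻¹ = 1 := mul_nonsing_inv F (isUnit_iff_ne_zero.mpr hF)
  have hsplit : F - D * Δ * C = F * (1 - F⁻¹ * (D * Δ * C)) := by
    rw [Matrix.mul_sub, Matrix.mul_one, ← Matrix.mul_assoc, hinv, Matrix.one_mul]
  have e1 : (1 - F⁻¹ * (D * Δ * C)).det = (1 - Δ * (C * F⁻¹ * D)).det := by
    rw [show F⁻¹ * (D * Δ * C) = (F⁻¹ * D * Δ) * C by simp [Matrix.mul_assoc],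
      det_one_sub_mul_comm,
      show C * (F⁻¹ * D * Δ) = (C * F⁻¹ * D) * Δ by simp [Matrix.mul_assoc],
      det_one_sub_mul_comm]
  rw [hsplit, det_mul, e1, mul_eq_zero, or_iff_right hF]

lemma resolvent_bound {n : ℕ} (A : Matrix (Fin n) (Fin n) ℂ) (ω : ℝ)
    (hdet : ((Complex.I * (ω:ℂ)) • (1 : Matrix (Fin n) (Fin n) ℂ) - A).det ≠ 0)
    (h : sNorm A < |ω|) :
    sNorm (((Complex.I * (ω:ℂ)) • (1 : Matrix (Fin n) (Fin n) ℂ) - A)⁻¹) ≤ (|ω| - sNorm A)⁻¹ := by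
  set F := (Complex.I * (ω:ℂ)) • (1 : Matrix (Fin n) (Fin n) ℂ) - A with hFdef
  have hinv : F * F⁻¹ = 1 := mul_nonsing_inv F (isUnit_iff_ne_zero.mpr hdet)
  have hpos : 0 < |ω| - sNorm A := sub_pos.mpr h
  rw [sNorm_eq]
  apply ContinuousLinearMap.opNorm_le_bound _ (le_of_lt (by positivity))
  intro y
  set x : EuclideanSpace ℂ (Fin n) := mCLM F⁻¹ y with hx
  have hFx : mCLM F x = y := by
    have : (mCLM F).comp (mCLM F⁻¹) = mCLM (1 : Matrix (Fin n) (Fin n) ℂ) := (mCLM_mul _ _).symm.trans (by rw [hinv])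
    have h2 := congrFun (congrArg DFunLike.coe this) y
    simp only [ContinuousLinearMap.comp_apply] at h2
    rw [hx, h2, mCLM_apply]
    simp
  have hFx2 : mCLM F x = (Complex.I * (ω:ℂ)) • x - mCLM A x := by
    rw [mCLM_apply, hFdef]
    rw [sub_mulVec, smul_mulVec, one_mulVec]
    rw [mCLM_apply]
    simp
  have hnormI : ‖Complex.I * (ω:ℂ)‖ = |ω| := by
    rw [norm_mul, Complex.norm_I, one_mul, Complex.norm_real, Real.norm_eq_abs]
  have hlow : (|ω| - sNorm A) * ‖x‖ ≤ ‖y‖ := by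
    have h1 : ‖(Complex.I * (ω:ℂ)) • x‖ - ‖mCLM A x‖ ≤ ‖mCLM F x‖ := by
      rw [hFx2]
      exact norm_sub_norm_le _ _
    have h2 : ‖mCLM A x‖ ≤ sNorm A * ‖x‖ := (mCLM A).le_opNorm x
    rw [norm_smul, hnormI, hFx] at h1
    nlinarith [norm_nonneg x]
  have : ‖x‖ ≤ (|ω| - sNorm A)⁻¹ * ‖y‖ := by
    rw [← div_eq_inv_mul, le_div_iff₀ hpos]
    linarith [hlow]
  simpa [hx] using this

lemma sup_attained {h : ℝ → ℝ} (hc : Continuous h) (K a : ℝ) (hK : 0 ≤ K)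
    (hbd : ∀ ω : ℝ, a < |ω| → h ω ≤ K / (|ω| - a))
    (ω₀ : ℝ) (h0 : 0 < h ω₀) :
    ∃ ωs : ℝ, ∀ ω : ℝ, h ω ≤ h ωs := by
  set W : ℝ := |ω₀| + |a| + 1 + 2 * (K + 1) / h ω₀ with hW
  have hq : 0 ≤ 2 * (K + 1) / h ω₀ := by positivity
  have haa : a ≤ |a| := le_abs_self a
  have haa' : -|a| ≤ a := neg_abs_le a
  have hWpos : 0 < W := by positivity
  have hIcc : IsCompact (Set.Icc (-W) W) := isCompact_Icc
  have hmem : ω₀ ∈ Set.Icc (-W) W := by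
    constructor
    · have := neg_abs_le ω₀
      simp only [hW]; linarith [abs_nonneg a]
    · have := le_abs_self ω₀
      simp only [hW]; linarith [abs_nonneg a]
  obtain ⟨ωs, _, hmax'⟩ := hIcc.exists_isMaxOn ⟨ω₀, hmem⟩ hc.continuousOn
  have hmax : ∀ ω ∈ Set.Icc (-W) W, h ω ≤ h ωs := hmax'
  refine ⟨ωs, fun ω => ?_⟩
  by_cases hω : ω ∈ Set.Icc (-W) W
  · exact hmax ω hω
  · have habs : W < |ω| := by
      rcases abs_cases ω with ⟨he, _⟩ | ⟨he, _⟩ <;>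
        [skip; skip] <;> (simp only [Set.mem_Icc, not_and_or, not_le] at hω; rcases hω with h1 | h1 <;> linarith)
    have ha : a < |ω| := by
      have h2 : a ≤ W := by simp only [hW]; linarith [abs_nonneg ω₀]
      linarith
    have hb := hbd ω ha
    have htpos : 0 < |ω| - a := sub_pos.mpr ha
    have hlt : K / (|ω| - a) < h ω₀ := by
      rw [div_lt_iff₀ htpos]
      have h1 : 2 * (K + 1) / h ω₀ < |ω| - a := by
        have habs' : |ω₀| + |a| + 1 + 2 * (K + 1) / h ω₀ < |ω| := by rw [← hW]; exact habs
        linarith [abs_nonneg ω₀]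
      rw [div_lt_iff₀ h0] at h1
      nlinarith
    have := hmax ω₀ hmem
    linarith

lemma sNorm_zero {p q : ℕ} : sNorm (0 : Matrix (Fin p) (Fin q) ℂ) = 0 := by
  simp [sNorm]

end SRaux


open SRaux in
/-- For an asymptotically stable DH system `(J − R)Q`, the unstructured restricted stability
radius with respect to perturbations of `Q` is the reciprocal of `sup_ω ‖G_Q(ω)‖₂`, where
`G_Q(ω) = C (iω I − (J−R)Q)⁻¹ (J−R) B`; the perturbation set is nonempty iff `G_Q` is not
identically zero. -/
theorem unstructured_stability_radius_Q
    {n m p : ℕ}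
    (J R Q : Matrix (Fin n) (Fin n) ℂ)
    (hJ : Jᴴ = -J) (hR : R.PosSemidef) (hQ : Q.PosDef)
    (hstab : ∀ μ : ℂ, ((J - R) * Q - μ • 1).det = 0 → μ.re < 0)
    (B : Matrix (Fin n) (Fin m) ℂ) (C : Matrix (Fin p) (Fin n) ℂ)
    (GQ : ℝ → Matrix (Fin p) (Fin m) ℂ)
    (hGQ : ∀ ω : ℝ, GQ ω =
      C * ((Complex.I * (ω : ℂ)) • (1 : Matrix (Fin n) (Fin n) ℂ) - (J - R) * Q)⁻¹
        * ((J - R) * B))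
    (SQ : Set ℝ)
    (hSQ : SQ = {x | ∃ Δ : Matrix (Fin m) (Fin p) ℂ, sNorm Δ = x ∧
      ∃ μ : ℂ, μ.re = 0 ∧ ((J - R) * (Q + B * Δ * C) - μ • 1).det = 0}) :
    (SQ.Nonempty ↔ ∃ ω : ℝ, GQ ω ≠ 0) ∧
    (SQ.Nonempty →
      BddAbove (Set.range fun ω : ℝ => sNorm (GQ ω)) ∧
      0 < (⨆ ω : ℝ, sNorm (GQ ω)) ∧
      sInf SQ = (⨆ ω : ℝ, sNorm (GQ ω))⁻¹) := by
  set A : Matrix (Fin n) (Fin n) ℂ := (J - R) * Q with hAdef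
  set D : Matrix (Fin n) (Fin m) ℂ := (J - R) * B with hDdef
  set F : ℝ → Matrix (Fin n) (Fin n) ℂ :=
    fun ω => (Complex.I * (ω : ℂ)) • (1 : Matrix (Fin n) (Fin n) ℂ) - A with hFdef
  -- the resolvent is invertible on the imaginary axis
  have hIre : ∀ ω : ℝ, (Complex.I * (ω : ℂ)).re = 0 := by
    intro ω; simp [Complex.mul_re]
  have hdet : ∀ ω : ℝ, (F ω).det ≠ 0 := by
    intro ω h
    have h2 : (A - (Complex.I * (ω : ℂ)) • 1).det = 0 := by
      have : A - (Complex.I * (ω : ℂ)) • 1 = -(F ω) := by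
        rw [hFdef]; simp
      rw [this, Matrix.det_neg, h, mul_zero]
    have := hstab (Complex.I * (ω : ℂ)) h2
    rw [hIre ω] at this
    exact lt_irrefl 0 this
  have hGF : ∀ ω : ℝ, GQ ω = C * (F ω)⁻¹ * D := hGQ
  -- key determinant equivalence
  have key : ∀ (Δ : Matrix (Fin m) (Fin p) ℂ) (ω : ℝ),
      (((J - R) * (Q + B * Δ * C) - (Complex.I * (ω : ℂ)) • 1).det = 0 ↔
        (1 - Δ * GQ ω).det = 0) := by
    intro Δ ω
    have h1 : (J - R) * (Q + B * Δ * C) = A + D * Δ * C := by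
      rw [Matrix.mul_add, hAdef, hDdef]
      simp [Matrix.mul_assoc]
    have expand : (J - R) * (Q + B * Δ * C) - (Complex.I * (ω : ℂ)) • 1
        = -(F ω - D * Δ * C) := by
      simp only [h1, hFdef, neg_sub]
      abel
    rw [expand, Matrix.det_neg, mul_eq_zero,
      or_iff_right (pow_ne_zero _ (neg_ne_zero.mpr (one_ne_zero : (1:ℂ) ≠ 0))),
      det_perturb (F ω) (hdet ω) D C Δ, ← hGF ω]
  -- continuity
  have hFc : Continuous F := by
    rw [hFdef]
    exact (((continuous_const : Continuous fun _ : ℝ => Complex.I).mul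
      Complex.continuous_ofReal).smul continuous_const).sub continuous_const
  have hinvc : Continuous fun ω : ℝ => (F ω)⁻¹ := by
    have : (fun ω : ℝ => (F ω)⁻¹) = fun ω => ((F ω).det)⁻¹ • (F ω).adjugate := by
      funext ω; rw [Matrix.inv_def]; congr 1; exact Ring.inverse_eq_inv _
    rw [this]
    exact (hFc.matrix_det.inv₀ hdet).smul hFc.matrix_adjugate
  have hcont : Continuous fun ω : ℝ => sNorm (GQ ω) := by
    have hGc : Continuous fun ω : ℝ => GQ ω := by
      have : (fun ω : ℝ => GQ ω) = fun ω => C * (F ω)⁻¹ * D := funext hGF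
      rw [this]
      exact (continuous_const.matrix_mul hinvc).matrix_mul continuous_const
    exact continuous_sNorm.comp hGc
  -- decay bound
  have hdecay : ∀ ω : ℝ, sNorm A < |ω| →
      sNorm (GQ ω) ≤ (sNorm C * sNorm D) / (|ω| - sNorm A) := by
    intro ω hω
    have hpos : 0 < |ω| - sNorm A := sub_pos.mpr hω
    have h1 : sNorm (GQ ω) ≤ sNorm (C * (F ω)⁻¹) * sNorm D := by
      rw [hGF ω]; exact sNorm_mul_le _ _
    have h2 : sNorm (C * (F ω)⁻¹) ≤ sNorm C * sNorm ((F ω)⁻¹) := sNorm_mul_le _ _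
    have h3 : sNorm ((F ω)⁻¹) ≤ (|ω| - sNorm A)⁻¹ := by
      simp only [hFdef]
      exact resolvent_bound A ω (by simpa [hFdef] using hdet ω) hω
    have hC : (0:ℝ) ≤ sNorm C := sNorm_nonneg C
    have hD : (0:ℝ) ≤ sNorm D := sNorm_nonneg D
    have hF0 : (0:ℝ) ≤ sNorm ((F ω)⁻¹) := sNorm_nonneg _
    have hCF : (0:ℝ) ≤ sNorm (C * (F ω)⁻¹) := sNorm_nonneg _
    calc sNorm (GQ ω) ≤ sNorm (C * (F ω)⁻¹) * sNorm D := h1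
      _ ≤ (sNorm C * sNorm ((F ω)⁻¹)) * sNorm D := mul_le_mul_of_nonneg_right h2 hD
      _ ≤ (sNorm C * (|ω| - sNorm A)⁻¹) * sNorm D :=
          mul_le_mul_of_nonneg_right (mul_le_mul_of_nonneg_left h3 hC) hD
      _ = (sNorm C * sNorm D) / (|ω| - sNorm A) := by ring
  -- every element of SQ yields a nonzero GQ value and lower bound
  have lower : ∀ x ∈ SQ, ∃ ω : ℝ, GQ ω ≠ 0 ∧ 1 ≤ x * sNorm (GQ ω) ∧ 0 ≤ x := by
    intro x hx
    rw [hSQ] at hx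
    obtain ⟨Δ, hΔx, μ, hμre, hμdet⟩ := hx
    have hμ : μ = Complex.I * (μ.im : ℝ) := by
      apply Complex.ext <;> simp [hμre]
    rw [hμ] at hμdet
    have hdet0 : (1 - Δ * GQ μ.im).det = 0 := (key Δ μ.im).mp hμdet
    refine ⟨μ.im, ?_, ?_, ?_⟩
    · intro hc
      rw [hc, Matrix.mul_zero, sub_zero, Matrix.det_one] at hdet0
      exact one_ne_zero hdet0
    · rw [← hΔx]; exact one_le_of_det_zero Δ (GQ μ.im) hdet0
    · rw [← hΔx]; exact sNorm_nonneg Δ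
  -- membership construction
  have mem_of : ∀ ω : ℝ, GQ ω ≠ 0 → (sNorm (GQ ω))⁻¹ ∈ SQ := by
    intro ω hω
    obtain ⟨Δ, hΔn, hΔdet⟩ := exists_Delta (GQ ω) hω
    rw [hSQ]
    exact ⟨Δ, hΔn, Complex.I * (ω : ℂ), hIre ω, (key Δ ω).mpr hΔdet⟩
  have hiff : SQ.Nonempty ↔ ∃ ω : ℝ, GQ ω ≠ 0 := by
    constructor
    · rintro ⟨x, hx⟩
      obtain ⟨ω, hω, _⟩ := lower x hx
      exact ⟨ω, hω⟩
    · rintro ⟨ω, hω⟩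
      exact ⟨_, mem_of ω hω⟩
  refine ⟨hiff, fun hne => ?_⟩
  obtain ⟨ω₀, hω₀⟩ := hiff.mp hne
  have h0 : 0 < sNorm (GQ ω₀) := sNorm_pos hω₀
  obtain ⟨ωs, hmax⟩ := sup_attained hcont (sNorm C * sNorm D) (sNorm A)
    (mul_nonneg (sNorm_nonneg C) (sNorm_nonneg D)) hdecay ω₀ h0
  have hbdd : BddAbove (Set.range fun ω : ℝ => sNorm (GQ ω)) := by
    refine ⟨sNorm (GQ ωs), ?_⟩
    rintro _ ⟨ω, rfl⟩
    exact hmax ω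
  have hsup : (⨆ ω : ℝ, sNorm (GQ ω)) = sNorm (GQ ωs) :=
    le_antisymm (ciSup_le hmax) (le_ciSup hbdd ωs)
  have hMpos : 0 < sNorm (GQ ωs) := lt_of_lt_of_le h0 (hmax ω₀)
  have hGωs : GQ ωs ≠ 0 := by
    intro hc
    rw [hc, sNorm_zero] at hMpos
    exact lt_irrefl 0 hMpos
  refine ⟨hbdd, ?_, ?_⟩
  · rw [hsup]; exact hMpos
  · rw [hsup]
    apply le_antisymm
    · exact csInf_le ⟨(sNorm (GQ ωs))⁻¹, fun x hx => by
        obtain ⟨ω, _, h1, hx0⟩ := lower x hx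
        have hGω : sNorm (GQ ω) ≤ sNorm (GQ ωs) := hmax ω
        rw [inv_eq_one_div, div_le_iff₀ hMpos]
        nlinarith⟩ (mem_of ωs hGωs)
    · apply le_csInf hne
      intro x hx
      obtain ⟨ω, _, h1, hx0⟩ := lower x hx
      have hGω : sNorm (GQ ω) ≤ sNorm (GQ ωs) := hmax ω
      rw [inv_eq_one_div, div_le_iff₀ hMpos]
      nlinarith
end

section
/- Let H₀, H₁ ∈ ℂ^{m×m} be Hermitian matrices and suppose H₁ is indefinite, i.e., H₁ has both a positive eigenvalue and a negative eigenvalue. Then the supremum over t ∈ ℝ of λ_min(H₀ + t·H₁) is finite and is attained: there exists t* ∈ ℝ with λ_min(H₀ + t*·H₁) = sup_{t∈ℝ} λ_min(H₀ + t·H₁). -/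
open Matrix
open scoped ComplexOrder

/-- Smallest (real) eigenvalue of a Hermitian complex matrix, as the infimum of the real
roots of its characteristic polynomial. -/
noncomputable def lambdaMin {m : ℕ} (H : Matrix (Fin m) (Fin m) ℂ) : ℝ :=
  sInf {r : ℝ | (H - (r : ℂ) • 1).det = 0}

section Aux

variable {m : ℕ}

/-- Squared norm of a vector. -/
private noncomputable def nsq (x : Fin m → ℂ) : ℝ := ∑ i, Complex.normSq (x i)

private lemma nsq_pos {x : Fin m → ℂ} (hx : x ≠ 0) : 0 < nsq x := by
  obtain ⟨i, hi⟩ : ∃ i, x i ≠ 0 := by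
    by_contra h'; push_neg at h'; exact hx (funext h')
  exact Finset.sum_pos' (fun j _ => Complex.normSq_nonneg _)
    ⟨i, Finset.mem_univ i, Complex.normSq_pos.mpr hi⟩

private lemma dot_self (x : Fin m → ℂ) : star x ⬝ᵥ x = (nsq x : ℂ) := by
  simp only [dotProduct, Pi.star_apply, nsq]
  push_cast
  refine Finset.sum_congr rfl fun i _ => ?_
  rw [Complex.normSq_eq_conj_mul_self, RCLike.star_def]

private lemma det_sub_smul {A : Matrix (Fin m) (Fin m) ℂ} (hA : A.IsHermitian) (r : ℝ) :
    (A - (r : ℂ) • 1).det = ∏ i, ((hA.eigenvalues i : ℂ) - r) := by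
  set U : Matrix (Fin m) (Fin m) ℂ := (hA.eigenvectorUnitary : Matrix (Fin m) (Fin m) ℂ) with hUdef
  have hU : U * star U = 1 := Matrix.mem_unitaryGroup_iff.mp hA.eigenvectorUnitary.2
  have key : A - (r : ℂ) • 1 =
      U * (diagonal (fun i => (hA.eigenvalues i : ℂ) - r)) * star U := by
    conv_lhs => rw [hA.spectral_theorem, Unitary.conjStarAlgAut_apply, ← hUdef]
    have h1 : ((r : ℂ) • (1 : Matrix (Fin m) (Fin m) ℂ)) = U * ((r : ℂ) • 1) * star U := by
      rw [Matrix.mul_smul, Matrix.mul_one, Matrix.smul_mul, hU]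
    rw [h1]
    rw [← Matrix.sub_mul, ← Matrix.mul_sub]
    congr 1
    congr 1
    rw [smul_one_eq_diagonal, diagonal_sub]
    rfl
  rw [key, det_mul_right_comm, hU, one_mul, det_diagonal]

private lemma root_set {A : Matrix (Fin m) (Fin m) ℂ} (hA : A.IsHermitian) :
    {r : ℝ | (A - (r : ℂ) • 1).det = 0} = Set.range hA.eigenvalues := by
  ext r
  simp only [Set.mem_setOf_eq, det_sub_smul hA, Finset.prod_eq_zero_iff, sub_eq_zero,
    Set.mem_range]
  constructor
  · rintro ⟨i, -, hi⟩; exact ⟨i, by exact_mod_cast hi⟩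
  · rintro ⟨i, hi⟩; exact ⟨i, Finset.mem_univ i, by exact_mod_cast congrArg (Complex.ofReal) hi⟩

private lemma lambdaMin_is_eigen {A : Matrix (Fin m) (Fin m) ℂ} (hA : A.IsHermitian)
    (hm : 0 < m) :
    (∃ i, hA.eigenvalues i = lambdaMin A) ∧ ∀ i, lambdaMin A ≤ hA.eigenvalues i := by
  haveI : Nonempty (Fin m) := ⟨⟨0, hm⟩⟩
  have hfin : (Set.range hA.eigenvalues).Finite := Set.finite_range _
  have hne : (Set.range hA.eigenvalues).Nonempty := Set.range_nonempty _
  unfold lambdaMin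
  rw [root_set hA]
  exact ⟨hne.csInf_mem hfin, fun i => csInf_le hfin.bddBelow ⟨i, rfl⟩⟩

private lemma rayleigh_lower {A : Matrix (Fin m) (Fin m) ℂ} (hA : A.IsHermitian) (hm : 0 < m)
    (x : Fin m → ℂ) : lambdaMin A * nsq x ≤ (star x ⬝ᵥ (A *ᵥ x)).re := by
  set l := lambdaMin A with hl
  have hherm : (A - (l : ℂ) • 1).IsHermitian := by
    refine hA.sub ?_
    unfold Matrix.IsHermitian
    rw [conjTranspose_smul, conjTranspose_one, RCLike.star_def, Complex.conj_ofReal]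
  have hpsd : (A - (l : ℂ) • 1).PosSemidef := by
    apply hherm.posSemidef_iff_eigenvalues_nonneg.mpr
    intro i
    have h1 : hherm.eigenvalues i ∈ {r : ℝ | ((A - (l : ℂ) • 1) - (r : ℂ) • 1).det = 0} := by
      rw [root_set hherm]; exact ⟨i, rfl⟩
    have h2 : (A - ((l + hherm.eigenvalues i : ℝ) : ℂ) • 1).det = 0 := by
      have : A - ((l + hherm.eigenvalues i : ℝ) : ℂ) • 1
          = (A - (l : ℂ) • 1) - ((hherm.eigenvalues i : ℝ) : ℂ) • 1 := by
        push_cast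
        rw [add_smul]
        abel
      rw [this]
      exact h1
    have h3 : (l + hherm.eigenvalues i) ∈ Set.range hA.eigenvalues := by
      rw [← root_set hA]; exact h2
    obtain ⟨j, hj⟩ := h3
    have h4 := (lambdaMin_is_eigen hA hm).2 j
    rw [hj] at h4
    rw [Pi.zero_apply]
    linarith
  have h0 := hpsd.re_dotProduct_nonneg x
  have hexp : star x ⬝ᵥ ((A - (l : ℂ) • 1) *ᵥ x)
      = star x ⬝ᵥ (A *ᵥ x) - ((l * nsq x : ℝ) : ℂ) := by
    rw [sub_mulVec, dotProduct_sub, smul_mulVec, one_mulVec, dotProduct_smul,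
      smul_eq_mul, dot_self]
    push_cast
    ring
  rw [hexp] at h0
  simp only [RCLike.re_to_complex, Complex.sub_re, Complex.ofReal_re] at h0
  linarith

private lemma exists_min_eigenvector {A : Matrix (Fin m) (Fin m) ℂ} (hA : A.IsHermitian)
    (hm : 0 < m) :
    ∃ v : Fin m → ℂ, v ≠ 0 ∧ A *ᵥ v = (lambdaMin A : ℂ) • v := by
  obtain ⟨⟨i, hi⟩, -⟩ := lambdaMin_is_eigen hA hm
  refine ⟨(WithLp.equiv 2 ((i : Fin m) → ℂ)) (hA.eigenvectorBasis i), ?_, ?_⟩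
  · intro h
    have hne := hA.eigenvectorBasis.toBasis.ne_zero i
    apply hne
    rw [OrthonormalBasis.coe_toBasis]
    apply (WithLp.equiv 2 ((i : Fin m) → ℂ)).injective
    simpa using h
  · have h := hA.mulVec_eigenvectorBasis i
    rw [WithLp.equiv_apply, h, hi]
    funext j
    simp [Pi.smul_apply, Complex.real_smul]

private lemma quad_of_eigen {B : Matrix (Fin m) (Fin m) ℂ} {v : Fin m → ℂ} {μ : ℝ}
    (h : B *ᵥ v = (μ : ℂ) • v) : (star v ⬝ᵥ (B *ᵥ v)).re = μ * nsq v := by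
  rw [h, dotProduct_smul, smul_eq_mul, dot_self]
  push_cast
  simp

end Aux

set_option maxHeartbeats 1000000 in
/-- If `H₁` is an indefinite Hermitian matrix, then `sup_{t ∈ ℝ} λ_min(H₀ + t H₁)` is finite
and attained at some `t*`. -/
theorem sup_lambdaMin_attained_of_indefinite
    {m : ℕ} (H0 H1 : Matrix (Fin m) (Fin m) ℂ)
    (hH0 : H0ᴴ = H0) (hH1 : H1ᴴ = H1)
    (hpos : ∃ a : ℝ, 0 < a ∧ (H1 - (a : ℂ) • 1).det = 0)
    (hneg : ∃ b : ℝ, b < 0 ∧ (H1 - (b : ℂ) • 1).det = 0) :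
    ∃ tstar : ℝ,
      lambdaMin (H0 + (tstar : ℂ) • H1) = (⨆ t : ℝ, lambdaMin (H0 + (t : ℂ) • H1)) ∧
      ∀ t : ℝ, lambdaMin (H0 + (t : ℂ) • H1) ≤ lambdaMin (H0 + (tstar : ℂ) • H1) := by
  obtain ⟨a, ha, hadet⟩ := hpos
  obtain ⟨b, hb, hbdet⟩ := hneg
  rcases Nat.eq_zero_or_pos m with hm0 | hm
  · exfalso
    subst hm0
    rw [Matrix.det_isEmpty] at hadet
    exact one_ne_zero hadet
  -- Hermitian-ness of the pencil
  have hHt : ∀ t : ℝ, (H0 + (t : ℂ) • H1).IsHermitian := by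
    intro t
    unfold Matrix.IsHermitian
    rw [conjTranspose_add, conjTranspose_smul, hH0, hH1, RCLike.star_def, Complex.conj_ofReal]
  have hH1h : H1.IsHermitian := hH1
  set f : ℝ → ℝ := fun t => lambdaMin (H0 + (t : ℂ) • H1) with hf
  -- eigenvectors of H1 for a and b
  obtain ⟨va, hva0, hva⟩ : ∃ v : Fin m → ℂ, v ≠ 0 ∧ H1 *ᵥ v = (a : ℂ) • v := by
    obtain ⟨v, hv0, hv⟩ := (Matrix.exists_mulVec_eq_zero_iff).mpr hadet
    refine ⟨v, hv0, ?_⟩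
    rw [sub_mulVec, smul_mulVec, one_mulVec, sub_eq_zero] at hv
    exact hv
  obtain ⟨vb, hvb0, hvb⟩ : ∃ v : Fin m → ℂ, v ≠ 0 ∧ H1 *ᵥ v = (b : ℂ) • v := by
    obtain ⟨v, hv0, hv⟩ := (Matrix.exists_mulVec_eq_zero_iff).mpr hbdet
    refine ⟨v, hv0, ?_⟩
    rw [sub_mulVec, smul_mulVec, one_mulVec, sub_eq_zero] at hv
    exact hv
  have hna : 0 < nsq va := nsq_pos hva0
  have hnb : 0 < nsq vb := nsq_pos hvb0
  -- coercive upper bounds: f t ≤ ca + t * a and f t ≤ cb + t * b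
  set ca : ℝ := (star va ⬝ᵥ (H0 *ᵥ va)).re / nsq va with hca
  set cb : ℝ := (star vb ⬝ᵥ (H0 *ᵥ vb)).re / nsq vb with hcb
  have bound_a : ∀ t : ℝ, f t ≤ ca + t * a := by
    intro t
    have h1 := rayleigh_lower (hHt t) hm va
    have h2 : star va ⬝ᵥ ((H0 + (t : ℂ) • H1) *ᵥ va)
        = star va ⬝ᵥ (H0 *ᵥ va) + (t : ℂ) * (star va ⬝ᵥ (H1 *ᵥ va)) := by
      rw [add_mulVec, dotProduct_add, smul_mulVec, dotProduct_smul, smul_eq_mul]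
    have h3 : (star va ⬝ᵥ (H1 *ᵥ va)).re = a * nsq va := quad_of_eigen hva
    have h4 : (star va ⬝ᵥ (H1 *ᵥ va)).im = 0 := by
      rw [hva, dotProduct_smul, smul_eq_mul, dot_self]
      push_cast
      simp
    have h5 : (star va ⬝ᵥ ((H0 + (t : ℂ) • H1) *ᵥ va)).re
        = (star va ⬝ᵥ (H0 *ᵥ va)).re + t * (a * nsq va) := by
      rw [h2]
      simp only [Complex.add_re, Complex.mul_re, Complex.ofReal_re, Complex.ofReal_im]
      rw [h3, h4]
      ring
    rw [h5] at h1
    rw [hca]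
    rw [div_add' _ _ _ (ne_of_gt hna), le_div_iff₀ hna]
    nlinarith
  have bound_b : ∀ t : ℝ, f t ≤ cb + t * b := by
    intro t
    have h1 := rayleigh_lower (hHt t) hm vb
    have h2 : star vb ⬝ᵥ ((H0 + (t : ℂ) • H1) *ᵥ vb)
        = star vb ⬝ᵥ (H0 *ᵥ vb) + (t : ℂ) * (star vb ⬝ᵥ (H1 *ᵥ vb)) := by
      rw [add_mulVec, dotProduct_add, smul_mulVec, dotProduct_smul, smul_eq_mul]
    have h3 : (star vb ⬝ᵥ (H1 *ᵥ vb)).re = b * nsq vb := quad_of_eigen hvb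
    have h4 : (star vb ⬝ᵥ (H1 *ᵥ vb)).im = 0 := by
      rw [hvb, dotProduct_smul, smul_eq_mul, dot_self]
      push_cast
      simp
    have h5 : (star vb ⬝ᵥ ((H0 + (t : ℂ) • H1) *ᵥ vb)).re
        = (star vb ⬝ᵥ (H0 *ᵥ vb)).re + t * (b * nsq vb) := by
      rw [h2]
      simp only [Complex.add_re, Complex.mul_re, Complex.ofReal_re, Complex.ofReal_im]
      rw [h3, h4]
      ring
    rw [h5] at h1
    rw [hcb]
    rw [div_add' _ _ _ (ne_of_gt hnb), le_div_iff₀ hnb]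
    nlinarith
  -- Lipschitz-type bound
  have hH1neg : (-H1).IsHermitian := by
    unfold Matrix.IsHermitian
    rw [conjTranspose_neg, hH1]
  set K : ℝ := max |lambdaMin H1| |lambdaMin (-H1)| with hK
  have hK0 : 0 ≤ K := le_trans (abs_nonneg _) (le_max_left _ _)
  have lip : ∀ s t : ℝ, f s ≤ f t + K * |s - t| := by
    intro s t
    obtain ⟨v, hv0, hv⟩ := exists_min_eigenvector (hHt t) hm
    have hn : 0 < nsq v := nsq_pos hv0
    -- the quadratic form of H1 at v
    set r1 : ℝ := (star v ⬝ᵥ (H1 *ᵥ v)).re with hr1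
    have hrlo : lambdaMin H1 * nsq v ≤ r1 := rayleigh_lower hH1h hm v
    have hrhi : lambdaMin (-H1) * nsq v ≤ -r1 := by
      have := rayleigh_lower hH1neg hm v
      rwa [neg_mulVec, dotProduct_neg, Complex.neg_re] at this
    have habs : |r1| ≤ K * nsq v := by
      rw [abs_le]
      constructor
      · have h1 : -(K * nsq v) ≤ lambdaMin H1 * nsq v := by
          have : -K ≤ lambdaMin H1 := by
            have := le_max_left |lambdaMin H1| |lambdaMin (-H1)|
            rw [hK]
            cases' abs_cases (lambdaMin H1) with h h <;> nlinarith [le_max_left |lambdaMin H1| |lambdaMin (-H1)|]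
          nlinarith
        linarith
      · have h1 : lambdaMin (-H1) * nsq v ≥ -(K * nsq v) := by
          have : -K ≤ lambdaMin (-H1) := by
            cases' abs_cases (lambdaMin (-H1)) with h h <;> nlinarith [le_max_right |lambdaMin H1| |lambdaMin (-H1)|]
          nlinarith
        linarith
    -- f s * nsq v ≤ f t * nsq v + (s - t) * r1
    have h1 := rayleigh_lower (hHt s) hm v
    have h2 : H0 + (s : ℂ) • H1 = (H0 + (t : ℂ) • H1) + ((s - t : ℝ) : ℂ) • H1 := by
      push_cast
      rw [sub_smul]
      abel
    have h3 : (star v ⬝ᵥ ((H0 + (s : ℂ) • H1) *ᵥ v)).re = f t * nsq v + (s - t) * r1 := by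
      rw [h2, add_mulVec, dotProduct_add, Complex.add_re]
      congr 1
      · exact quad_of_eigen hv
      · rw [smul_mulVec, dotProduct_smul, smul_eq_mul]
        rw [Complex.re_ofReal_mul]
    rw [h3] at h1
    have h4 : (s - t) * r1 ≤ |s - t| * (K * nsq v) := by
      calc (s - t) * r1 ≤ |(s - t) * r1| := le_abs_self _
      _ = |s - t| * |r1| := abs_mul _ _
      _ ≤ |s - t| * (K * nsq v) := by
        apply mul_le_mul_of_nonneg_left habs (abs_nonneg _)
    have h5 : f s * nsq v ≤ (f t + K * |s - t|) * nsq v := by nlinarith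
    exact le_of_mul_le_mul_right (by linarith [h5]) hn
  -- continuity of f
  have hcont : Continuous f := by
    have : LipschitzWith (Real.toNNReal K) f := by
      apply LipschitzWith.of_dist_le_mul
      intro s t
      rw [Real.dist_eq, Real.dist_eq, Real.coe_toNNReal K hK0]
      rw [abs_sub_le_iff]
      constructor
      · linarith [lip s t]
      · have := lip t s
        rw [abs_sub_comm] at this
        linarith
    exact this.continuous
  -- choose the compact window
  set Ta : ℝ := (f 0 - ca) / a - 1 with hTa
  set Tb : ℝ := (f 0 - cb) / b + 1 with hTb
  have hlo : ∀ t : ℝ, t < Ta → f t < f 0 := by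
    intro t ht
    have h2 : t * a < f 0 - ca := by
      apply (lt_div_iff₀ ha).mp
      rw [hTa] at ht
      linarith
    linarith [bound_a t]
  have hhi : ∀ t : ℝ, Tb < t → f t < f 0 := by
    intro t ht
    have h2 : t * b < f 0 - cb := by
      apply (div_lt_iff_of_neg hb).mp
      rw [hTb] at ht
      linarith
    linarith [bound_b t]
  set lo : ℝ := min Ta 0 with hlodef
  set hi : ℝ := max Tb 0 with hhidef
  have hlohi : lo ≤ hi := le_trans (min_le_right _ _) (le_max_right _ _)
  have h0mem : (0 : ℝ) ∈ Set.Icc lo hi := ⟨min_le_right _ _, le_max_right _ _⟩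
  obtain ⟨tstar, htmem, htmax⟩ :=
    (isCompact_Icc (a := lo) (b := hi)).exists_isMaxOn ⟨0, h0mem⟩ hcont.continuousOn
  have hmax : ∀ t : ℝ, f t ≤ f tstar := by
    intro t
    by_cases htin : t ∈ Set.Icc lo hi
    · exact htmax htin
    · have hf0 : f 0 ≤ f tstar := htmax h0mem
      simp only [Set.mem_Icc, not_and_or, not_le] at htin
      rcases htin with h | h
      · have : t < Ta := lt_of_lt_of_le h (min_le_left _ _)
        linarith [hlo t this]
      · have : Tb < t := lt_of_le_of_lt (le_max_left _ _) h
        linarith [hhi t this]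
  refine ⟨tstar, ?_, hmax⟩
  have hbdd : BddAbove (Set.range f) := ⟨f tstar, by rintro y ⟨t, rfl⟩; exact hmax t⟩
  exact le_antisymm (le_ciSup hbdd tstar) (ciSup_le hmax)
end

section
/- (Right tangential interpolation.) Let Ã ∈ ℂ^{n×n}, B̃ ∈ ℂ^{n×m}, C̃ ∈ ℂ^{p×n}, and let V_k, W_k ∈ ℂ^{n×k} satisfy W_kᴴ V_k = I_k. Define Ã_k := W_kᴴ Ã V_k, B̃_k := W_kᴴ B̃, C̃_k := C̃ V_k. Let ŝ ∈ ℂ and b̂ ∈ ℂ^m be such that ŝ·I_n − Ã and ŝ·I_k − Ã_k are invertible, and suppose (ŝ·I_n − Ã)^{−ℓ} B̃ b̂ lies in the column space of V_k for ℓ = 1, …, N. Then C̃ (ŝ·I_n − Ã)^{−(ℓ+1)} B̃ b̂ = C̃_k (ŝ·I_k − Ã_k)^{−(ℓ+1)} B̃_k b̂ for ℓ = 0, …, N−1; equivalently, the transfer functions G(s) := C̃(sI−Ã)⁻¹B̃ and G_k(s) := C̃_k(sI−Ã_k)⁻¹B̃_k satisfy G^{(ℓ)}(ŝ) b̂ =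 G_k^{(ℓ)}(ŝ) b̂ for ℓ = 0, …, N−1. -/
open Matrix

/-- Right tangential interpolation: if the Krylov-type vectors `(ŝI − Ã)^{−ℓ} B̃ b̂`
(`ℓ = 1, …, N`) lie in the column space of `V_k` and `W_kᴴ V_k = I`, then the transfer
functions of the full and the Petrov–Galerkin reduced systems agree, together with their
first `N − 1` derivatives, in the direction `b̂` at `ŝ`. -/
theorem right_tangential_interpolation
    {n m p k N : ℕ}
    (A : Matrix (Fin n) (Fin n) ℂ) (B : Matrix (Fin n) (Fin m) ℂ)
    (C : Matrix (Fin p) (Fin n) ℂ)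
    (V W : Matrix (Fin n) (Fin k) ℂ) (hWV : Wᴴ * V = 1)
    (s : ℂ) (b : Fin m → ℂ)
    (hs : IsUnit ((s • (1 : Matrix (Fin n) (Fin n) ℂ) - A)).det)
    (hsk : IsUnit ((s • (1 : Matrix (Fin k) (Fin k) ℂ) - Wᴴ * A * V)).det)
    (hincl : ∀ ℓ : ℕ, 1 ≤ ℓ → ℓ ≤ N →
      ∃ c : Fin k → ℂ,
        V *ᵥ c = ((s • (1 : Matrix (Fin n) (Fin n) ℂ) - A)⁻¹ ^ ℓ) *ᵥ (B *ᵥ b)) :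
    ∀ ℓ : ℕ, ℓ < N →
      C *ᵥ (((s • (1 : Matrix (Fin n) (Fin n) ℂ) - A)⁻¹ ^ (ℓ + 1)) *ᵥ (B *ᵥ b)) =
      (C * V) *ᵥ (((s • (1 : Matrix (Fin k) (Fin k) ℂ) - Wᴴ * A * V)⁻¹ ^ (ℓ + 1)) *ᵥ
        ((Wᴴ * B) *ᵥ b)) := by
  set E : Matrix (Fin n) (Fin n) ℂ := s • 1 - A with hE
  set Ek : Matrix (Fin k) (Fin k) ℂ := s • 1 - Wᴴ * A * V with hEk
  have hEinv : E * E⁻¹ = 1 := mul_nonsing_inv _ hs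
  have hEkinv : Ek⁻¹ * Ek = 1 := nonsing_inv_mul _ hsk
  have hWEV : Wᴴ * E * V = Ek := by
    rw [hE, hEk, Matrix.mul_sub, Matrix.sub_mul, Matrix.mul_smul, Matrix.smul_mul,
      Matrix.mul_one, hWV]
  have hEx : ∀ x : Fin n → ℂ, E *ᵥ (E⁻¹ *ᵥ x) = x := fun x => by
    rw [mulVec_mulVec, hEinv, one_mulVec]
  have hEkx : ∀ x : Fin k → ℂ, Ek⁻¹ *ᵥ (Ek *ᵥ x) = x := fun x => by
    rw [mulVec_mulVec, hEkinv, one_mulVec]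
  have hWVx : ∀ x : Fin k → ℂ, Wᴴ *ᵥ (V *ᵥ x) = x := fun x => by
    rw [mulVec_mulVec, hWV, one_mulVec]
  have hWEVx : ∀ x : Fin k → ℂ, Wᴴ *ᵥ (E *ᵥ (V *ᵥ x)) = Ek *ᵥ x := fun x => by
    rw [mulVec_mulVec, mulVec_mulVec, hWEV]
  have key : ∀ ℓ : ℕ, 1 ≤ ℓ → ℓ ≤ N →
      V *ᵥ ((Ek⁻¹ ^ ℓ) *ᵥ ((Wᴴ * B) *ᵥ b)) = (E⁻¹ ^ ℓ) *ᵥ (B *ᵥ b) := by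
    intro ℓ h1
    induction ℓ, h1 using Nat.le_induction with
    | base =>
      intro hN
      obtain ⟨c, hc⟩ := hincl 1 le_rfl hN
      rw [pow_one] at hc ⊢
      have hBb : (Wᴴ * B) *ᵥ b = Ek *ᵥ c := by
        conv_lhs => rw [← mulVec_mulVec, ← hEx (B *ᵥ b), ← hc]
        exact hWEVx c
      rw [hBb, hEkx, hc, pow_one]
    | succ ℓ h1 ih =>
      intro hN
      have ihv := ih (le_of_lt hN)
      obtain ⟨c, hc⟩ := hincl (ℓ + 1) (by omega) hN
      have hEp : (E⁻¹ ^ ℓ) *ᵥ (B *ᵥ b) = E *ᵥ ((E⁻¹ ^ (ℓ + 1)) *ᵥ (B *ᵥ b)) := by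
        conv_rhs => rw [pow_succ', ← mulVec_mulVec, hEx]
      have hstep : (Ek⁻¹ ^ ℓ) *ᵥ ((Wᴴ * B) *ᵥ b) = Ek *ᵥ c := by
        rw [← hWVx ((Ek⁻¹ ^ ℓ) *ᵥ ((Wᴴ * B) *ᵥ b)), ihv, hEp, ← hc, hWEVx]
      rw [pow_succ', ← mulVec_mulVec, hstep, hEkx, hc]
  intro ℓ hℓ
  rw [← key (ℓ + 1) (by omega) (by omega), mulVec_mulVec]
end

section
/- (Left tangential interpolation.) Let Ã ∈ ℂ^{n×n}, B̃ ∈ ℂ^{n×m}, C̃ ∈ ℂ^{p×n}, and let V_k, W_k ∈ ℂ^{n×k} satisfy W_kᴴ V_k = I_k. Define Ã_k := W_kᴴ Ã V_k, B̃_k := W_kᴴ B̃, C̃_k := C̃ V_k. Let ŝ ∈ ℂ and ĉ ∈ ℂ^p be such that ŝ·I_n − Ã and ŝ·I_k − Ã_k are invertible, and suppose ( ĉᴴ C̃ (ŝ·I_n − Ã)^{−ℓ} )ᴴ lies in the column space of W_k for ℓ = 1, …, N. Then ĉᴴ C̃ (ŝ·I_n − Ã)^{−(ℓ+1)} B̃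 = ĉᴴ C̃_k (ŝ·I_k − Ã_k)^{−(ℓ+1)} B̃_k for ℓ = 0, …, N−1; equivalently, the transfer functions G(s) := C̃(sI−Ã)⁻¹B̃ and G_k(s) := C̃_k(sI−Ã_k)⁻¹B̃_k satisfy ĉᴴ G^{(ℓ)}(ŝ) = ĉᴴ G_k^{(ℓ)}(ŝ) for ℓ = 0, …, N−1. -/
open Matrix

/-- Left tangential interpolation: if the vectors `(ĉᴴ C̃ (ŝI − Ã)^{−ℓ})ᴴ` (`ℓ = 1, …, N`)
lie in the column space of `W_k` and `W_kᴴ V_k = I`, then the transfer functions of the full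
and the Petrov–Galerkin reduced systems agree, together with their first `N − 1` derivatives,
in the left direction `ĉ` at `ŝ`. -/
theorem left_tangential_interpolation
    {n m p k N : ℕ}
    (A : Matrix (Fin n) (Fin n) ℂ) (B : Matrix (Fin n) (Fin m) ℂ)
    (C : Matrix (Fin p) (Fin n) ℂ)
    (V W : Matrix (Fin n) (Fin k) ℂ) (hWV : Wᴴ * V = 1)
    (s : ℂ) (c : Fin p → ℂ)
    (hs : IsUnit ((s • (1 : Matrix (Fin n) (Fin n) ℂ) - A)).det)
    (hsk : IsUnit ((s • (1 : Matrix (Fin k) (Fin k) ℂ) - Wᴴ * A * V)).det)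
    (hincl : ∀ ℓ : ℕ, 1 ≤ ℓ → ℓ ≤ N →
      ∃ d : Fin k → ℂ,
        W *ᵥ d = star ((star c) ᵥ* (C * ((s • (1 : Matrix (Fin n) (Fin n) ℂ) - A)⁻¹ ^ ℓ)))) :
    ∀ ℓ : ℕ, ℓ < N →
      (star c) ᵥ* (C * ((s • (1 : Matrix (Fin n) (Fin n) ℂ) - A)⁻¹ ^ (ℓ + 1)) * B) =
      (star c) ᵥ* ((C * V) * ((s • (1 : Matrix (Fin k) (Fin k) ℂ) - Wᴴ * A * V)⁻¹ ^ (ℓ + 1))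
        * (Wᴴ * B)) := by
  set E : Matrix (Fin n) (Fin n) ℂ := s • (1 : Matrix (Fin n) (Fin n) ℂ) - A with hEdef
  set Ek : Matrix (Fin k) (Fin k) ℂ := s • (1 : Matrix (Fin k) (Fin k) ℂ) - Wᴴ * A * V
    with hEkdef
  have hE : E⁻¹ * E = 1 := nonsing_inv_mul E hs
  have hEk : Ek * Ek⁻¹ = 1 := mul_nonsing_inv Ek hsk
  have hWEV : Wᴴ * (E * V) = Ek := by
    rw [hEdef, hEkdef, ← Matrix.mul_assoc, Matrix.mul_sub, Matrix.sub_mul, Matrix.mul_smul,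
      Matrix.mul_one, Matrix.smul_mul, hWV]
  -- the resolvent power cancellation
  have hcancel : ∀ ℓ : ℕ, C * E⁻¹ ^ (ℓ + 1) * (E * V) = C * E⁻¹ ^ ℓ * V := by
    intro ℓ
    rw [pow_succ]
    simp only [Matrix.mul_assoc]
    rw [← Matrix.mul_assoc E⁻¹ E V, hE, Matrix.one_mul]
  -- key lemma
  have key : ∀ ℓ : ℕ, 1 ≤ ℓ → ℓ ≤ N →
      (star c) ᵥ* (C * E⁻¹ ^ ℓ) = (star c) ᵥ* (C * V * Ek⁻¹ ^ ℓ * Wᴴ) := by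
    intro ℓ h1 hN
    induction ℓ with
    | zero => omega
    | succ ℓ ih =>
      obtain ⟨d, hd⟩ := hincl (ℓ + 1) (by omega) hN
      have hr : (star d) ᵥ* Wᴴ = (star c) ᵥ* (C * E⁻¹ ^ (ℓ + 1)) := by
        have := congrArg star hd
        rwa [star_mulVec, star_star] at this
      have hdEk : (star d) ᵥ* Ek = (star c) ᵥ* (C * V * Ek⁻¹ ^ ℓ) := by
        have step1 : (star d) ᵥ* Ek = (star c) ᵥ* (C * E⁻¹ ^ ℓ) ᵥ* V := by
          rw [← hWEV, ← Matrix.vecMul_vecMul (star d) Wᴴ (E * V), hr,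
            Matrix.vecMul_vecMul, hcancel ℓ, ← Matrix.vecMul_vecMul]
        rcases Nat.eq_zero_or_pos ℓ with h0 | hpos
        · subst h0
          rw [step1]
          simp [Matrix.vecMul_vecMul]
        · rw [step1, ih hpos (by omega), Matrix.vecMul_vecMul,
            Matrix.mul_assoc (C * V * Ek⁻¹ ^ ℓ), hWV, Matrix.mul_one]
      have hdval : (star d : Fin k → ℂ) = (star c) ᵥ* (C * V * Ek⁻¹ ^ (ℓ + 1)) := by
        have h2 := congrArg (fun v => v ᵥ* Ek⁻¹) hdEk
        simp only [Matrix.vecMul_vecMul] at h2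
        rw [hEk, Matrix.vecMul_one, Matrix.mul_assoc, ← pow_succ] at h2
        exact h2
      rw [← hr, hdval, Matrix.vecMul_vecMul]
  intro ℓ hℓ
  have h := key (ℓ + 1) (by omega) (by omega)
  calc (star c) ᵥ* (C * E⁻¹ ^ (ℓ + 1) * B)
      = ((star c) ᵥ* (C * E⁻¹ ^ (ℓ + 1))) ᵥ* B := by
        rw [Matrix.vecMul_vecMul]
    _ = ((star c) ᵥ* (C * V * Ek⁻¹ ^ (ℓ + 1) * Wᴴ)) ᵥ* B := by rw [h]
    _ = (star c) ᵥ* (C * V * Ek⁻¹ ^ (ℓ + 1) * (Wᴴ * B)) := by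
        rw [Matrix.vecMul_vecMul, Matrix.mul_assoc]
end

section
/- (Structure-preserving right interpolation for DH systems.) Let (J,R,Q) be a DH triple of size n, B ∈ ℂ^{n×m}, C ∈ ℂ^{p×n}, ŝ ∈ ℂ with ŝ·I_n − (J−R)Q invertible, and b̂ ∈ ℂ^m. Let V_k ∈ ℂ^{n×k} have orthonormal columns (V_kᴴV_k = I_k) and suppose (ŝ·I_n − (J−R)Q)^{−ℓ} B b̂ lies in the column space of V_k for ℓ = 1, …, N. Set W_k := Q V_k (V_kᴴ Q V_k)⁻¹, J_k := W_kᴴ J W_k, R_k := W_kᴴ R W_k, Q_k := V_kᴴ Q V_k, B_k := W_kᴴ B, C_k := C W_k. Then: (i) J_k is skew-Hermitian, R_k is Hermitian positive semidefinite, and Q_k is Hermitian positive definite (so (J_k,R_k,Q_k) is a DH triple of size k); and (ii) if additionally ŝ·I_k − (J_k−R_k)Q_k is invertible, then C Q (ŝ·I_n − (J−R)Q)^{−(j+1)} B b̂ = C_k Q_k (ŝ·I_k − (J_k−R_k)Q_k)^{−(j+1)} B_k b̂ for j = 0, …, N−1; equivalently, G(s) := CQ(sI−(J−R)Q)⁻¹B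 and G_k(s) := C_kQ_k(sI−(J_k−R_k)Q_k)⁻¹B_k satisfy G^{(j)}(ŝ) b̂ = G_k^{(j)}(ŝ) b̂ for j = 0, …, N−1. -/
open Matrix
open scoped ComplexOrder

/-- Structure-preserving right tangential interpolation for DH systems: the Petrov–Galerkin
reduction with `W_k = Q V_k (V_kᴴ Q V_k)⁻¹` yields a reduced DH triple whose transfer
function Hermite-interpolates `G(s) = CQ(sI − (J−R)Q)⁻¹B` in the direction `b̂` at `ŝ`. -/
theorem structure_preserving_right_interpolation_DH
    {n m p k N : ℕ}
    (J R Q : Matrix (Fin n) (Fin n) ℂ)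
    (hJ : Jᴴ = -J) (hR : R.PosSemidef) (hQ : Q.PosDef)
    (B : Matrix (Fin n) (Fin m) ℂ) (C : Matrix (Fin p) (Fin n) ℂ)
    (s : ℂ) (hs : IsUnit ((s • (1 : Matrix (Fin n) (Fin n) ℂ) - (J - R) * Q)).det)
    (b : Fin m → ℂ)
    (V : Matrix (Fin n) (Fin k) ℂ) (hV : Vᴴ * V = 1)
    (hincl : ∀ ℓ : ℕ, 1 ≤ ℓ → ℓ ≤ N →
      ∃ c : Fin k → ℂ,
        V *ᵥ c = ((s • (1 : Matrix (Fin n) (Fin n) ℂ) - (J - R) * Q)⁻¹ ^ ℓ) *ᵥ (B *ᵥ b))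
    (W : Matrix (Fin n) (Fin k) ℂ) (hW : W = Q * V * (Vᴴ * Q * V)⁻¹)
    (Jk Rk Qk : Matrix (Fin k) (Fin k) ℂ)
    (hJk : Jk = Wᴴ * J * W) (hRk : Rk = Wᴴ * R * W) (hQk : Qk = Vᴴ * Q * V)
    (Bk : Matrix (Fin k) (Fin m) ℂ) (hBk : Bk = Wᴴ * B)
    (Ck : Matrix (Fin p) (Fin k) ℂ) (hCk : Ck = C * W) :
    (Jkᴴ = -Jk ∧ Rk.PosSemidef ∧ Qk.PosDef) ∧
    (IsUnit ((s • (1 : Matrix (Fin k) (Fin k) ℂ) - (Jk - Rk) * Qk)).det →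
      ∀ j : ℕ, j < N →
        (C * Q) *ᵥ (((s • (1 : Matrix (Fin n) (Fin n) ℂ) - (J - R) * Q)⁻¹ ^ (j + 1)) *ᵥ
          (B *ᵥ b)) =
        (Ck * Qk) *ᵥ (((s • (1 : Matrix (Fin k) (Fin k) ℂ) - (Jk - Rk) * Qk)⁻¹ ^ (j + 1)) *ᵥ
          (Bk *ᵥ b))) := by
  -- Abbreviations
  set A : Matrix (Fin n) (Fin n) ℂ := s • (1 : Matrix (Fin n) (Fin n) ℂ) - (J - R) * Q with hA
  -- V is injective on vectors
  have hVinj : ∀ x : Fin k → ℂ, V *ᵥ x = 0 → x = 0 := by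
    intro x hx
    have : Vᴴ *ᵥ (V *ᵥ x) = 0 := by rw [hx, mulVec_zero]
    rwa [mulVec_mulVec, hV, one_mulVec] at this
  -- Qk is positive definite
  have hQkdef : Qk.PosDef := by
    rw [hQk]
    refine Matrix.PosDef.of_dotProduct_mulVec_pos (isHermitian_conjTranspose_mul_mul V hQ.isHermitian) fun x hx => ?_
    have hVx : V *ᵥ x ≠ 0 := fun h => hx (hVinj x h)
    have := hQ.dotProduct_mulVec_pos hVx
    simpa only [star_mulVec, Matrix.mul_assoc, mulVec_mulVec, dotProduct_mulVec,
      vecMul_vecMul] using this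
  -- Qk Hermitian and invertible
  have hQkH : Qkᴴ = Qk := hQkdef.isHermitian
  have hQkU : IsUnit Qk := hQkdef.isUnit
  -- WᴴV = 1
  have hMH : (Vᴴ * Q * V)ᴴ = Vᴴ * Q * V := by rw [← hQk]; exact hQkH
  have hWH : Wᴴ = (Vᴴ * Q * V)⁻¹ * Vᴴ * Q := by
    rw [hW, conjTranspose_mul, conjTranspose_nonsing_inv, hMH, conjTranspose_mul,
      hQ.isHermitian.eq, ← Matrix.mul_assoc]
  have hMinv : (Vᴴ * Q * V)⁻¹ * (Vᴴ * Q * V) = 1 := by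
    apply nonsing_inv_mul
    have : IsUnit (Vᴴ * Q * V) := by rw [← hQk]; exact hQkU
    exact this.map detMonoidHom
  have hWV : Wᴴ * V = 1 := by
    have h := hMinv
    rw [hWH]
    simp only [Matrix.mul_assoc] at h ⊢
    exact h
  have hWM : W * (Vᴴ * Q * V) = Q * V := by
    rw [hW, Matrix.mul_assoc (Q * V), hMinv, Matrix.mul_one]
  -- structure preservation
  have hJkskew : Jkᴴ = -Jk := by
    rw [hJk, conjTranspose_mul, conjTranspose_mul, conjTranspose_conjTranspose, hJ]
    simp [Matrix.mul_assoc, Matrix.neg_mul, Matrix.mul_neg]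
  have hRkpsd : Rk.PosSemidef := by
    rw [hRk]; exact hR.conjTranspose_mul_mul_same W
  refine ⟨⟨hJkskew, hRkpsd, hQkdef⟩, ?_⟩
  -- interpolation part
  intro hsk j hjN
  set Ak : Matrix (Fin k) (Fin k) ℂ := s • (1 : Matrix (Fin k) (Fin k) ℂ) - (Jk - Rk) * Qk
    with hAkdef
  -- Ak = Wᴴ * A * V
  have h1 : (Jk - Rk) * Qk = Wᴴ * ((J - R) * Q) * V := by
    rw [hJk, hRk, hQk]
    have hsub : Wᴴ * J * W - Wᴴ * R * W = Wᴴ * (J - R) * W := by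
      rw [Matrix.mul_sub, Matrix.sub_mul]
    rw [hsub, Matrix.mul_assoc (Wᴴ * (J - R)) W, hWM]
    simp only [Matrix.mul_assoc]
  have hAkeq : Ak = Wᴴ * A * V := by
    have h2 : Wᴴ * A * V = Wᴴ * (s • (1 : Matrix (Fin n) (Fin n) ℂ)) * V - Wᴴ * ((J - R) * Q) * V := by
      rw [hA, Matrix.mul_sub Wᴴ, Matrix.sub_mul]
    rw [hAkdef, h1, h2, Matrix.mul_smul, Matrix.mul_one, Matrix.smul_mul, hWV]
  -- Ck * Qk = C * Q * V
  have hCkQk : Ck * Qk = C * Q * V := by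
    rw [hCk, hQk, Matrix.mul_assoc C W, hWM, Matrix.mul_assoc]
  -- inverse facts
  have hAinv : A * A⁻¹ = 1 := mul_nonsing_inv A hs
  have hAkinv : Ak⁻¹ * Ak = 1 := nonsing_inv_mul Ak hsk
  -- the moments: x ℓ := A⁻¹^ℓ (B b)
  set x : ℕ → (Fin n → ℂ) := fun ℓ => (A⁻¹ ^ ℓ) *ᵥ (B *ᵥ b) with hx
  have hxsucc : ∀ ℓ : ℕ, x (ℓ + 1) = A⁻¹ *ᵥ x ℓ := by
    intro ℓ
    show (A⁻¹ ^ (ℓ + 1)) *ᵥ (B *ᵥ b) = A⁻¹ *ᵥ ((A⁻¹ ^ ℓ) *ᵥ (B *ᵥ b))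
    simp only [mulVec_mulVec]
    rw [pow_succ', Matrix.mul_assoc]
  have hAx : ∀ ℓ : ℕ, A *ᵥ x (ℓ + 1) = x ℓ := by
    intro ℓ
    rw [hxsucc, mulVec_mulVec, hAinv, one_mulVec]
  have hx0 : x 0 = B *ᵥ b := by
    show (A⁻¹ ^ 0) *ᵥ (B *ᵥ b) = B *ᵥ b
    rw [pow_zero, one_mulVec]
  have hBb : A *ᵥ x 1 = B *ᵥ b := (hAx 0).trans hx0
  -- coefficient vectors
  have hc : ∀ ℓ : ℕ, 1 ≤ ℓ → ℓ ≤ N → V *ᵥ (Vᴴ *ᵥ x ℓ) = x ℓ := by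
    intro ℓ h1 h2
    obtain ⟨c, hcV⟩ := hincl ℓ h1 h2
    have hxc : x ℓ = V *ᵥ c := hcV.symm
    rw [hxc, show Vᴴ *ᵥ (V *ᵥ c) = c by rw [mulVec_mulVec, hV, one_mulVec]]
  -- main induction: Ak⁻¹^(j+1) (Bk b) = Vᴴ x (j+1) for j+1 ≤ N
  have key : ∀ j : ℕ, j + 1 ≤ N →
      (Ak⁻¹ ^ (j + 1)) *ᵥ (Bk *ᵥ b) = Vᴴ *ᵥ x (j + 1) := by
    intro j
    induction j with
    | zero =>
      intro h1
      have hAk1 : Ak *ᵥ (Vᴴ *ᵥ x 1) = Bk *ᵥ b := by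
        calc Ak *ᵥ (Vᴴ *ᵥ x 1)
            = ((Wᴴ * A) * V) *ᵥ (Vᴴ *ᵥ x 1) := by rw [hAkeq]
          _ = (Wᴴ * A) *ᵥ (V *ᵥ (Vᴴ *ᵥ x 1)) := (mulVec_mulVec _ _ _).symm
          _ = (Wᴴ * A) *ᵥ x 1 := by rw [hc 1 le_rfl h1]
          _ = Wᴴ *ᵥ (A *ᵥ x 1) := (mulVec_mulVec _ _ _).symm
          _ = Wᴴ *ᵥ (B *ᵥ b) := by rw [hBb]
          _ = Bk *ᵥ b := by rw [hBk]; exact mulVec_mulVec _ _ _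
      rw [pow_one, ← hAk1, mulVec_mulVec, hAkinv, one_mulVec]
    | succ i ih =>
      intro h1
      have hi : i + 1 ≤ N := by omega
      have hAk1 : Ak *ᵥ (Vᴴ *ᵥ x (i + 2)) = Vᴴ *ᵥ x (i + 1) := by
        calc Ak *ᵥ (Vᴴ *ᵥ x (i + 2))
            = ((Wᴴ * A) * V) *ᵥ (Vᴴ *ᵥ x (i + 2)) := by rw [hAkeq]
          _ = (Wᴴ * A) *ᵥ (V *ᵥ (Vᴴ *ᵥ x (i + 2))) := (mulVec_mulVec _ _ _).symm
          _ = (Wᴴ * A) *ᵥ x (i + 2) := by rw [hc (i + 2) (by omega) h1]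
          _ = Wᴴ *ᵥ (A *ᵥ x (i + 2)) := (mulVec_mulVec _ _ _).symm
          _ = Wᴴ *ᵥ x (i + 1) := by rw [hAx (i + 1)]
          _ = Wᴴ *ᵥ (V *ᵥ (Vᴴ *ᵥ x (i + 1))) := by rw [hc (i + 1) (by omega) hi]
          _ = (Wᴴ * V) *ᵥ (Vᴴ *ᵥ x (i + 1)) := mulVec_mulVec _ _ _
          _ = Vᴴ *ᵥ x (i + 1) := by rw [hWV, one_mulVec]
      calc (Ak⁻¹ ^ (i + 2)) *ᵥ (Bk *ᵥ b)
          = (Ak⁻¹ * Ak⁻¹ ^ (i + 1)) *ᵥ (Bk *ᵥ b) := by rw [pow_succ']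
        _ = Ak⁻¹ *ᵥ ((Ak⁻¹ ^ (i + 1)) *ᵥ (Bk *ᵥ b)) := (mulVec_mulVec _ _ _).symm
        _ = Ak⁻¹ *ᵥ (Vᴴ *ᵥ x (i + 1)) := by rw [ih hi]
        _ = Ak⁻¹ *ᵥ (Ak *ᵥ (Vᴴ *ᵥ x (i + 2))) := by rw [hAk1]
        _ = Vᴴ *ᵥ x (i + 2) := by rw [mulVec_mulVec, hAkinv, one_mulVec]
  -- conclude
  have hj1 : j + 1 ≤ N := hjN
  show (C * Q) *ᵥ x (j + 1) = (Ck * Qk) *ᵥ ((Ak⁻¹ ^ (j + 1)) *ᵥ (Bk *ᵥ b))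
  calc (C * Q) *ᵥ x (j + 1)
      = (C * Q) *ᵥ (V *ᵥ (Vᴴ *ᵥ x (j + 1))) := by rw [hc (j + 1) (by omega) hj1]
    _ = ((C * Q) * V) *ᵥ (Vᴴ *ᵥ x (j + 1)) := mulVec_mulVec _ _ _
    _ = (Ck * Qk) *ᵥ ((Ak⁻¹ ^ (j + 1)) *ᵥ (Bk *ᵥ b)) := by rw [hCkQk, key j hj1]
end

section
/- (Structure-preserving left interpolation for DH systems.) Let (J,R,Q) be a DH triple of size n, B ∈ ℂ^{n×m}, C ∈ ℂ^{p×n}, ŝ ∈ ℂ with ŝ·I_n − (J−R)Q invertible, and ĉ ∈ ℂ^p. Let W_k ∈ ℂ^{n×k} have orthonormal columns, suppose Wᴴ_k (J−R)ᴴ W_k is invertible, and suppose ( ĉᴴ C (ŝ·I_n − (J−R)Q)^{−ℓ} )ᴴ lies in the column space of W_k for ℓ = 1, …, N. Set V_k := (J−R)ᴴ W_k (W_kᴴ (J−R)ᴴ W_k)⁻¹, J_k := W_kᴴ J W_k, R_k := W_kᴴ R W_k, Q_k := V_kᴴ Q V_k, B_k := V_kᴴ B, C_k := C V_k. Then: (i)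 J_k is skew-Hermitian, R_k is Hermitian positive semidefinite, and Q_k is Hermitian positive definite; and (ii) if ŝ·I_k − (J_k−R_k)Q_k is invertible, then ĉᴴ C (ŝ·I_n − (J−R)Q)^{−(ℓ+1)} (J−R) B = ĉᴴ C_k (ŝ·I_k − (J_k−R_k)Q_k)^{−(ℓ+1)} (J_k−R_k) B_k for ℓ = 0, …, N−1; equivalently, G(s) := C(sI−(J−R)Q)⁻¹(J−R)B and G_k(s) := C_k(sI−(J_k−R_k)Q_k)⁻¹(J_k−R_k)B_k satisfy ĉᴴ G^{(ℓ)}(ŝ) = ĉᴴ G_k^{(ℓ)}(ŝ) for ℓ = 0, …, N−1. -/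
open Matrix
open scoped ComplexOrder

/-- Structure-preserving left tangential interpolation for DH systems: the Petrov–Galerkin
reduction with `V_k = (J−R)ᴴ W_k (W_kᴴ (J−R)ᴴ W_k)⁻¹` yields a reduced DH triple whose
transfer function Hermite-interpolates `G(s) = C(sI − (J−R)Q)⁻¹(J−R)B` in the left
direction `ĉ` at `ŝ`. -/
theorem structure_preserving_left_interpolation_DH
    {n m p k N : ℕ}
    (J R Q : Matrix (Fin n) (Fin n) ℂ)
    (hJ : Jᴴ = -J) (hR : R.PosSemidef) (hQ : Q.PosDef)
    (B : Matrix (Fin n) (Fin m) ℂ) (C : Matrix (Fin p) (Fin n) ℂ)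
    (s : ℂ) (hs : IsUnit ((s • (1 : Matrix (Fin n) (Fin n) ℂ) - (J - R) * Q)).det)
    (c : Fin p → ℂ)
    (W : Matrix (Fin n) (Fin k) ℂ) (hWorth : Wᴴ * W = 1)
    (hWJR : IsUnit (Wᴴ * (J - R)ᴴ * W).det)
    (hincl : ∀ ℓ : ℕ, 1 ≤ ℓ → ℓ ≤ N →
      ∃ d : Fin k → ℂ,
        W *ᵥ d =
          star ((star c) ᵥ* (C * ((s • (1 : Matrix (Fin n) (Fin n) ℂ) - (J - R) * Q)⁻¹ ^ ℓ))))
    (V : Matrix (Fin n) (Fin k) ℂ) (hV : V = (J - R)ᴴ * W * (Wᴴ * (J - R)ᴴ * W)⁻¹)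
    (Jk Rk Qk : Matrix (Fin k) (Fin k) ℂ)
    (hJk : Jk = Wᴴ * J * W) (hRk : Rk = Wᴴ * R * W) (hQk : Qk = Vᴴ * Q * V)
    (Bk : Matrix (Fin k) (Fin m) ℂ) (hBk : Bk = Vᴴ * B)
    (Ck : Matrix (Fin p) (Fin k) ℂ) (hCk : Ck = C * V) :
    (Jkᴴ = -Jk ∧ Rk.PosSemidef ∧ Qk.PosDef) ∧
    (IsUnit ((s • (1 : Matrix (Fin k) (Fin k) ℂ) - (Jk - Rk) * Qk)).det →
      ∀ ℓ : ℕ, ℓ < N →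
        (star c) ᵥ* (C * ((s • (1 : Matrix (Fin n) (Fin n) ℂ) - (J - R) * Q)⁻¹ ^ (ℓ + 1))
          * ((J - R) * B)) =
        (star c) ᵥ* (Ck * ((s • (1 : Matrix (Fin k) (Fin k) ℂ) - (Jk - Rk) * Qk)⁻¹ ^ (ℓ + 1))
          * ((Jk - Rk) * Bk))) := by
  set F : Matrix (Fin n) (Fin n) ℂ := J - R with hF
  set M : Matrix (Fin n) (Fin n) ℂ := s • (1 : Matrix (Fin n) (Fin n) ℂ) - F * Q with hM
  set Mk : Matrix (Fin k) (Fin k) ℂ := s • (1 : Matrix (Fin k) (Fin k) ℂ) - (Jk - Rk) * Qk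
    with hMkdef
  -- basic identities
  have hWV : Wᴴ * V = 1 := by
    rw [hV, ← Matrix.mul_assoc, ← Matrix.mul_assoc]
    exact Matrix.mul_nonsing_inv _ hWJR
  have hXH : (Wᴴ * Fᴴ * W)ᴴ = Wᴴ * F * W := by
    simp [Matrix.conjTranspose_mul, Matrix.mul_assoc]
  have hYdet : IsUnit (Wᴴ * F * W).det := by
    rw [← hXH, Matrix.det_conjTranspose]
    exact hWJR.star
  have hVH : Vᴴ = (Wᴴ * F * W)⁻¹ * (Wᴴ * F) := by
    rw [hV, Matrix.conjTranspose_mul, Matrix.conjTranspose_nonsing_inv, hXH,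
      Matrix.conjTranspose_mul, Matrix.conjTranspose_conjTranspose, ← Matrix.mul_assoc]
  have hFkeq : Jk - Rk = Wᴴ * F * W := by
    rw [hJk, hRk, hF]
    simp [Matrix.mul_sub, Matrix.sub_mul]
  have hFkV : (Jk - Rk) * Vᴴ = Wᴴ * F := by
    rw [hFkeq, hVH, ← Matrix.mul_assoc, Matrix.mul_nonsing_inv _ hYdet, Matrix.one_mul]
  have hMkW : Mk = Wᴴ * M * V := by
    have h1 : Wᴴ * M * V = s • (Wᴴ * V) - (Wᴴ * F) * (Q * V) := by
      rw [hM]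
      simp [Matrix.mul_sub, Matrix.sub_mul, Matrix.mul_smul, Matrix.smul_mul, Matrix.mul_assoc]
    rw [h1, hWV, ← hFkV, hMkdef, hQk]
    simp [Matrix.mul_assoc]
  constructor
  · refine ⟨?_, ?_, ?_⟩
    · rw [hJk]
      simp [Matrix.conjTranspose_mul, Matrix.mul_assoc, hJ, Matrix.mul_neg, Matrix.neg_mul]
    · rw [hRk]
      exact hR.conjTranspose_mul_mul_same W
    · rw [hQk]
      refine Matrix.PosDef.of_dotProduct_mulVec_pos (Matrix.isHermitian_conjTranspose_mul_mul V hQ.1) fun x hx => ?_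
      have hVx : V *ᵥ x ≠ 0 := by
        intro h0
        apply hx
        have : Wᴴ *ᵥ (V *ᵥ x) = x := by
          rw [Matrix.mulVec_mulVec, hWV, Matrix.one_mulVec]
        rw [← this, h0, Matrix.mulVec_zero]
      simpa only [Matrix.star_mulVec, Matrix.dotProduct_mulVec, Matrix.vecMul_vecMul,
        Matrix.mul_assoc] using hQ.dotProduct_mulVec_pos hVx
  · intro hMkdet ℓ hℓ
    have hMiM : M⁻¹ * M = 1 := Matrix.nonsing_inv_mul _ hs
    have hMkMki : Mk * Mk⁻¹ = 1 := Matrix.mul_nonsing_inv _ hMkdet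
    -- the key moment-matching claim
    have key : ∀ j : ℕ, 1 ≤ j → j ≤ N →
        ((star c) ᵥ* Ck ᵥ* Mk⁻¹ ^ j) ᵥ* Wᴴ = (star c) ᵥ* (C * M⁻¹ ^ j) := by
      intro j
      induction j with
      | zero => intro h; omega
      | succ j ih =>
        intro _ hjN
        obtain ⟨d, hd⟩ := hincl (j + 1) (by omega) hjN
        have hd' : (star c) ᵥ* (C * M⁻¹ ^ (j + 1)) = star d ᵥ* Wᴴ := by
          have h2 := congrArg star hd
          rw [star_star] at h2
          rw [← h2, Matrix.star_mulVec]
        have hx : (star c) ᵥ* Ck ᵥ* Mk⁻¹ ^ j = star d ᵥ* Mk := by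
          rcases Nat.eq_zero_or_pos j with hj0 | hj1
          · subst hj0
            have h3 : (star c) ᵥ* Ck = (star c) ᵥ* (C * M⁻¹ ^ 1) ᵥ* (M * V) := by
              rw [Matrix.vecMul_vecMul, hCk, pow_one, Matrix.mul_assoc,
                ← Matrix.mul_assoc M⁻¹, hMiM, Matrix.one_mul]
            rw [pow_zero, Matrix.vecMul_one, h3, hd', Matrix.vecMul_vecMul, hMkW,
              Matrix.mul_assoc]
          · have ihj := ih hj1 (by omega)
            have h4 : (star c) ᵥ* (C * M⁻¹ ^ j) = star d ᵥ* (Wᴴ * M) := by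
              have : (C * M⁻¹ ^ (j + 1)) * M = C * M⁻¹ ^ j := by
                rw [pow_succ, Matrix.mul_assoc, Matrix.mul_assoc, hMiM, Matrix.mul_one]
              rw [← this, ← Matrix.vecMul_vecMul, hd', Matrix.vecMul_vecMul]
            have h5 := congrArg (fun v => v ᵥ* V) (ihj.trans h4)
            simp only [Matrix.vecMul_vecMul] at h5
            rw [Matrix.mul_assoc, hWV, Matrix.mul_one, ← hMkW] at h5
            rw [Matrix.vecMul_vecMul]
            exact h5
        rw [pow_succ, ← Matrix.vecMul_vecMul, hx, Matrix.vecMul_vecMul (star d) Mk Mk⁻¹,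
          hMkMki, Matrix.vecMul_one, hd']
    have hkey := key (ℓ + 1) (by omega) (by omega)
    have hFkB : (Jk - Rk) * Bk = Wᴴ * (F * B) := by
      rw [hBk, ← Matrix.mul_assoc, hFkV, Matrix.mul_assoc]
    calc (star c) ᵥ* (C * M⁻¹ ^ (ℓ + 1) * (F * B))
        = ((star c) ᵥ* (C * M⁻¹ ^ (ℓ + 1))) ᵥ* (F * B) := by
          rw [Matrix.vecMul_vecMul]
      _ = (((star c) ᵥ* Ck ᵥ* Mk⁻¹ ^ (ℓ + 1)) ᵥ* Wᴴ) ᵥ* (F * B) := by rw [hkey]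
      _ = (star c) ᵥ* (Ck * Mk⁻¹ ^ (ℓ + 1) * ((Jk - Rk) * Bk)) := by
          rw [hFkB]
          simp only [Matrix.vecMul_vecMul, Matrix.mul_assoc]
end

section
/- (Basis independence of the reduced structured backward error.) Let (J,R,Q) be a DH triple of size n and B ∈ ℂ^{n×m}. Let V, Ṽ ∈ ℂ^{n×k} each have orthonormal columns and have the same column space, and set W := Q V (VᴴQV)⁻¹ and W̃ := Q Ṽ (ṼᴴQṼ)⁻¹. For a pair (V,W) and ω ∈ ℝ, define the set E_{V,W}(ω) := { ‖Δ‖₂ : Δ ∈ ℂ^{m×m} Hermitian such that iω is an eigenvalue of (WᴴJW − WᴴRW)(VᴴQV) − (WᴴB) Δ (WᴴB)ᴴ (VᴴQV) }. Then for every ω ∈ ℝ and every Hermitian Δ ∈ ℂ^{m×m}, iω is an eigenvalue of the matrix built from (V,W) if and only if it is an eigenvalue of the matrix built from (Ṽ,W̃); in particular E_{V,W}(ω) = E_{Ṽ,W̃}(ω) and inf E_{V,W}(ω) = inf E_{Ṽ,W̃}(ω). -/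
open Matrix
open scoped ComplexOrder

/-- The reduced perturbed DH matrix built from a basis pair `(V, W)`, `W = QV(VᴴQV)⁻¹`,
with Hermitian perturbation `Δ` of the dissipation part. -/
noncomputable def reducedPerturbed {n m k : ℕ}
    (J R Q : Matrix (Fin n) (Fin n) ℂ) (B : Matrix (Fin n) (Fin m) ℂ)
    (V W : Matrix (Fin n) (Fin k) ℂ) (Δ : Matrix (Fin m) (Fin m) ℂ) :
    Matrix (Fin k) (Fin k) ℂ :=
  (Wᴴ * J * W - Wᴴ * R * W) * (Vᴴ * Q * V) - (Wᴴ * B) * Δ * (Wᴴ * B)ᴴ * (Vᴴ * Q * V)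

/-- The set of spectral norms of Hermitian perturbations `Δ` moving an eigenvalue of the
reduced perturbed DH matrix onto `iω`. -/
noncomputable def Eset {n m k : ℕ}
    (J R Q : Matrix (Fin n) (Fin n) ℂ) (B : Matrix (Fin n) (Fin m) ℂ)
    (V W : Matrix (Fin n) (Fin k) ℂ) (ω : ℝ) : Set ℝ :=
  {x | ∃ Δ : Matrix (Fin m) (Fin m) ℂ, Δᴴ = Δ ∧ sNorm Δ = x ∧
    (reducedPerturbed J R Q B V W Δ -
      (Complex.I * (ω : ℂ)) • (1 : Matrix (Fin k) (Fin k) ℂ)).det = 0}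

lemma conj_reduced {n m k : ℕ}
    (J R Q : Matrix (Fin n) (Fin n) ℂ) (B : Matrix (Fin n) (Fin m) ℂ)
    (V W : Matrix (Fin n) (Fin k) ℂ) (Δ : Matrix (Fin m) (Fin m) ℂ)
    (P : Matrix (Fin k) (Fin k) ℂ) (hPP : P * Pᴴ = 1) :
    reducedPerturbed J R Q B (V * P) (W * P) Δ =
      Pᴴ * reducedPerturbed J R Q B V W Δ * P := by
  have hc : ∀ A C : Matrix (Fin k) (Fin k) ℂ,
      (Pᴴ * A * P) * (Pᴴ * C * P) = Pᴴ * (A * C) * P := by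
    intro A C
    have h : Pᴴ * A * P * (Pᴴ * C * P) = Pᴴ * (A * ((P * Pᴴ) * (C * P))) := by
      simp only [Matrix.mul_assoc]
    rw [h, hPP, Matrix.one_mul]
    simp only [Matrix.mul_assoc]
  have h1 : (W * P)ᴴ * J * (W * P) - (W * P)ᴴ * R * (W * P)
      = Pᴴ * (Wᴴ * J * W - Wᴴ * R * W) * P := by
    simp only [conjTranspose_mul, Matrix.mul_assoc, Matrix.mul_sub, Matrix.sub_mul]
  have h3 : (V * P)ᴴ * Q * (V * P) = Pᴴ * (Vᴴ * Q * V) * P := by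
    simp only [conjTranspose_mul, Matrix.mul_assoc]
  have h4 : (W * P)ᴴ * B * Δ * ((W * P)ᴴ * B)ᴴ = Pᴴ * (Wᴴ * B * Δ * (Wᴴ * B)ᴴ) * P := by
    simp only [conjTranspose_mul, conjTranspose_conjTranspose, Matrix.mul_assoc]
  unfold reducedPerturbed
  rw [h1, h3, h4, hc, hc, ← Matrix.sub_mul, ← Matrix.mul_sub]


/-- Basis independence of the reduced structured backward error: two orthonormal bases of the
same subspace yield the same eigenvalue condition, the same sets `E`, and the same infima. -/
theorem reduced_backward_error_basis_independent
    {n m k : ℕ}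
    (J R Q : Matrix (Fin n) (Fin n) ℂ)
    (hJ : Jᴴ = -J) (hR : R.PosSemidef) (hQ : Q.PosDef)
    (B : Matrix (Fin n) (Fin m) ℂ)
    (V Vt : Matrix (Fin n) (Fin k) ℂ)
    (hV : Vᴴ * V = 1) (hVt : Vtᴴ * Vt = 1)
    (hrange : LinearMap.range V.mulVecLin = LinearMap.range Vt.mulVecLin)
    (W Wt : Matrix (Fin n) (Fin k) ℂ)
    (hW : W = Q * V * (Vᴴ * Q * V)⁻¹) (hWt : Wt = Q * Vt * (Vtᴴ * Q * Vt)⁻¹) :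
    (∀ ω : ℝ, ∀ Δ : Matrix (Fin m) (Fin m) ℂ, Δᴴ = Δ →
      ((reducedPerturbed J R Q B V W Δ -
          (Complex.I * (ω : ℂ)) • (1 : Matrix (Fin k) (Fin k) ℂ)).det = 0 ↔
       (reducedPerturbed J R Q B Vt Wt Δ -
          (Complex.I * (ω : ℂ)) • (1 : Matrix (Fin k) (Fin k) ℂ)).det = 0)) ∧
    (∀ ω : ℝ, Eset J R Q B V W ω = Eset J R Q B Vt Wt ω ∧
      sInf (Eset J R Q B V W ω) = sInf (Eset J R Q B Vt Wt ω)) := by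
  classical
  -- columns of Vt lie in range of V
  set P : Matrix (Fin k) (Fin k) ℂ := Vᴴ * Vt with hP
  have hVVt : V * (Vᴴ * Vt) = Vt := by
    ext i j
    have hmem : (fun i => Vt i j) ∈ LinearMap.range V.mulVecLin := by
      rw [hrange]
      exact ⟨Pi.single j 1, by simp [Matrix.mulVecLin]; rfl⟩
    obtain ⟨x, hx⟩ := hmem
    simp only [Matrix.mulVecLin_apply] at hx
    have key : V *ᵥ (Vᴴ *ᵥ (fun i => Vt i j)) = fun i => Vt i j := by
      rw [← hx, mulVec_mulVec, mulVec_mulVec, Matrix.mul_assoc V Vᴴ V, hV, Matrix.mul_one]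
    have := congrFun key i
    simpa [Matrix.mul_apply, Matrix.mulVec, dotProduct, Finset.mul_sum,
      mul_comm, mul_left_comm] using this
  have hVtP : Vt = V * P := hVVt.symm
  have hPuL : Pᴴ * P = 1 := by
    have h : Pᴴ * P = Vtᴴ * (V * (Vᴴ * Vt)) := by
      rw [hP, conjTranspose_mul, conjTranspose_conjTranspose]
      simp only [Matrix.mul_assoc]
    rw [h, hVVt, hVt]
  have hPP : P * Pᴴ = 1 := mul_eq_one_comm.mp hPuL
  -- VᴴQV is invertible
  have hM : (Vᴴ * Q * V).PosDef := by
    rw [posDef_iff_dotProduct_mulVec]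
    constructor
    · have : (Vᴴ * Q * V)ᴴ = Vᴴ * Q * V := by
        simp only [conjTranspose_mul, conjTranspose_conjTranspose, hQ.isHermitian.eq,
          Matrix.mul_assoc]
      exact this
    · intro x hx
      have hVx : V *ᵥ x ≠ 0 := by
        intro h
        apply hx
        have : (Vᴴ * V) *ᵥ x = 0 := by rw [← mulVec_mulVec, h, mulVec_zero]
        rwa [hV, one_mulVec] at this
      have := hQ.dotProduct_mulVec_pos hVx
      simpa [← mulVec_mulVec, star_mulVec, dotProduct_mulVec, vecMul_vecMul] using this
  have hMdet : IsUnit (Vᴴ * Q * V).det := (Matrix.isUnit_iff_isUnit_det _).mp hM.isUnit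
  have hMinv : (Vᴴ * Q * V) * (Vᴴ * Q * V)⁻¹ = 1 := Matrix.mul_nonsing_inv _ hMdet
  -- VtᴴQVt and its inverse
  have hMt : Vtᴴ * Q * Vt = Pᴴ * (Vᴴ * Q * V) * P := by
    rw [hVtP]; simp only [conjTranspose_mul, Matrix.mul_assoc]
  have hMtinv : (Vtᴴ * Q * Vt)⁻¹ = Pᴴ * (Vᴴ * Q * V)⁻¹ * P := by
    apply Matrix.inv_eq_right_inv
    rw [hMt]
    calc Pᴴ * (Vᴴ * Q * V) * P * (Pᴴ * (Vᴴ * Q * V)⁻¹ * P)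
        = Pᴴ * ((Vᴴ * Q * V) * ((P * Pᴴ) * ((Vᴴ * Q * V)⁻¹ * P))) := by
          simp only [Matrix.mul_assoc]
      _ = 1 := by
          rw [hPP, Matrix.one_mul, ← Matrix.mul_assoc (Vᴴ * Q * V), hMinv,
            Matrix.one_mul, hPuL]
  -- Wt = W * P
  have hWtP : Wt = W * P := by
    rw [hWt, hMtinv, hW, hVtP]
    calc Q * (V * P) * (Pᴴ * (Vᴴ * Q * V)⁻¹ * P)
        = Q * V * ((P * Pᴴ) * ((Vᴴ * Q * V)⁻¹ * P)) := by simp only [Matrix.mul_assoc]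
      _ = Q * V * (Vᴴ * Q * V)⁻¹ * P := by
          rw [hPP, Matrix.one_mul]; simp only [Matrix.mul_assoc]
  -- main determinant equality
  have hdet : ∀ ω : ℝ, ∀ Δ : Matrix (Fin m) (Fin m) ℂ,
      (reducedPerturbed J R Q B Vt Wt Δ -
          (Complex.I * (ω : ℂ)) • (1 : Matrix (Fin k) (Fin k) ℂ)).det =
      (reducedPerturbed J R Q B V W Δ -
          (Complex.I * (ω : ℂ)) • (1 : Matrix (Fin k) (Fin k) ℂ)).det := by
    intro ω Δ
    have hsmul : (Complex.I * (ω : ℂ)) • (1 : Matrix (Fin k) (Fin k) ℂ)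
        = Pᴴ * ((Complex.I * (ω : ℂ)) • (1 : Matrix (Fin k) (Fin k) ℂ)) * P := by
      rw [Matrix.mul_smul, Matrix.smul_mul, Matrix.mul_one, hPuL]
    rw [hVtP, hWtP, conj_reduced J R Q B V W Δ P hPP]
    conv_lhs => rw [hsmul]
    rw [← Matrix.sub_mul, ← Matrix.mul_sub, det_mul, det_mul]
    have : Pᴴ.det * P.det = 1 := by
      rw [← det_mul, hPuL, det_one]
    calc Pᴴ.det * (reducedPerturbed J R Q B V W Δ -
            (Complex.I * (ω : ℂ)) • (1 : Matrix (Fin k) (Fin k) ℂ)).det * P.det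
        = (Pᴴ.det * P.det) * (reducedPerturbed J R Q B V W Δ -
            (Complex.I * (ω : ℂ)) • (1 : Matrix (Fin k) (Fin k) ℂ)).det := by ring
      _ = _ := by rw [this, one_mul]
  refine ⟨fun ω Δ _ => by rw [hdet ω Δ], fun ω => ?_⟩
  have hE : Eset J R Q B V W ω = Eset J R Q B Vt Wt ω := by
    ext x
    simp only [Eset, Set.mem_setOf_eq, hdet ω]
  exact ⟨hE, by rw [hE]⟩
end

section
/- Let (J,R,Q) be a DH triple of size n, B ∈ ℂ^{n×m}, and let V_k ∈ ℂ^{n×k} have orthonormal columns. Set W_k := Q V_k (V_kᴴ Q V_k)⁻¹, J_k := W_kᴴ J W_k, R_k := W_kᴴ R W_k, Q_k := V_kᴴ Q V_k, B_k := W_kᴴ B, and for λ ∈ ℂ let W(λ) := (J−R)Q − λ·I_n and W_k(λ) := (J_k−R_k)Q_k − λ·I_k. Let λ̂ ∈ ℂ be such that W(λ̂) and W_k(λ̂) are invertible. If every column of W(λ̂)⁻¹ B lies in the column space of V_k, then Bᴴ Q W(λ̂)⁻¹ B = B_kᴴ Q_k W_k(λ̂)⁻¹ B_k. -/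
open Matrix
open scoped ComplexOrder

/-- If the columns of `W(λ̂)⁻¹B` lie in the column space of `V_k`, then the structure-preserving
projection exactly matches the matrix function `Bᴴ Q W(λ)⁻¹ B` at `λ̂`. -/
theorem interpolation_BQWinvB
    {n m k : ℕ}
    (J R Q : Matrix (Fin n) (Fin n) ℂ)
    (hJ : Jᴴ = -J) (hR : R.PosSemidef) (hQ : Q.PosDef)
    (B : Matrix (Fin n) (Fin m) ℂ)
    (V : Matrix (Fin n) (Fin k) ℂ) (hV : Vᴴ * V = 1)
    (W : Matrix (Fin n) (Fin k) ℂ) (hW : W = Q * V * (Vᴴ * Q * V)⁻¹)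
    (Jk Rk Qk : Matrix (Fin k) (Fin k) ℂ)
    (hJk : Jk = Wᴴ * J * W) (hRk : Rk = Wᴴ * R * W) (hQk : Qk = Vᴴ * Q * V)
    (Bk : Matrix (Fin k) (Fin m) ℂ) (hBk : Bk = Wᴴ * B)
    (lam : ℂ)
    (hWinv : IsUnit ((J - R) * Q - lam • (1 : Matrix (Fin n) (Fin n) ℂ)).det)
    (hWkinv : IsUnit ((Jk - Rk) * Qk - lam • (1 : Matrix (Fin k) (Fin k) ℂ)).det)
    (hincl : ∃ Z : Matrix (Fin k) (Fin m) ℂ,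
      V * Z = ((J - R) * Q - lam • (1 : Matrix (Fin n) (Fin n) ℂ))⁻¹ * B) :
    Bᴴ * Q * ((J - R) * Q - lam • (1 : Matrix (Fin n) (Fin n) ℂ))⁻¹ * B =
    Bkᴴ * Qk * ((Jk - Rk) * Qk - lam • (1 : Matrix (Fin k) (Fin k) ℂ))⁻¹ * Bk := by
  obtain ⟨Z, hZ⟩ := hincl
  set A : Matrix (Fin n) (Fin n) ℂ := (J - R) * Q - lam • 1 with hA
  set Ak : Matrix (Fin k) (Fin k) ℂ := (Jk - Rk) * Qk - lam • 1 with hAk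
  -- Qk is positive definite
  have hQkpd : Qk.PosDef := by
    rw [hQk]
    refine PosDef.of_dotProduct_mulVec_pos (isHermitian_conjTranspose_mul_mul V hQ.isHermitian) fun x hx => ?_
    have hVx : V *ᵥ x ≠ 0 := by
      intro h
      apply hx
      have : Vᴴ *ᵥ (V *ᵥ x) = x := by
        rw [mulVec_mulVec, hV, one_mulVec]
      rw [h, mulVec_zero] at this
      exact this.symm
    have := hQ.dotProduct_mulVec_pos hVx
    simpa only [star_mulVec, dotProduct_mulVec, vecMul_vecMul] using this
  have hQkunit : IsUnit Qk.det := hQkpd.det_pos.ne'.isUnit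
  have hQkH : Qkᴴ = Qk := hQkpd.isHermitian
  have hQH : Qᴴ = Q := hQ.isHermitian
  -- W * Qk = Q * V
  have hWQk : W * Qk = Q * V := by
    rw [hW, ← hQk, Matrix.mul_assoc, nonsing_inv_mul _ hQkunit, Matrix.mul_one]
  -- Wᴴ * V = 1
  have hWH : Wᴴ = Qk⁻¹ * (Vᴴ * Q) := by
    rw [hW, ← hQk, conjTranspose_mul, conjTranspose_mul, hQH,
      conjTranspose_nonsing_inv, hQkH]
  have hWHV : Wᴴ * V = 1 := by
    rw [hWH, Matrix.mul_assoc, Matrix.mul_assoc, ← Matrix.mul_assoc Vᴴ Q V, ← hQk]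
    exact nonsing_inv_mul _ hQkunit
  -- A * (V * Z) = B
  have hAVZ : A * (V * Z) = B := by
    rw [hZ, ← Matrix.mul_assoc, mul_nonsing_inv _ hWinv, Matrix.one_mul]
  -- key : Wᴴ * A * V = Ak
  have key : Wᴴ * A * V = Ak := by
    calc Wᴴ * A * V = Wᴴ * (J - R) * (Q * V) - lam • (Wᴴ * V) := by
          rw [hA]
          simp only [Matrix.mul_sub, Matrix.sub_mul, Matrix.mul_smul, Matrix.smul_mul,
            Matrix.mul_one, Matrix.mul_assoc]
      _ = Wᴴ * (J - R) * (W * Qk) - lam • (1 : Matrix (Fin k) (Fin k) ℂ) := by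
          rw [hWQk, hWHV]
      _ = Ak := by
          rw [hAk, hJk, hRk]
          simp only [Matrix.mul_sub, Matrix.sub_mul, Matrix.mul_assoc]
  -- Ak * Z = Bk
  have hAkZ : Ak * Z = Bk := by
    rw [← key, Matrix.mul_assoc (Wᴴ * A) V Z, Matrix.mul_assoc Wᴴ A (V * Z), hAVZ, hBk]
  have hZeq : Z = Ak⁻¹ * Bk := by
    rw [← hAkZ, ← Matrix.mul_assoc, nonsing_inv_mul _ hWkinv, Matrix.one_mul]
  have hBkH : Bkᴴ = Bᴴ * W := by rw [hBk, conjTranspose_mul, conjTranspose_conjTranspose]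
  calc Bᴴ * Q * A⁻¹ * B
      = Bᴴ * Q * V * Z := by
        rw [Matrix.mul_assoc (Bᴴ * Q) A⁻¹ B, ← hZ, ← Matrix.mul_assoc]
    _ = Bᴴ * (W * Qk) * Z := by rw [Matrix.mul_assoc Bᴴ Q V, hWQk]
    _ = Bkᴴ * Qk * Z := by rw [hBkH, ← Matrix.mul_assoc]
    _ = Bkᴴ * Qk * Ak⁻¹ * Bk := by rw [hZeq, ← Matrix.mul_assoc]
end

section
/- Let (J,R,Q) be a DH triple of size n, B ∈ ℂ^{n×m}, and let λ̂ ∈ ℂ be such that W(λ̂) := (J−R)Q − λ̂·I_n is invertible. Let V_k ∈ ℂ^{n×k} have orthonormal columns with V_k = [Ṽ_k V̂_k] partitioned so that the columns of the first block Ṽ_k form an orthonormal basis of the column space of W(λ̂)⁻¹ B. Set W_k := Q V_k (V_kᴴ Q V_k)⁻¹, J_k := W_kᴴ J W_k, R_k := W_kᴴ R W_k, Q_k := V_kᴴ Q V_k, B_k := W_kᴴ B, W_k(λ) := (J_k−R_k)Q_k − λ·I_k, and assume W_k(λ̂) is invertible. If every column of W(λ̂)⁻¹ B and every column of W(λ̂)⁻²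 B lies in the column space of V_k, then Bᴴ Q W(λ̂)⁻² B = B_kᴴ Q_k W_k(λ̂)⁻² B_k. -/
open Matrix
open scoped ComplexOrder

/-- If the columns of `W(λ̂)⁻¹B` and `W(λ̂)⁻²B` lie in the column space of `V_k`, and the first
`m` columns of `V_k` form an orthonormal basis of the column space of `W(λ̂)⁻¹B`, then the
structure-preserving projection matches `Bᴴ Q W(λ)⁻² B` at `λ̂`. -/
theorem interpolation_BQWinv2B
    {n m k : ℕ} (hmk : m ≤ k)
    (J R Q : Matrix (Fin n) (Fin n) ℂ)
    (hJ : Jᴴ = -J) (hR : R.PosSemidef) (hQ : Q.PosDef)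
    (B : Matrix (Fin n) (Fin m) ℂ)
    (lam : ℂ)
    (hWinv : IsUnit ((J - R) * Q - lam • (1 : Matrix (Fin n) (Fin n) ℂ)).det)
    (V : Matrix (Fin n) (Fin k) ℂ) (hV : Vᴴ * V = 1)
    (hVt : LinearMap.range (V.submatrix (id : Fin n → Fin n) (Fin.castLE hmk)).mulVecLin =
      LinearMap.range
        (((J - R) * Q - lam • (1 : Matrix (Fin n) (Fin n) ℂ))⁻¹ * B).mulVecLin)
    (W : Matrix (Fin n) (Fin k) ℂ) (hW : W = Q * V * (Vᴴ * Q * V)⁻¹)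
    (Jk Rk Qk : Matrix (Fin k) (Fin k) ℂ)
    (hJk : Jk = Wᴴ * J * W) (hRk : Rk = Wᴴ * R * W) (hQk : Qk = Vᴴ * Q * V)
    (Bk : Matrix (Fin k) (Fin m) ℂ) (hBk : Bk = Wᴴ * B)
    (hWkinv : IsUnit ((Jk - Rk) * Qk - lam • (1 : Matrix (Fin k) (Fin k) ℂ)).det)
    (hincl1 : ∃ Z : Matrix (Fin k) (Fin m) ℂ,
      V * Z = ((J - R) * Q - lam • (1 : Matrix (Fin n) (Fin n) ℂ))⁻¹ * B)
    (hincl2 : ∃ Z : Matrix (Fin k) (Fin m) ℂ,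
      V * Z = (((J - R) * Q - lam • (1 : Matrix (Fin n) (Fin n) ℂ))⁻¹ ^ 2) * B) :
    Bᴴ * Q * (((J - R) * Q - lam • (1 : Matrix (Fin n) (Fin n) ℂ))⁻¹ ^ 2) * B =
    Bkᴴ * Qk * (((Jk - Rk) * Qk - lam • (1 : Matrix (Fin k) (Fin k) ℂ))⁻¹ ^ 2) * Bk := by
  -- Notation
  set Wm : Matrix (Fin n) (Fin n) ℂ := (J - R) * Q - lam • 1 with hWm
  set Wkm : Matrix (Fin k) (Fin k) ℂ := (Jk - Rk) * Qk - lam • 1 with hWkm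
  -- Qk is positive definite
  have hVinj : ∀ x : Fin k → ℂ, V *ᵥ x = 0 → x = 0 := by
    intro x hx
    have : (Vᴴ * V) *ᵥ x = Vᴴ *ᵥ (V *ᵥ x) := by rw [← mulVec_mulVec]
    rw [hV, hx, mulVec_zero, one_mulVec] at this
    exact this
  have hQkPD : (Vᴴ * Q * V).PosDef := by
    rw [posDef_iff_dotProduct_mulVec]
    constructor
    · show (Vᴴ * Q * V)ᴴ = _
      simp [Matrix.conjTranspose_mul, hQ.1.eq, Matrix.mul_assoc]
    · intro x hx
      have hVx : V *ᵥ x ≠ 0 := fun h => hx (hVinj x h)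
      have h0 := hQ.dotProduct_mulVec_pos hVx
      have heq : star (V *ᵥ x) ⬝ᵥ Q *ᵥ (V *ᵥ x) = star x ⬝ᵥ (Vᴴ * Q * V) *ᵥ x := by
        simp only [star_mulVec, mulVec_mulVec, dotProduct_mulVec, vecMul_vecMul,
          Matrix.mul_assoc]
      rwa [heq] at h0
  have hQkU : IsUnit (Vᴴ * Q * V) := hQkPD.isUnit
  have hQkinv : (Vᴴ * Q * V)⁻¹ * (Vᴴ * Q * V) = 1 :=
    nonsing_inv_mul _ ((isUnit_iff_isUnit_det _).mp hQkU)
  -- Wᴴ = Qk⁻¹ Vᴴ Q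
  have hWH : Wᴴ = (Vᴴ * Q * V)⁻¹ * (Vᴴ * Q) := by
    have hinvH : ((Vᴴ * Q * V)⁻¹)ᴴ = (Vᴴ * Q * V)⁻¹ := by
      rw [Matrix.conjTranspose_nonsing_inv]
      congr 1
      exact hQkPD.1.eq
    rw [hW, Matrix.conjTranspose_mul, Matrix.conjTranspose_mul, hinvH, hQ.1.eq,
      Matrix.mul_assoc]
  -- WᴴV = 1
  have hWHV : Wᴴ * V = 1 := by
    rw [hWH, Matrix.mul_assoc]
    exact hQkinv
  -- W * Qk = Q * V
  have hWQk : W * (Vᴴ * Q * V) = Q * V := by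
    rw [hW, Matrix.mul_assoc, hQkinv, Matrix.mul_one]
  -- Wkm = Wᴴ * Wm * V
  have hWkmEq : Wkm = Wᴴ * Wm * V := by
    have key : (Wᴴ * J * W - Wᴴ * R * W) * (Vᴴ * Q * V) = Wᴴ * ((J - R) * Q) * V := by
      rw [Matrix.sub_mul, Matrix.mul_assoc (Wᴴ * J) W _, Matrix.mul_assoc (Wᴴ * R) W _,
        hWQk]
      simp only [Matrix.mul_assoc, ← Matrix.mul_sub]
      rw [← Matrix.sub_mul, ← Matrix.mul_assoc]
    have rhs : Wᴴ * Wm * V = Wᴴ * ((J - R) * Q) * V - lam • 1 := by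
      rw [hWm, Matrix.mul_sub, Matrix.sub_mul, Matrix.mul_smul, Matrix.mul_one,
        Matrix.smul_mul, hWHV]
    rw [hWkm, hJk, hRk, hQk, rhs, key]
  -- inverses of Wm and Wkm
  have hWmInv : Wm * Wm⁻¹ = 1 := mul_nonsing_inv _ hWinv
  have hWkmInv : Wkm⁻¹ * Wkm = 1 := nonsing_inv_mul _ hWkinv
  obtain ⟨Z, hZ⟩ := hincl1
  obtain ⟨Y, hY⟩ := hincl2
  -- Wkm * Z = Bk
  have hWkZ : Wkm * Z = Bk := by
    rw [hWkmEq, Matrix.mul_assoc, hZ, hBk, Matrix.mul_assoc, ← Matrix.mul_assoc Wm Wm⁻¹ B,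
      hWmInv, Matrix.one_mul]
  -- Wkm * Y = Z
  have hWkY : Wkm * Y = Z := by
    have step : Wm * (Wm⁻¹ ^ 2 * B) = Wm⁻¹ * B := by
      rw [sq, Matrix.mul_assoc Wm⁻¹ Wm⁻¹ B, ← Matrix.mul_assoc Wm Wm⁻¹ _, hWmInv,
        Matrix.one_mul]
    rw [hWkmEq, Matrix.mul_assoc, hY, Matrix.mul_assoc, step, ← hZ, ← Matrix.mul_assoc,
      hWHV, Matrix.one_mul]
  -- hence Z = Wkm⁻¹ Bk, Y = Wkm⁻¹^2 Bk
  have hZeq : Z = Wkm⁻¹ * Bk := by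
    rw [← hWkZ, ← Matrix.mul_assoc, hWkmInv, Matrix.one_mul]
  have hYeq : Y = Wkm⁻¹ ^ 2 * Bk := by
    rw [sq, Matrix.mul_assoc, ← hZeq, ← hWkY, ← Matrix.mul_assoc, hWkmInv, Matrix.one_mul]
  -- Bkᴴ * Qk = Bᴴ * Q * V
  have hBkQk : Bkᴴ * Qk = Bᴴ * Q * V := by
    rw [hBk, hQk, Matrix.conjTranspose_mul, conjTranspose_conjTranspose,
      Matrix.mul_assoc, hWQk, ← Matrix.mul_assoc]
  calc Bᴴ * Q * (Wm⁻¹ ^ 2) * B = Bᴴ * Q * (Wm⁻¹ ^ 2 * B) := by rw [Matrix.mul_assoc]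
    _ = Bᴴ * Q * (V * Y) := by rw [hY]
    _ = Bᴴ * Q * V * Y := by rw [← Matrix.mul_assoc]
    _ = Bkᴴ * Qk * (Wkm⁻¹ ^ 2 * Bk) := by rw [hBkQk, hYeq]
    _ = Bkᴴ * Qk * (Wkm⁻¹ ^ 2) * Bk := by simp only [Matrix.mul_assoc]
end

section
/- Let (J,R,Q) be a DH triple of size n, B ∈ ℂ^{n×m}, ω̂ ∈ ℝ, and let V_k ∈ ℂ^{n×k} have orthonormal columns such that every column of W(iω̂)⁻¹ B and every column of W(iω̂)⁻² B lies in the column space of V_k, where W(λ) := (J−R)Q − λ·I_n is assumed invertible at λ = iω̂. Set W_k := Q V_k (V_kᴴ Q V_k)⁻¹, J_k := W_kᴴ J W_k, R_k := W_kᴴ R W_k, Q_k := V_kᴴ Q V_k, B_k := W_kᴴ B, W_k(λ) := (J_k−R_k)Q_k − λ·I_k, and assume W_k(iω̂) is invertible. Assume H̃₀(iω̂) := Bᴴ W(iω̂)⁻ᴴ Q B Bᴴ Q W(iω̂)⁻¹ B and H̃_{k,0}(iω̂) := B_kᴴ W_k(iω̂)⁻ᴴ Q_k B_k B_kᴴ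 Q_k W_k(iω̂)⁻¹ B_k are positive definite, let L, L_k be their lower triangular Cholesky factors with positive real diagonals, and define H₀ := L⁻¹L⁻ᴴ, H_{k,0} := L_k⁻¹L_k⁻ᴴ, H̃₁ := L⁻¹ Bᴴ W(iω̂)⁻ᴴ Q B L⁻ᴴ, H̃_{k,1} := L_k⁻¹ B_kᴴ W_k(iω̂)⁻ᴴ Q_k B_k L_k⁻ᴴ, H₁ := i(H̃₁ − H̃₁ᴴ), H_{k,1} := i(H̃_{k,1} − H̃_{k,1}ᴴ). Then the supremum over t ∈ ℝ of λ_min(H₀ + t·H₁) equals the supremum over t ∈ ℝ of λ_min(H_{k,0} + t·H_{k,1}) (as an equality in the extended reals); in particular one supremum is finite if and only if the other is. -/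
open Matrix
open scoped ComplexOrder

/-- Uniqueness of the Cholesky factor with positive real diagonal. -/
lemma chol_unique {m : ℕ} {L Lk H : Matrix (Fin m) (Fin m) ℂ}
    (hH : H.PosDef)
    (hLtri : ∀ i j : Fin m, i < j → L i j = 0)
    (hLdiag : ∀ i : Fin m, 0 < (L i i).re ∧ (L i i).im = 0)
    (hLchol : L * Lᴴ = H)
    (hLktri : ∀ i j : Fin m, i < j → Lk i j = 0)
    (hLkdiag : ∀ i : Fin m, 0 < (Lk i i).re ∧ (Lk i i).im = 0)
    (hLkchol : Lk * Lkᴴ = H) : L = Lk := by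
  have hdetH : IsUnit H.det := (Matrix.isUnit_iff_isUnit_det H).mp hH.isUnit
  have hdetL : IsUnit L.det := by
    have h : L.det * Lᴴ.det = H.det := by rw [← Matrix.det_mul, hLchol]
    exact isUnit_of_mul_isUnit_left (h ▸ hdetH)
  have hdetLk : IsUnit Lk.det := by
    have h : Lk.det * Lkᴴ.det = H.det := by rw [← Matrix.det_mul, hLkchol]
    exact isUnit_of_mul_isUnit_left (h ▸ hdetH)
  have hdetLkH : IsUnit Lkᴴ.det := by
    rw [Matrix.det_conjTranspose]; exact hdetLk.star
  haveI : Invertible Lk := Lk.invertibleOfIsUnitDet hdetLk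
  set b : Fin m → (Fin m)ᵒᵈ := fun i => OrderDual.toDual i with hb
  have hLb : L.BlockTriangular b := fun i j h =>
    hLtri i j (OrderDual.toDual_lt_toDual.mp h)
  have hLkb : Lk.BlockTriangular b := fun i j h =>
    hLktri i j (OrderDual.toDual_lt_toDual.mp h)
  set A := Lk⁻¹ * L with hA
  have hAb : A.BlockTriangular b :=
    (Matrix.blockTriangular_inv_of_blockTriangular hLkb).mul hLb
  have hAA : A * Aᴴ = 1 := by
    rw [hA, Matrix.conjTranspose_mul, Matrix.conjTranspose_nonsing_inv]
    calc Lk⁻¹ * L * (Lᴴ * Lkᴴ⁻¹) = Lk⁻¹ * (L * Lᴴ) * Lkᴴ⁻¹ := by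
          simp only [Matrix.mul_assoc]
      _ = Lk⁻¹ * (Lk * Lkᴴ) * Lkᴴ⁻¹ := by rw [hLchol, hLkchol]
      _ = (Lk⁻¹ * Lk) * (Lkᴴ * Lkᴴ⁻¹) := by
          simp only [Matrix.mul_assoc]
      _ = 1 := by
          rw [Matrix.nonsing_inv_mul _ hdetLk, Matrix.mul_nonsing_inv _ hdetLkH, Matrix.one_mul]
  have hdetA : IsUnit A.det := by
    have h := congrArg Matrix.det hAA
    rw [Matrix.det_mul, Matrix.det_one] at h
    exact IsUnit.of_mul_eq_one _ h
  haveI : Invertible A := A.invertibleOfIsUnitDet hdetA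
  have hAinv : A⁻¹ = Aᴴ := Matrix.inv_eq_right_inv hAA
  have hAHb : Aᴴ.BlockTriangular b :=
    hAinv ▸ Matrix.blockTriangular_inv_of_blockTriangular hAb
  have hdiagA : ∀ i j : Fin m, i ≠ j → A i j = 0 := by
    intro i j hij
    rcases lt_or_gt_of_ne hij with h | h
    · exact hAb (OrderDual.toDual_lt_toDual.mpr h)
    · have h2 := hAHb (i := j) (j := i) (OrderDual.toDual_lt_toDual.mpr h)
      rw [Matrix.conjTranspose_apply] at h2
      exact star_eq_zero.mp h2
  have hL : L = Lk * A := by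
    rw [hA, ← Matrix.mul_assoc, Matrix.mul_nonsing_inv _ hdetLk, Matrix.one_mul]
  have hA1 : ∀ i, A i i = 1 := by
    intro i
    have h1 : (A * Aᴴ) i i = 1 := by rw [hAA]; simp [Matrix.one_apply]
    have h2 : (A * Aᴴ) i i = A i i * star (A i i) := by
      rw [Matrix.mul_apply]
      rw [Finset.sum_eq_single i]
      · rw [Matrix.conjTranspose_apply]
      · intro c _ hc
        rw [hdiagA i c (fun h => hc h.symm), zero_mul]
      · intro h; exact absurd (Finset.mem_univ i) h
    have h3 : L i i = Lk i i * A i i := by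
      rw [hL, Matrix.mul_apply, Finset.sum_eq_single i]
      · intro c _ hc
        rw [hdiagA c i hc, mul_zero]
      · intro h; exact absurd (Finset.mem_univ i) h
    have hβ : Lk i i ≠ 0 := by
      intro h
      have := (hLkdiag i).1
      rw [h] at this
      simp at this
    have hzval : A i i = L i i / Lk i i := by
      field_simp
      rw [mul_comm] at h3
      exact h3.symm
    have hLre : L i i = ((L i i).re : ℂ) := Complex.ext rfl (by simp [(hLdiag i).2])
    have hLkre : Lk i i = ((Lk i i).re : ℂ) := Complex.ext rfl (by simp [(hLkdiag i).2])
    set α := (L i i).re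
    set β := (Lk i i).re
    have hz : A i i = ((α / β : ℝ) : ℂ) := by
      rw [hzval, hLre, hLkre, Complex.ofReal_div]
    have hquad : ((α / β : ℝ) : ℂ) * ((α / β : ℝ) : ℂ) = 1 := by
      have := h1.symm.trans (by rw [h2]) |>.symm
      rw [h2, hz] at h1
      rw [← h1]
      simp [Complex.conj_ofReal]
    have hr : (α / β) * (α / β) = 1 := by
      exact_mod_cast hquad
    have hpos : 0 < α / β := div_pos (hLdiag i).1 (hLkdiag i).1
    have : α / β = 1 := by
      nlinarith
    rw [hz, this]
    simp
  have hAone : A = 1 := by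
    ext i j
    by_cases h : i = j
    · subst h; rw [hA1]; simp [Matrix.one_apply]
    · rw [hdiagA i j h]; simp [Matrix.one_apply, h]
  rw [hL, hAone, Matrix.mul_one]

/-- If the subspace contains the columns of `W(iω̂)⁻¹B` and `W(iω̂)⁻²B`, then the inner
suprema `sup_t λ_min(H₀ + tH₁)` for the full and the reduced problem coincide (in the
extended reals); in particular one is finite iff the other is. -/
theorem interpolation_inner_supremum
    {n m k : ℕ}
    (J R Q : Matrix (Fin n) (Fin n) ℂ)
    (hJ : Jᴴ = -J) (hR : R.PosSemidef) (hQ : Q.PosDef)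
    (B : Matrix (Fin n) (Fin m) ℂ)
    (omg : ℝ)
    (V : Matrix (Fin n) (Fin k) ℂ) (hV : Vᴴ * V = 1)
    (Wm : Matrix (Fin n) (Fin n) ℂ)
    (hWm : Wm = (J - R) * Q - (Complex.I * (omg : ℂ)) • 1)
    (hWinv : IsUnit Wm.det)
    (Wk : Matrix (Fin n) (Fin k) ℂ) (hWk : Wk = Q * V * (Vᴴ * Q * V)⁻¹)
    (Jk Rk Qk : Matrix (Fin k) (Fin k) ℂ)
    (hJk : Jk = Wkᴴ * J * Wk) (hRk : Rk = Wkᴴ * R * Wk) (hQk : Qk = Vᴴ * Q * V)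
    (Bk : Matrix (Fin k) (Fin m) ℂ) (hBk : Bk = Wkᴴ * B)
    (Wkm : Matrix (Fin k) (Fin k) ℂ)
    (hWkm : Wkm = (Jk - Rk) * Qk - (Complex.I * (omg : ℂ)) • 1)
    (hWkinv : IsUnit Wkm.det)
    (hincl1 : ∃ Z : Matrix (Fin k) (Fin m) ℂ, V * Z = Wm⁻¹ * B)
    (hincl2 : ∃ Z : Matrix (Fin k) (Fin m) ℂ, V * Z = (Wm⁻¹ ^ 2) * B)
    (H0t : Matrix (Fin m) (Fin m) ℂ) (hH0t : H0t = Bᴴ * (Wm⁻¹)ᴴ * Q * B * Bᴴ * Q * Wm⁻¹ * B)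
    (Hk0t : Matrix (Fin m) (Fin m) ℂ)
    (hHk0t : Hk0t = Bkᴴ * (Wkm⁻¹)ᴴ * Qk * Bk * Bkᴴ * Qk * Wkm⁻¹ * Bk)
    (hH0pd : H0t.PosDef) (hHk0pd : Hk0t.PosDef)
    (L Lk : Matrix (Fin m) (Fin m) ℂ)
    (hLtri : ∀ i j : Fin m, i < j → L i j = 0)
    (hLdiag : ∀ i : Fin m, 0 < (L i i).re ∧ (L i i).im = 0)
    (hLchol : L * Lᴴ = H0t)
    (hLktri : ∀ i j : Fin m, i < j → Lk i j = 0)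
    (hLkdiag : ∀ i : Fin m, 0 < (Lk i i).re ∧ (Lk i i).im = 0)
    (hLkchol : Lk * Lkᴴ = Hk0t)
    (H0 Hk0 : Matrix (Fin m) (Fin m) ℂ)
    (hH0 : H0 = L⁻¹ * (L⁻¹)ᴴ) (hHk0 : Hk0 = Lk⁻¹ * (Lk⁻¹)ᴴ)
    (H1t Hk1t : Matrix (Fin m) (Fin m) ℂ)
    (hH1t : H1t = L⁻¹ * (Bᴴ * (Wm⁻¹)ᴴ * Q * B) * (L⁻¹)ᴴ)
    (hHk1t : Hk1t = Lk⁻¹ * (Bkᴴ * (Wkm⁻¹)ᴴ * Qk * Bk) * (Lk⁻¹)ᴴ)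
    (H1 Hk1 : Matrix (Fin m) (Fin m) ℂ)
    (hH1 : H1 = Complex.I • (H1t - H1tᴴ)) (hHk1 : Hk1 = Complex.I • (Hk1t - Hk1tᴴ)) :
    (⨆ t : ℝ, ((lambdaMin (H0 + (t : ℂ) • H1) : ℝ) : EReal)) =
      (⨆ t : ℝ, ((lambdaMin (Hk0 + (t : ℂ) • Hk1) : ℝ) : EReal)) ∧
    (BddAbove (Set.range fun t : ℝ => lambdaMin (H0 + (t : ℂ) • H1)) ↔
      BddAbove (Set.range fun t : ℝ => lambdaMin (Hk0 + (t : ℂ) • Hk1))) := by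
  -- Qk is positive definite
  have hQkpd : Qk.PosDef := by
    rw [hQk]
    rw [Matrix.posDef_iff_dotProduct_mulVec]
    constructor
    · show (Vᴴ * Q * V)ᴴ = Vᴴ * Q * V
      simp only [Matrix.conjTranspose_mul, Matrix.conjTranspose_conjTranspose, hQ.1.eq]
      simp only [Matrix.mul_assoc]
    · intro x hx
      have hVx : V *ᵥ x ≠ 0 := by
        intro h
        apply hx
        have h2 : Vᴴ *ᵥ (V *ᵥ x) = x := by
          rw [Matrix.mulVec_mulVec, hV, Matrix.one_mulVec]
        rw [h, Matrix.mulVec_zero] at h2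
        exact h2.symm
      have h := (Matrix.posDef_iff_dotProduct_mulVec.mp hQ).2 hVx
      convert h using 1
      simp only [Matrix.star_mulVec, Matrix.dotProduct_mulVec, Matrix.vecMul_vecMul,
        Matrix.mul_assoc]
  have hQkdet : IsUnit Qk.det := (Matrix.isUnit_iff_isUnit_det Qk).mp hQkpd.isUnit
  have hQkherm : Qkᴴ = Qk := hQkpd.1.eq
  -- Wk basics
  have hWk' : Wk = Q * V * Qk⁻¹ := by rw [hWk, hQk]
  have hWkH : Wkᴴ = Qk⁻¹ * (Vᴴ * Q) := by
    rw [hWk']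
    simp only [Matrix.conjTranspose_mul, Matrix.conjTranspose_nonsing_inv,
      Matrix.conjTranspose_conjTranspose, hQkherm, hQ.1.eq, Matrix.mul_assoc]
  have hWkV : Wkᴴ * V = 1 := by
    rw [hWkH, Matrix.mul_assoc, Matrix.mul_assoc, ← Matrix.mul_assoc Vᴴ Q V, ← hQk,
      Matrix.nonsing_inv_mul _ hQkdet]
  have hWkQk : Wk * Qk = Q * V := by
    rw [hWk', Matrix.mul_assoc, Matrix.nonsing_inv_mul _ hQkdet, Matrix.mul_one]
  -- Wkm is the Petrov–Galerkin projection of Wm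
  have hWkmProj : Wkm = Wkᴴ * Wm * V := by
    rw [hWkm, hJk, hRk, hWm]
    have h1 : (Wkᴴ * J * Wk - Wkᴴ * R * Wk) * Qk = Wkᴴ * ((J - R) * (Wk * Qk)) := by
      rw [Matrix.sub_mul, Matrix.sub_mul, Matrix.mul_sub]
      simp only [Matrix.mul_assoc]
    rw [h1, hWkQk]
    simp only [Matrix.mul_sub, Matrix.sub_mul, Matrix.smul_mul, Matrix.mul_smul,
      Matrix.mul_one, Matrix.one_mul, hWkV, Matrix.mul_assoc]
  -- the interpolation identity
  obtain ⟨Z, hZ⟩ := hincl1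
  have hWkmZ : Wkm * Z = Bk := by
    have hVZ : V * Z = Wm⁻¹ * B := hZ
    rw [hWkmProj, Matrix.mul_assoc, Matrix.mul_assoc, hVZ, ← Matrix.mul_assoc Wm,
      Matrix.mul_nonsing_inv _ hWinv, Matrix.one_mul, hBk]
  have hZeq : Z = Wkm⁻¹ * Bk := by
    rw [← hWkmZ, ← Matrix.mul_assoc, Matrix.nonsing_inv_mul _ hWkinv, Matrix.one_mul]
  have hBkH : Bkᴴ = Bᴴ * Wk := by
    rw [hBk, Matrix.conjTranspose_mul, Matrix.conjTranspose_conjTranspose]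
  have key : Bkᴴ * Qk * Wkm⁻¹ * Bk = Bᴴ * Q * Wm⁻¹ * B := by
    rw [hBkH, Matrix.mul_assoc (Bᴴ * Wk * Qk), ← hZeq, Matrix.mul_assoc Bᴴ Wk Qk, hWkQk,
      ← Matrix.mul_assoc, Matrix.mul_assoc (Bᴴ * Q) V Z, hZ]
    simp only [Matrix.mul_assoc]
  have keyH : Bkᴴ * (Wkm⁻¹)ᴴ * Qk * Bk = Bᴴ * (Wm⁻¹)ᴴ * Q * B := by
    have h := congrArg Matrix.conjTranspose key
    simp only [Matrix.conjTranspose_mul, Matrix.conjTranspose_conjTranspose, hQkherm,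
      hQ.1.eq, Matrix.mul_assoc] at h
    simp only [Matrix.mul_assoc]
    exact h
  -- hence the reduced matrices coincide with the full ones
  have hH0teq : Hk0t = H0t := by
    rw [hHk0t, hH0t]
    calc Bkᴴ * (Wkm⁻¹)ᴴ * Qk * Bk * Bkᴴ * Qk * Wkm⁻¹ * Bk
        = (Bkᴴ * (Wkm⁻¹)ᴴ * Qk * Bk) * (Bkᴴ * Qk * Wkm⁻¹ * Bk) := by
          simp only [Matrix.mul_assoc]
      _ = (Bᴴ * (Wm⁻¹)ᴴ * Q * B) * (Bᴴ * Q * Wm⁻¹ * B) := by rw [keyH, key]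
      _ = Bᴴ * (Wm⁻¹)ᴴ * Q * B * Bᴴ * Q * Wm⁻¹ * B := by
          simp only [Matrix.mul_assoc]
  have hLLk : L = Lk := by
    refine chol_unique hH0pd hLtri hLdiag hLchol hLktri hLkdiag ?_
    rw [hLkchol, hH0teq]
  have hH0eq : H0 = Hk0 := by rw [hH0, hHk0, hLLk]
  have hH1teq : H1t = Hk1t := by rw [hH1t, hHk1t, hLLk, keyH]
  have hH1eq : H1 = Hk1 := by rw [hH1, hHk1, hH1teq]
  rw [hH0eq, hH1eq]
  exact ⟨rfl, Iff.rfl⟩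
end

section
/- Let (J,R,Q) be a DH triple of size n, B ∈ ℂ^{n×m} of full column rank, ω̂ ∈ ℝ, and let W(λ) := (J−R)Q − λ·I_n be invertible at λ = iω̂. Let V_k ∈ ℂ^{n×k} have orthonormal columns such that every column of W(iω̂)⁻¹ B and of W(iω̂)⁻² B lies in the column space of V_k, and such that the first m columns of V_k form an orthonormal basis of the column space of W(iω̂)⁻¹ B. Set W_k := Q V_k (V_kᴴ Q V_k)⁻¹, J_k := W_kᴴ J W_k, R_k := W_kᴴ R W_k, Q_k := V_kᴴ Q V_k, B_k := W_kᴴ B, W_k(λ) := (J_k−R_k)Q_k − λ·I_k, and assume W_k(iω̂) is invertible. Assume H̃₀ := Bᴴ W(iω̂)⁻ᴴ Q B Bᴴ Q W(iω̂)⁻¹ B and H̃_{k,0} := B_kᴴ W_k(iω̂)⁻ᴴ Q_k B_k B_kᴴ Q_k W_k(iω̂)⁻¹ B_k are positive definite, with lower triangular Cholesky factors L, L_k having positive real diagonals. Then L = L_k; consequently H₀ := L⁻¹L⁻ᴴ equals H_{k,0} := L_k⁻¹L_k⁻ᴴ, and H₁ := i(H̃₁ − H̃₁ᴴ) equals H_{k,1}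 := i(H̃_{k,1} − H̃_{k,1}ᴴ), where H̃₁ := L⁻¹ Bᴴ W(iω̂)⁻ᴴ Q B L⁻ᴴ and H̃_{k,1} := L_k⁻¹ B_kᴴ W_k(iω̂)⁻ᴴ Q_k B_k L_k⁻ᴴ. -/
open Matrix
open scoped ComplexOrder

lemma cholesky_unique {m : ℕ} {L Lk : Matrix (Fin m) (Fin m) ℂ}
    (hLtri : ∀ i j : Fin m, i < j → L i j = 0)
    (hLdiag : ∀ i : Fin m, 0 < (L i i).re ∧ (L i i).im = 0)
    (hLktri : ∀ i j : Fin m, i < j → Lk i j = 0)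
    (hLkdiag : ∀ i : Fin m, 0 < (Lk i i).re ∧ (Lk i i).im = 0)
    (hEq : L * Lᴴ = Lk * Lkᴴ)
    (hL : IsUnit L.det) (hLk : IsUnit Lk.det) : L = Lk := by
  have hLH : IsUnit Lᴴ.det := by rw [det_conjTranspose]; exact hL.star
  have hLkH : IsUnit Lkᴴ.det := by rw [det_conjTranspose]; exact hLk.star
  have hLbt : L.BlockTriangular (OrderDual.toDual : Fin m → (Fin m)ᵒᵈ) := fun i j h => hLtri i j h
  have hLkbt : Lk.BlockTriangular (OrderDual.toDual : Fin m → (Fin m)ᵒᵈ) := fun i j h => hLktri i j h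
  have hLHbt : Lᴴ.BlockTriangular (id : Fin m → Fin m) := fun i j h => by
    simp [conjTranspose_apply, hLtri j i h]
  have hLkHbt : Lkᴴ.BlockTriangular (id : Fin m → Fin m) := fun i j h => by
    simp [conjTranspose_apply, hLktri j i h]
  haveI : Invertible Lk := Lk.invertibleOfIsUnitDet hLk
  haveI : Invertible Lᴴ := (Lᴴ).invertibleOfIsUnitDet hLH
  set D := Lk⁻¹ * L with hD
  have hDlow : D.BlockTriangular (OrderDual.toDual : Fin m → (Fin m)ᵒᵈ) :=
    (blockTriangular_inv_of_blockTriangular hLkbt).mul hLbt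
  have hD2 : D = Lkᴴ * (Lᴴ)⁻¹ := by
    have h1 : Lᴴ * (Lᴴ)⁻¹ = 1 := mul_nonsing_inv _ hLH
    calc D = Lk⁻¹ * (L * (Lᴴ * (Lᴴ)⁻¹)) := by rw [h1, Matrix.mul_one]
    _ = Lk⁻¹ * (L * Lᴴ) * (Lᴴ)⁻¹ := by noncomm_ring
    _ = Lk⁻¹ * (Lk * Lkᴴ) * (Lᴴ)⁻¹ := by rw [hEq]
    _ = (Lk⁻¹ * Lk) * (Lkᴴ * (Lᴴ)⁻¹) := by noncomm_ring
    _ = Lkᴴ * (Lᴴ)⁻¹ := by rw [nonsing_inv_mul _ hLk, Matrix.one_mul]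
  have hDup : D.BlockTriangular (id : Fin m → Fin m) := by
    rw [hD2]; exact hLkHbt.mul (blockTriangular_inv_of_blockTriangular hLHbt)
  have hDDH : D * Dᴴ = 1 := by
    have hDH : Dᴴ = Lᴴ * (Lkᴴ)⁻¹ := by
      rw [hD, conjTranspose_mul, conjTranspose_nonsing_inv]
    rw [hD, hDH]
    calc Lk⁻¹ * L * (Lᴴ * (Lkᴴ)⁻¹) = Lk⁻¹ * (L * Lᴴ) * (Lkᴴ)⁻¹ := by noncomm_ring
    _ = Lk⁻¹ * (Lk * Lkᴴ) * (Lkᴴ)⁻¹ := by rw [hEq]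
    _ = Lk⁻¹ * Lk * (Lkᴴ * (Lkᴴ)⁻¹) := by noncomm_ring
    _ = 1 := by rw [nonsing_inv_mul _ hLk, mul_nonsing_inv _ hLkH, Matrix.one_mul]
  have hLkD : Lk * D = L := mul_nonsing_inv_cancel_left _ _ hLk
  have hDoff : ∀ i j : Fin m, i ≠ j → D i j = 0 := by
    intro i j hij
    rcases lt_or_gt_of_ne hij with h | h
    · exact hDlow h
    · exact hDup h
  have hDdiag : ∀ i : Fin m, D i i = 1 := by
    intro i
    obtain ⟨ha, ha'⟩ := hLdiag i
    obtain ⟨hb, hb'⟩ := hLkdiag i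
    have h1 : Lk i i * D i i = L i i := by
      have h := congrFun (congrFun hLkD i) i
      rw [Matrix.mul_apply,
        Finset.sum_eq_single i (fun j _ hji => by
          rcases lt_or_gt_of_ne hji with h | h
          · rw [hDoff j i (ne_of_lt h), mul_zero]
          · rw [hLktri i j h, zero_mul])
        (fun h => absurd (Finset.mem_univ i) h)] at h
      exact h
    have h2 : D i i * (starRingEnd ℂ) (D i i) = 1 := by
      have h := congrFun (congrFun hDDH i) i
      rw [Matrix.mul_apply, Matrix.one_apply_eq,
        Finset.sum_eq_single i (fun j _ hji => by rw [hDoff i j (Ne.symm hji), zero_mul])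
        (fun h => absurd (Finset.mem_univ i) h), conjTranspose_apply] at h
      exact h
    set d := D i i with hdd
    have h1im := congrArg Complex.im h1
    rw [Complex.mul_im, hb', ha'] at h1im
    have him : d.im = 0 := by
      have h0 : (Lk i i).re * d.im = 0 := by linarith
      rcases mul_eq_zero.mp h0 with h | h
      · exact absurd h (ne_of_gt hb)
      · exact h
    have h1re := congrArg Complex.re h1
    rw [Complex.mul_re, hb', him] at h1re
    have hre : 0 < d.re := by nlinarith
    have hsq : d.re * d.re + d.im * d.im = 1 := by
      rw [Complex.mul_conj] at h2
      have := congrArg Complex.re h2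
      rw [Complex.ofReal_re] at this
      rw [← Complex.normSq_apply]
      simpa using this
    have hone : d.re = 1 := by nlinarith
    exact Complex.ext (by simp [hone]) (by simp [him])
  have hD1 : D = 1 := by
    ext i j
    by_cases h : i = j
    · subst h; simp [hDdiag i]
    · simp [hDoff i j h, Matrix.one_apply_ne h]
  rw [← hLkD, hD1, Matrix.mul_one]

/-- Under the subspace inclusions, and with the first `m` columns of `V_k` spanning the column
space of `W(iω̂)⁻¹B`, the Cholesky factors of the full and the reduced problem coincide:
`L = L_k`, hence `H₀ = H_{k,0}` and `H₁ = H_{k,1}`. -/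
theorem interpolation_cholesky_factors
    {n m k : ℕ} (hmk : m ≤ k)
    (J R Q : Matrix (Fin n) (Fin n) ℂ)
    (hJ : Jᴴ = -J) (hR : R.PosSemidef) (hQ : Q.PosDef)
    (B : Matrix (Fin n) (Fin m) ℂ) (hBrk : B.rank = m)
    (omg : ℝ)
    (Wm : Matrix (Fin n) (Fin n) ℂ)
    (hWm : Wm = (J - R) * Q - (Complex.I * (omg : ℂ)) • 1)
    (hWinv : IsUnit Wm.det)
    (V : Matrix (Fin n) (Fin k) ℂ) (hV : Vᴴ * V = 1)
    (hincl1 : ∃ Z : Matrix (Fin k) (Fin m) ℂ, V * Z = Wm⁻¹ * B)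
    (hincl2 : ∃ Z : Matrix (Fin k) (Fin m) ℂ, V * Z = (Wm⁻¹ ^ 2) * B)
    (hVt : LinearMap.range (V.submatrix (id : Fin n → Fin n) (Fin.castLE hmk)).mulVecLin =
      LinearMap.range (Wm⁻¹ * B).mulVecLin)
    (Wk : Matrix (Fin n) (Fin k) ℂ) (hWk : Wk = Q * V * (Vᴴ * Q * V)⁻¹)
    (Jk Rk Qk : Matrix (Fin k) (Fin k) ℂ)
    (hJk : Jk = Wkᴴ * J * Wk) (hRk : Rk = Wkᴴ * R * Wk) (hQk : Qk = Vᴴ * Q * V)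
    (Bk : Matrix (Fin k) (Fin m) ℂ) (hBk : Bk = Wkᴴ * B)
    (Wkm : Matrix (Fin k) (Fin k) ℂ)
    (hWkm : Wkm = (Jk - Rk) * Qk - (Complex.I * (omg : ℂ)) • 1)
    (hWkinv : IsUnit Wkm.det)
    (H0t : Matrix (Fin m) (Fin m) ℂ) (hH0t : H0t = Bᴴ * (Wm⁻¹)ᴴ * Q * B * Bᴴ * Q * Wm⁻¹ * B)
    (Hk0t : Matrix (Fin m) (Fin m) ℂ)
    (hHk0t : Hk0t = Bkᴴ * (Wkm⁻¹)ᴴ * Qk * Bk * Bkᴴ * Qk * Wkm⁻¹ * Bk)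
    (hH0pd : H0t.PosDef) (hHk0pd : Hk0t.PosDef)
    (L Lk : Matrix (Fin m) (Fin m) ℂ)
    (hLtri : ∀ i j : Fin m, i < j → L i j = 0)
    (hLdiag : ∀ i : Fin m, 0 < (L i i).re ∧ (L i i).im = 0)
    (hLchol : L * Lᴴ = H0t)
    (hLktri : ∀ i j : Fin m, i < j → Lk i j = 0)
    (hLkdiag : ∀ i : Fin m, 0 < (Lk i i).re ∧ (Lk i i).im = 0)
    (hLkchol : Lk * Lkᴴ = Hk0t)
    (H0 Hk0 : Matrix (Fin m) (Fin m) ℂ)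
    (hH0 : H0 = L⁻¹ * (L⁻¹)ᴴ) (hHk0 : Hk0 = Lk⁻¹ * (Lk⁻¹)ᴴ)
    (H1t Hk1t : Matrix (Fin m) (Fin m) ℂ)
    (hH1t : H1t = L⁻¹ * (Bᴴ * (Wm⁻¹)ᴴ * Q * B) * (L⁻¹)ᴴ)
    (hHk1t : Hk1t = Lk⁻¹ * (Bkᴴ * (Wkm⁻¹)ᴴ * Qk * Bk) * (Lk⁻¹)ᴴ)
    (H1 Hk1 : Matrix (Fin m) (Fin m) ℂ)
    (hH1 : H1 = Complex.I • (H1t - H1tᴴ)) (hHk1 : Hk1 = Complex.I • (Hk1t - Hk1tᴴ)) :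
    L = Lk ∧ H0 = Hk0 ∧ H1 = Hk1 := by
  -- main proof
  have hM : Bkᴴ * Qk * Wkm⁻¹ * Bk = Bᴴ * Q * Wm⁻¹ * B := by
    -- Qk is positive definite
    have hQk_pd : Qk.PosDef := by
      rw [hQk]
      refine PosDef.of_dotProduct_mulVec_pos (isHermitian_conjTranspose_mul_mul V hQ.1) (fun x hx => ?_)
      have hVx : V *ᵥ x ≠ 0 := by
        intro h
        apply hx
        have h2 : (Vᴴ * V) *ᵥ x = Vᴴ *ᵥ (V *ᵥ x) := (mulVec_mulVec _ _ _).symm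
        rw [hV, h] at h2
        simpa using h2
      simpa only [star_mulVec, dotProduct_mulVec, vecMul_vecMul] using hQ.dotProduct_mulVec_pos hVx
    have hQkd : IsUnit Qk.det := hQk_pd.isUnit.map (detMonoidHom)
    have hQkH : Qkᴴ = Qk := hQk_pd.isHermitian
    -- Wkᴴ
    have hWkH : Wkᴴ = Qk⁻¹ * (Vᴴ * Q) := by
      rw [hWk, ← hQk]
      rw [conjTranspose_mul, conjTranspose_mul, conjTranspose_nonsing_inv, hQkH, hQ.isHermitian.eq]
    have hWkV : Wkᴴ * V = 1 := by
      rw [hWkH, Matrix.mul_assoc, ← hQk, nonsing_inv_mul _ hQkd]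
    have hWkQk : Wk * Qk = Q * V := by
      rw [hWk, ← hQk, nonsing_inv_mul_cancel_right _ _ hQkd]
    -- Wkm = Wkᴴ * Wm * V
    have hWkmE : Wkm = Wkᴴ * Wm * V := by
      rw [hWkm, hWm, hJk, hRk]
      have e0 : Wkᴴ * J * Wk - Wkᴴ * R * Wk = Wkᴴ * (J - R) * Wk := by rw [Matrix.mul_sub, Matrix.sub_mul]
      have e1 : Wkᴴ * (J - R) * Wk * Qk = Wkᴴ * ((J - R) * Q) * V := by
        calc Wkᴴ * (J - R) * Wk * Qk = Wkᴴ * (J - R) * (Wk * Qk) := by rw [Matrix.mul_assoc]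
        _ = Wkᴴ * (J - R) * (Q * V) := by rw [hWkQk]
        _ = Wkᴴ * ((J - R) * Q) * V := by simp only [Matrix.mul_assoc]
      have e2 : Wkᴴ * ((J - R) * Q - (Complex.I * (omg : ℂ)) • 1) * V
          = Wkᴴ * ((J - R) * Q) * V - (Complex.I * (omg : ℂ)) • (Wkᴴ * V) := by
        rw [Matrix.mul_sub, Matrix.sub_mul, Matrix.mul_smul, Matrix.smul_mul, Matrix.mul_one]
      rw [e2, e0, e1, hWkV]
    obtain ⟨Z, hZ⟩ := hincl1
    have hWkmZ : Wkm * Z = Bk := by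
      rw [hWkmE, hBk]
      calc Wkᴴ * Wm * V * Z = Wkᴴ * (Wm * (V * Z)) := by simp only [Matrix.mul_assoc]
      _ = Wkᴴ * (Wm * (Wm⁻¹ * B)) := by rw [hZ]
      _ = Wkᴴ * (Wm * Wm⁻¹ * B) := by rw [Matrix.mul_assoc]
      _ = Wkᴴ * B := by rw [mul_nonsing_inv _ hWinv, Matrix.one_mul]
    have hZ2 : Wkm⁻¹ * Bk = Z := by
      rw [← hWkmZ, nonsing_inv_mul_cancel_left _ _ hWkinv]
    calc Bkᴴ * Qk * Wkm⁻¹ * Bk = Bkᴴ * Qk * (Wkm⁻¹ * Bk) := by rw [Matrix.mul_assoc]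
    _ = Bkᴴ * Qk * Z := by rw [hZ2]
    _ = (Wkᴴ * B)ᴴ * Qk * Z := by rw [hBk]
    _ = Bᴴ * Wk * Qk * Z := by rw [conjTranspose_mul, conjTranspose_conjTranspose]
    _ = Bᴴ * (Wk * Qk) * Z := by rw [Matrix.mul_assoc Bᴴ Wk Qk]
    _ = Bᴴ * (Q * V) * Z := by rw [hWkQk]
    _ = Bᴴ * Q * (V * Z) := by simp only [Matrix.mul_assoc]
    _ = Bᴴ * Q * (Wm⁻¹ * B) := by rw [hZ]
    _ = Bᴴ * Q * Wm⁻¹ * B := by simp only [Matrix.mul_assoc]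
  have hQkH : Qkᴴ = Qk := by
    rw [hQk]; exact (isHermitian_conjTranspose_mul_mul V hQ.1).eq
  have hMH : Bkᴴ * (Wkm⁻¹)ᴴ * Qk * Bk = Bᴴ * (Wm⁻¹)ᴴ * Q * B := by
    have h := congrArg conjTranspose hM
    simp only [conjTranspose_mul, conjTranspose_conjTranspose, hQkH, hQ.isHermitian.eq,
      Matrix.mul_assoc] at h
    simp only [Matrix.mul_assoc]
    exact h
  have hH0eq : H0t = Hk0t := by
    have e : H0t = (Bᴴ * (Wm⁻¹)ᴴ * Q * B) * (Bᴴ * Q * Wm⁻¹ * B) := by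
      rw [hH0t]; simp only [Matrix.mul_assoc]
    have ek : Hk0t = (Bkᴴ * (Wkm⁻¹)ᴴ * Qk * Bk) * (Bkᴴ * Qk * Wkm⁻¹ * Bk) := by
      rw [hHk0t]; simp only [Matrix.mul_assoc]
    rw [e, ek, hM, hMH]
  have hLd : IsUnit L.det := by
    have h : L.det * Lᴴ.det = H0t.det := by rw [← det_mul, hLchol]
    have : IsUnit H0t.det := (Matrix.isUnit_iff_isUnit_det _).mp hH0pd.isUnit
    rw [← h] at this
    exact isUnit_of_mul_isUnit_left this
  have hLkd : IsUnit Lk.det := by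
    have h : Lk.det * Lkᴴ.det = Hk0t.det := by rw [← det_mul, hLkchol]
    have : IsUnit Hk0t.det := (Matrix.isUnit_iff_isUnit_det _).mp hHk0pd.isUnit
    rw [← h] at this
    exact isUnit_of_mul_isUnit_left this
  have hLLk : L = Lk := cholesky_unique hLtri hLdiag hLktri hLkdiag
    (hLchol.trans (hH0eq.trans hLkchol.symm)) hLd hLkd
  refine ⟨hLLk, by rw [hH0, hHk0, hLLk], ?_⟩
  have hteq : H1t = Hk1t := by rw [hH1t, hHk1t, hLLk, hMH]
  rw [hH1, hHk1, hteq]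
end

section
/- Let L ∈ ℂ^{m×m} be an invertible lower triangular matrix whose diagonal entries are real and positive, and let S ∈ ℂ^{m×m}. Then there is at most one lower triangular matrix X ∈ ℂ^{m×m} with real diagonal entries satisfying L·Xᴴ + X·Lᴴ = S; that is, if X₁ and X₂ are lower triangular with real diagonal entries and L·X₁ᴴ + X₁·Lᴴ = L·X₂ᴴ + X₂·Lᴴ, then X₁ = X₂. -/
open Matrix

/-- For `L` invertible lower triangular with real positive diagonal, the equation
`L Xᴴ + X Lᴴ = S` has at most one lower triangular solution `X` with real diagonal. -/
theorem lower_triangular_solution_unique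
    {m : ℕ}
    (L : Matrix (Fin m) (Fin m) ℂ)
    (hLtri : ∀ i j : Fin m, i < j → L i j = 0)
    (hLdiag : ∀ i : Fin m, 0 < (L i i).re ∧ (L i i).im = 0)
    (hLinv : IsUnit L.det)
    (X1 X2 : Matrix (Fin m) (Fin m) ℂ)
    (hX1tri : ∀ i j : Fin m, i < j → X1 i j = 0)
    (hX1diag : ∀ i : Fin m, (X1 i i).im = 0)
    (hX2tri : ∀ i j : Fin m, i < j → X2 i j = 0)
    (hX2diag : ∀ i : Fin m, (X2 i i).im = 0)
    (heq : L * X1ᴴ + X1 * Lᴴ = L * X2ᴴ + X2 * Lᴴ) :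
    X1 = X2 := by
  set Y : Matrix (Fin m) (Fin m) ℂ := X1 - X2 with hYdef
  have hYtri : ∀ i j : Fin m, i < j → Y i j = 0 := fun i j h => by
    simp [hYdef, Matrix.sub_apply, hX1tri i j h, hX2tri i j h]
  have hYdiag : ∀ i : Fin m, (Y i i).im = 0 := fun i => by
    simp [hYdef, Matrix.sub_apply, Complex.sub_im, hX1diag i, hX2diag i]
  have hzero : L * Yᴴ + Y * Lᴴ = 0 := by
    have h : L * Yᴴ + Y * Lᴴ = (L * X1ᴴ + X1 * Lᴴ) - (L * X2ᴴ + X2 * Lᴴ) := by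
      simp only [hYdef, conjTranspose_sub, Matrix.mul_sub, Matrix.sub_mul]
      abel
    rw [h, heq, sub_self]
  haveI : Invertible L := L.invertibleOfIsUnitDet hLinv
  set b : Fin m → (Fin m)ᵒᵈ := fun i => OrderDual.toDual i with hb
  have hLbt : L.BlockTriangular b := fun i j h => hLtri i j h
  have hLinvbt : L⁻¹.BlockTriangular b := blockTriangular_inv_of_blockTriangular hLbt
  have hYbt : Y.BlockTriangular b := fun i j h => hYtri i j h
  set A : Matrix (Fin m) (Fin m) ℂ := L⁻¹ * Y with hAdef
  have hAbt : A.BlockTriangular b := hLinvbt.mul hYbt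
  have hLHinv : IsUnit (Lᴴ).det := by
    rw [det_conjTranspose]; exact hLinv.star
  have hskew : A + Aᴴ = 0 := by
    have h1 : A + Aᴴ = L⁻¹ * (L * Yᴴ + Y * Lᴴ) * (Lᴴ)⁻¹ := by
      rw [hAdef, conjTranspose_mul, conjTranspose_nonsing_inv]
      rw [Matrix.mul_add, Matrix.add_mul]
      rw [← Matrix.mul_assoc, ← Matrix.mul_assoc, Matrix.nonsing_inv_mul L hLinv,
        Matrix.one_mul, Matrix.mul_assoc (L⁻¹ * Y), Matrix.mul_nonsing_inv _ hLHinv,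
        Matrix.mul_one]
      rw [add_comm]
    rw [h1, hzero, Matrix.mul_zero, Matrix.zero_mul]
  have hskew' : ∀ i j : Fin m, A i j + (starRingEnd ℂ) (A j i) = 0 := by
    intro i j
    have := congrFun (congrFun hskew i) j
    simpa [Matrix.add_apply, conjTranspose_apply] using this
  -- A vanishes off-diagonal
  have hAoff : ∀ i j : Fin m, i ≠ j → A i j = 0 := by
    intro i j hij
    rcases lt_or_gt_of_ne hij with h | h
    · exact hAbt h
    · have hA0 : A j i = 0 := hAbt h
      have := hskew' i j
      rw [hA0, map_zero, add_zero] at this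
      exact this
  -- diagonal of A is purely imaginary
  have hAre : ∀ i : Fin m, (A i i).re = 0 := by
    intro i
    have := congrArg Complex.re (hskew' i i)
    simp [Complex.add_re, Complex.conj_re] at this
    linarith
  -- Y = L * A
  have hYLA : Y = L * A := by
    rw [hAdef, ← Matrix.mul_assoc, Matrix.mul_nonsing_inv L hLinv, Matrix.one_mul]
  -- diagonal of A vanishes
  have hAdiag : ∀ i : Fin m, A i i = 0 := by
    intro i
    have hYii : Y i i = L i i * A i i := by
      rw [hYLA, Matrix.mul_apply]
      rw [Finset.sum_eq_single i]
      · intro k _ hk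
        rw [hAoff k i hk, mul_zero]
      · intro h; exact absurd (Finset.mem_univ i) h
    have him : (Y i i).im = (L i i).re * (A i i).im := by
      rw [hYii, Complex.mul_im, (hLdiag i).2, hAre i]
      ring
    have : (A i i).im = 0 := by
      have h0 := hYdiag i
      rw [him] at h0
      have := (hLdiag i).1
      nlinarith
    exact Complex.ext (hAre i) this
  have hA0 : A = 0 := by
    ext i j
    by_cases h : i = j
    · subst h; simpa using hAdiag i
    · simpa using hAoff i j h
  have hY0 : Y = 0 := by rw [hYLA, hA0, Matrix.mul_zero]
  have := sub_eq_zero.mp hY0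
  exact this
end

section
/- Let (J,R,Q) be a DH triple of size n, i.e., J ∈ ℂ^{n×n} is skew-Hermitian, R ∈ ℂ^{n×n} is Hermitian positive semidefinite, and Q ∈ ℂ^{n×n} is Hermitian positive definite. Then every eigenvalue λ ∈ ℂ of the DH matrix (J−R)Q satisfies Re λ ≤ 0. -/
open Matrix
open scoped ComplexOrder

/-- Every eigenvalue of a dissipative Hamiltonian matrix `(J−R)Q` has nonpositive real
part (Lyapunov stability of DH systems). -/
theorem DH_eigenvalue_re_nonpos
    {n : ℕ}
    (J R Q : Matrix (Fin n) (Fin n) ℂ)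
    (hJ : Jᴴ = -J) (hR : R.PosSemidef) (hQ : Q.PosDef)
    (lam : ℂ) (x : Fin n → ℂ) (hx : x ≠ 0)
    (heig : ((J - R) * Q) *ᵥ x = lam • x) :
    lam.re ≤ 0 := by
  set y := Q *ᵥ x with hy
  set c := star x ⬝ᵥ Q *ᵥ x with hc
  set a := star y ⬝ᵥ J *ᵥ y with ha
  set r := star y ⬝ᵥ R *ᵥ y with hr
  -- main identity: lam * c = a - r
  have key : lam * c = a - r := by
    have h1 : star y ⬝ᵥ (((J - R) * Q) *ᵥ x) = lam * (star y ⬝ᵥ x) := by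
      rw [heig, dotProduct_smul, smul_eq_mul]
    have h2 : star y ⬝ᵥ x = c := by
      rw [hy, hc, star_mulVec, hQ.1.eq, ← dotProduct_mulVec]
    have h3 : star y ⬝ᵥ (((J - R) * Q) *ᵥ x) = a - r := by
      rw [← mulVec_mulVec, ← hy, sub_mulVec, dotProduct_sub, ha, hr]
    rw [h2] at h1
    rw [← h1, h3]
  -- a has zero real part
  have hare : a.re = 0 := by
    have : star a = -a := by
      calc star a = star (star y ⬝ᵥ J *ᵥ y) := rfl
        _ = star (J *ᵥ y) ⬝ᵥ y := by rw [star_dotProduct, star_star]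
        _ = star y ᵥ* Jᴴ ⬝ᵥ y := by rw [star_mulVec]
        _ = star y ⬝ᵥ Jᴴ *ᵥ y := by rw [← dotProduct_mulVec]
        _ = -a := by rw [hJ, neg_mulVec, dotProduct_neg, ha]
    have := congrArg Complex.re this
    simp only [Complex.star_def, Complex.conj_re, Complex.neg_re] at this
    linarith
  -- c is a positive real
  have hcpos : 0 < c := hQ.dotProduct_mulVec_pos hx
  have hc_re : 0 < c.re := by
    rw [Complex.lt_def] at hcpos; exact hcpos.1
  have hc_im : c.im = 0 := by
    rw [Complex.lt_def] at hcpos; simpa using hcpos.2.symm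
  -- r has nonneg real part
  have hrre : 0 ≤ r.re := by
    have := hR.dotProduct_mulVec_nonneg y
    rw [Complex.le_def] at this
    simpa using this.1
  -- take real parts of key
  have := congrArg Complex.re key
  rw [Complex.mul_re, hc_im, Complex.sub_re, hare] at this
  have hmul : lam.re * c.re ≤ 0 := by
    rw [mul_zero, sub_zero] at this; linarith
  nlinarith
end
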